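/- arXiv:2601.20440 — 4 statements merged into one kernel-verified Lean document; each statement's English description precedes it below -/
import Mathlib

section
/- Fix an integer 𝓀 ≥ 2, r > 0, λ > 0, reals α_1, …, α_𝓀, and positive reals p_1, …, p_𝓀 with Σ_i p_i = 1. For each i let (a_{ε,i})_{ε>0} be continuous functions on [0,r] with sup_{ε>0} ∫_0^r |a_{ε,i}| < ∞ and lim_{ε→0} ∫_y^z a_{ε,i} = α_i·[y = 0] for 0 ≤ y < z ≤ r. Let k_{ε,i} and ℓ_{ε,i} be the unique solutions on [0,r] of (1/2)u'' + a_{ε,i} u' = λu with k_{ε,i}(0)=0, k_{ε,i}'(0)=1 and ℓ_{ε,i}(r)=1, ℓ_{ε,i}'(r)=0; set w_{ε,i} := k_{ε,i}'ℓ_{ε,i} − ℓ_{ε,i}'k_{ε,i}, (R⁰_{λ,ε}g)_i(x) := 2k_{ε,i}(x)∫_x^r ℓ_{ε,i}g_i/w_{ε,i} + 2ℓ_{ε,i}(x)∫_0^x k_{ε,i}g_i/w_{ε,i}, C_{ε,i}(g) := 2∫_0^r ℓ_{ε,i}g_i/w_{ε,i}, 𝓛_{λ,ε} := 1 − λR⁰_{λ,ε}1,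 and R_{λ,ε}g := R⁰_{λ,ε}g + (Σ_i p_i C_{ε,i}(g))/(λ Σ_i p_i C_{ε,i}(1)) · 𝓛_{λ,ε}. Then for every g = (g_i)_i with each g_i ∈ C[0,r] and g_i(0) independent of i, as ε → 0+ each coordinate of R_{λ,ε}g converges uniformly on [0,r] to the corresponding coordinate of R_λ g := R⁰_λ g + (Σ_i p̃_i C_i(g))/(λ Σ_i p̃_i C_i(1)) · 𝓛_λ, where p̃_i := p_i e^{2α_i}/Σ_j p_j e^{2α_j}, (R⁰_λ g)_i(x) := 2k(x)∫_x^r ℓ g_i/w + 2ℓ(x)∫_0^x k g_i/w with k(x) = sinh(√(2λ)x)/√(2λ), ℓ(x) = cosh(√(2λ)(r−x)), w ≡ cosh(√(2λ)r), C_i(g) := (2/cosh(√(2λ)r))∫_0^r cosh(√(2λ)(r−y))g_i(y) dy, and 𝓛_λ := 1 − λR⁰_λ1. -/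
open MeasureTheory Set Filter Topology Real

/-- `SolPK r lam a k` : `k` is a twice continuously differentiable solution on `[0,r]` of
`(1/2)k'' + a k' = λk` with `k(0) = 0`, `k'(0) = 1`. -/
def SolPK (r lam : ℝ) (a k : ℝ → ℝ) : Prop :=
  ContDiffOn ℝ 2 k (Icc 0 r) ∧
  (∀ x ∈ Icc 0 r,
    (1/2) * derivWithin (derivWithin k (Icc 0 r)) (Icc 0 r) x
      + a x * derivWithin k (Icc 0 r) x = lam * k x) ∧
  k 0 = 0 ∧ derivWithin k (Icc 0 r) 0 = 1

/-- `SolPL r lam a ℓ` : `ℓ` is a twice continuously differentiable solution on `[0,r]` of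
`(1/2)ℓ'' + a ℓ' = λℓ` with `ℓ(r) = 1`, `ℓ'(r) = 0`. -/
def SolPL (r lam : ℝ) (a l : ℝ → ℝ) : Prop :=
  ContDiffOn ℝ 2 l (Icc 0 r) ∧
  (∀ x ∈ Icc 0 r,
    (1/2) * derivWithin (derivWithin l (Icc 0 r)) (Icc 0 r) x
      + a x * derivWithin l (Icc 0 r) x = lam * l x) ∧
  l r = 1 ∧ derivWithin l (Icc 0 r) r = 0

/-- Wronskian `w = k'ℓ − ℓ'k` on `[0,r]`. -/
noncomputable def wfn (r : ℝ) (k l : ℝ → ℝ) (y : ℝ) : ℝ :=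
  derivWithin k (Icc 0 r) y * l y - derivWithin l (Icc 0 r) y * k y

/-- `(R⁰g)(x) = 2k(x)∫_x^r ℓg/w + 2ℓ(x)∫_0^x kg/w`. -/
noncomputable def R0 (r : ℝ) (k l g : ℝ → ℝ) (x : ℝ) : ℝ :=
  2 * k x * (∫ y in x..r, l y * g y / wfn r k l y)
    + 2 * l x * ∫ y in (0:ℝ)..x, k y * g y / wfn r k l y

/-- `C(g) = 2∫_0^r ℓg/w`. -/
noncomputable def Cfn (r : ℝ) (k l g : ℝ → ℝ) : ℝ :=
  2 * ∫ y in (0:ℝ)..r, l y * g y / wfn r k l y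

/-- The exit law `𝓛 = 1 − λR⁰1`. -/
noncomputable def Lfn (r lam : ℝ) (k l : ℝ → ℝ) (x : ℝ) : ℝ :=
  1 - lam * R0 r k l (fun _ => 1) x

/-- The resolvent of the approximating process on the star graph:
`Rg = R⁰g + (Σᵢ pᵢCᵢ(g))/(λΣᵢ pᵢCᵢ(1))·𝓛`. -/
noncomputable def Rfull (κ : ℕ) (r lam : ℝ) (p : Fin κ → ℝ)
    (k l : Fin κ → ℝ → ℝ) (g : Fin κ → ℝ → ℝ) (i : Fin κ) (x : ℝ) : ℝ :=
  R0 r (k i) (l i) (g i) x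
    + ((∑ j, p j * Cfn r (k j) (l j) (g j)) /
        (lam * ∑ j, p j * Cfn r (k j) (l j) (fun _ => 1)))
      * Lfn r lam (k i) (l i) x

/-- The limit minimal resolvent, built from `k(x) = sinh(√(2λ)x)/√(2λ)`,
`ℓ(x) = cosh(√(2λ)(r−x))` and the constant Wronskian `w = cosh(√(2λ)r)`. -/
noncomputable def R0lim (r lam : ℝ) (g : ℝ → ℝ) (x : ℝ) : ℝ :=
  2 * (Real.sinh (Real.sqrt (2 * lam) * x) / Real.sqrt (2 * lam)) *
      (∫ y in x..r,
        Real.cosh (Real.sqrt (2 * lam) * (r - y)) * g y / Real.cosh (Real.sqrt (2 * lam) * r))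
    + 2 * Real.cosh (Real.sqrt (2 * lam) * (r - x)) *
      ∫ y in (0:ℝ)..x,
        (Real.sinh (Real.sqrt (2 * lam) * y) / Real.sqrt (2 * lam)) * g y /
          Real.cosh (Real.sqrt (2 * lam) * r)

/-- `C_i(g) = (2/cosh(√(2λ)r))∫_0^r cosh(√(2λ)(r−y))g(y)dy`. -/
noncomputable def Clim (r lam : ℝ) (g : ℝ → ℝ) : ℝ :=
  2 / Real.cosh (Real.sqrt (2 * lam) * r) *
    ∫ y in (0:ℝ)..r, Real.cosh (Real.sqrt (2 * lam) * (r - y)) * g y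

/-- `𝓛_λ = 1 − λR⁰_λ1`. -/
noncomputable def Llim (r lam : ℝ) (x : ℝ) : ℝ := 1 - lam * R0lim r lam (fun _ => 1) x

/-- The resolvent of the limit Walsh process with weights `p̃`. -/
noncomputable def Rlimf (κ : ℕ) (r lam : ℝ) (pt : Fin κ → ℝ)
    (g : Fin κ → ℝ → ℝ) (i : Fin κ) (x : ℝ) : ℝ :=
  R0lim r lam (g i) x
    + ((∑ j, pt j * Clim r lam (g j)) / (lam * ∑ j, pt j * Clim r lam (fun _ => 1)))
      * Llim r lam x


namespace Stmt11Aux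

noncomputable def Aint (b : ℝ → ℝ) (y : ℝ) : ℝ := ∫ t in (0:ℝ)..y, b t

lemma primitive_hasDerivWithinAt {r : ℝ} {b : ℝ → ℝ}
    (hb : ContinuousOn b (Icc 0 r)) {x : ℝ} (hx : x ∈ Icc 0 r) :
    HasDerivWithinAt (fun y => ∫ t in (0:ℝ)..y, b t) (b x) (Icc 0 r) x := by
  haveI : Fact (x ∈ Icc (0:ℝ) r) := ⟨hx⟩
  have hint : IntervalIntegrable b volume 0 x := by
    apply ContinuousOn.intervalIntegrable
    rw [uIcc_of_le hx.1]
    exact hb.mono (Icc_subset_Icc le_rfl hx.2)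
  exact intervalIntegral.integral_hasDerivWithinAt_right hint
    (hb.stronglyMeasurableAtFilter_nhdsWithin measurableSet_Icc x)
    (hb x hx)

lemma primitive_continuousOn {r : ℝ} (hr : 0 ≤ r) {b : ℝ → ℝ}
    (hb : ContinuousOn b (Icc 0 r)) :
    ContinuousOn (fun y => ∫ t in (0:ℝ)..y, b t) (Icc 0 r) := by
  have := intervalIntegral.continuousOn_primitive_interval
    (f := b) (a := (0:ℝ)) (b := r) (μ := volume) ?_
  · rwa [uIcc_of_le hr] at this
  · rw [uIcc_of_le hr]
    exact hb.integrableOn_Icc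

lemma Aint_continuousOn {r : ℝ} (hr : 0 ≤ r) {b : ℝ → ℝ}
    (hb : ContinuousOn b (Icc 0 r)) : ContinuousOn (Aint b) (Icc 0 r) :=
  primitive_continuousOn hr hb

lemma Aint_hasDerivWithinAt {r : ℝ} {b : ℝ → ℝ}
    (hb : ContinuousOn b (Icc 0 r)) {x : ℝ} (hx : x ∈ Icc 0 r) :
    HasDerivWithinAt (Aint b) (b x) (Icc 0 r) x :=
  primitive_hasDerivWithinAt hb hx

section Sol

variable {r lam : ℝ} {b k l : ℝ → ℝ}

lemma deriv1_continuousOn (hr : 0 < r) (hk : ContDiffOn ℝ 2 k (Icc 0 r)) :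
    ContinuousOn (derivWithin k (Icc 0 r)) (Icc 0 r) :=
  (hk.derivWithin (m := 1) (uniqueDiffOn_Icc hr) (by norm_num)).continuousOn

lemma deriv1_hasDerivWithinAt (hr : 0 < r) (hk : ContDiffOn ℝ 2 k (Icc 0 r))
    {x : ℝ} (hx : x ∈ Icc 0 r) :
    HasDerivWithinAt (derivWithin k (Icc 0 r))
      (derivWithin (derivWithin k (Icc 0 r)) (Icc 0 r) x) (Icc 0 r) x :=
  (((hk.derivWithin (m := 1) (uniqueDiffOn_Icc hr) (by norm_num)).differentiableOn
    one_ne_zero) x hx).hasDerivWithinAt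

lemma k_hasDerivWithinAt (hr : 0 < r) (hk : ContDiffOn ℝ 2 k (Icc 0 r))
    {x : ℝ} (hx : x ∈ Icc 0 r) :
    HasDerivWithinAt k (derivWithin k (Icc 0 r) x) (Icc 0 r) x :=
  ((hk.differentiableOn (by norm_num)) x hx).hasDerivWithinAt

/-- The transformed slope `v = e^{2A}k'` has within-derivative `2λe^{2A}k`. -/
lemma v_hasDerivWithinAt (hr : 0 < r) (hb : ContinuousOn b (Icc 0 r))
    (hk : ContDiffOn ℝ 2 k (Icc 0 r))
    (hode : ∀ x ∈ Icc 0 r,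
      (1/2) * derivWithin (derivWithin k (Icc 0 r)) (Icc 0 r) x
        + b x * derivWithin k (Icc 0 r) x = lam * k x)
    {x : ℝ} (hx : x ∈ Icc 0 r) :
    HasDerivWithinAt (fun y => exp (2 * Aint b y) * derivWithin k (Icc 0 r) y)
      (2 * lam * exp (2 * Aint b x) * k x) (Icc 0 r) x := by
  have hA := Aint_hasDerivWithinAt hb hx
  have hexp : HasDerivWithinAt (fun y => exp (2 * Aint b y))
      (exp (2 * Aint b x) * (2 * b x)) (Icc 0 r) x := (hA.const_mul 2).exp
  have hk' := deriv1_hasDerivWithinAt hr hk hx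
  have := hexp.mul hk'
  refine this.congr_deriv ?_
  linear_combination (2 * exp (2 * Aint b x)) * (hode x hx)

end Sol



noncomputable def vK (r : ℝ) (b k : ℝ → ℝ) (y : ℝ) : ℝ :=
  exp (2 * Aint b y) * derivWithin k (Icc 0 r) y

section Sol2

variable {r lam : ℝ} {b k l : ℝ → ℝ}

lemma expA_continuousOn (hr : 0 < r) (hb : ContinuousOn b (Icc 0 r)) (c : ℝ) :
    ContinuousOn (fun y => exp (c * Aint b y)) (Icc 0 r) :=
  Real.continuous_exp.comp_continuousOn (continuousOn_const.mul (Aint_continuousOn hr.le hb))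

lemma vK_continuousOn (hr : 0 < r) (hb : ContinuousOn b (Icc 0 r))
    (hk : ContDiffOn ℝ 2 k (Icc 0 r)) : ContinuousOn (vK r b k) (Icc 0 r) :=
  (expA_continuousOn hr hb 2).mul (deriv1_continuousOn hr hk)

lemma mem_Ioi_nhds {y : ℝ} (hy : y ∈ Ico 0 r) : Icc (0:ℝ) r ∈ 𝓝[>] y :=
  Icc_mem_nhdsGT_of_mem ⟨hy.1, hy.2⟩

/-- `k x = ∫₀ˣ e^{-2A} v`. -/
lemma k_eq_integral (hr : 0 < r) (hb : ContinuousOn b (Icc 0 r))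
    (hk : SolPK r lam b k) {x : ℝ} (hx : x ∈ Icc 0 r) :
    k x = ∫ y in (0:ℝ)..x, exp (-(2 * Aint b y)) * vK r b k y := by
  have hcong : ∀ y ∈ uIcc (0:ℝ) x, exp (-(2 * Aint b y)) * vK r b k y
      = derivWithin k (Icc 0 r) y := by
    intro y _
    rw [vK, Real.exp_neg]
    exact inv_mul_cancel_left₀ (exp_ne_zero _) _
  rw [intervalIntegral.integral_congr hcong]
  have := intervalIntegral.integral_eq_sub_of_hasDeriv_right_of_le hx.1
    (hk.1.continuousOn.mono (Icc_subset_Icc le_rfl hx.2))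
    (fun y hy => (k_hasDerivWithinAt hr hk.1 ⟨hy.1.le, hy.2.le.trans hx.2⟩).mono_of_mem_nhdsWithin
      (mem_Ioi_nhds ⟨hy.1.le, lt_of_lt_of_le hy.2 hx.2⟩))
    (((deriv1_continuousOn hr hk.1).mono (Icc_subset_Icc le_rfl hx.2)).intervalIntegrable_of_Icc hx.1)
  rw [this, hk.2.2.1, sub_zero]

/-- `v x = 1 + 2λ∫₀ˣ e^{2A}k`. -/
lemma vK_eq_integral (hr : 0 < r) (hb : ContinuousOn b (Icc 0 r))
    (hk : SolPK r lam b k) {x : ℝ} (hx : x ∈ Icc 0 r) :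
    vK r b k x = 1 + 2 * lam * ∫ y in (0:ℝ)..x, exp (2 * Aint b y) * k y := by
  have hderiv : ∀ y ∈ Ioo 0 x, HasDerivWithinAt (vK r b k)
      (2 * lam * exp (2 * Aint b y) * k y) (Ioi y) y := by
    intro y hy
    exact (v_hasDerivWithinAt hr hb hk.1 hk.2.1 ⟨hy.1.le, hy.2.le.trans hx.2⟩).mono_of_mem_nhdsWithin
      (mem_Ioi_nhds ⟨hy.1.le, lt_of_lt_of_le hy.2 hx.2⟩)
  have hcont : ContinuousOn (fun y => 2 * lam * exp (2 * Aint b y) * k y) (Icc 0 r) :=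
    ((continuousOn_const.mul (expA_continuousOn hr hb 2)).mul hk.1.continuousOn)
  have := intervalIntegral.integral_eq_sub_of_hasDeriv_right_of_le hx.1
    ((vK_continuousOn hr hb hk.1).mono (Icc_subset_Icc le_rfl hx.2))
    hderiv
    ((hcont.mono (Icc_subset_Icc le_rfl hx.2)).intervalIntegrable_of_Icc hx.1)
  have hv0 : vK r b k 0 = 1 := by
    rw [vK, Aint, intervalIntegral.integral_same, mul_zero, exp_zero, one_mul, hk.2.2.2]
  have heq : (∫ y in (0:ℝ)..x, 2 * lam * exp (2 * Aint b y) * k y)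
      = 2 * lam * ∫ y in (0:ℝ)..x, exp (2 * Aint b y) * k y := by
    rw [← intervalIntegral.integral_const_mul]
    congr 1; ext y; ring
  rw [heq] at this
  linarith [this, hv0]

/-- backward: `l x = 1 - ∫ₓʳ e^{-2A} v_l`. -/
lemma l_eq_integral (hr : 0 < r) (hb : ContinuousOn b (Icc 0 r))
    (hl : SolPL r lam b l) {x : ℝ} (hx : x ∈ Icc 0 r) :
    l x = 1 - ∫ y in x..r, exp (-(2 * Aint b y)) * vK r b l y := by
  have hcong : ∀ y ∈ uIcc x r, exp (-(2 * Aint b y)) * vK r b l y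
      = derivWithin l (Icc 0 r) y := by
    intro y _
    rw [vK, Real.exp_neg]
    exact inv_mul_cancel_left₀ (exp_ne_zero _) _
  rw [intervalIntegral.integral_congr hcong]
  have := intervalIntegral.integral_eq_sub_of_hasDeriv_right_of_le hx.2
    (hl.1.continuousOn.mono (Icc_subset_Icc hx.1 le_rfl))
    (fun y hy => (k_hasDerivWithinAt hr hl.1 ⟨hx.1.trans hy.1.le, hy.2.le⟩).mono_of_mem_nhdsWithin
      (mem_Ioi_nhds ⟨hx.1.trans hy.1.le, hy.2⟩))
    (((deriv1_continuousOn hr hl.1).mono (Icc_subset_Icc hx.1 le_rfl)).intervalIntegrable_of_Icc hx.2)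
  rw [this, hl.2.2.1]
  ring

/-- backward: `v_l x = -2λ∫ₓʳ e^{2A}l`. -/
lemma vL_eq_integral (hr : 0 < r) (hb : ContinuousOn b (Icc 0 r))
    (hl : SolPL r lam b l) {x : ℝ} (hx : x ∈ Icc 0 r) :
    vK r b l x = -(2 * lam * ∫ y in x..r, exp (2 * Aint b y) * l y) := by
  have hderiv : ∀ y ∈ Ioo x r, HasDerivWithinAt (vK r b l)
      (2 * lam * exp (2 * Aint b y) * l y) (Ioi y) y := by
    intro y hy
    exact (v_hasDerivWithinAt hr hb hl.1 hl.2.1 ⟨hx.1.trans hy.1.le, hy.2.le⟩).mono_of_mem_nhdsWithin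
      (mem_Ioi_nhds ⟨hx.1.trans hy.1.le, hy.2⟩)
  have hcont : ContinuousOn (fun y => 2 * lam * exp (2 * Aint b y) * l y) (Icc 0 r) :=
    ((continuousOn_const.mul (expA_continuousOn hr hb 2)).mul hl.1.continuousOn)
  have := intervalIntegral.integral_eq_sub_of_hasDeriv_right_of_le hx.2
    ((vK_continuousOn hr hb hl.1).mono (Icc_subset_Icc hx.1 le_rfl))
    hderiv
    ((hcont.mono (Icc_subset_Icc hx.1 le_rfl)).intervalIntegrable_of_Icc hx.2)
  have hvr : vK r b l r = 0 := by
    rw [vK, hl.2.2.2, mul_zero]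
  have heq : (∫ y in x..r, 2 * lam * exp (2 * Aint b y) * l y)
      = 2 * lam * ∫ y in x..r, exp (2 * Aint b y) * l y := by
    rw [← intervalIntegral.integral_const_mul]
    congr 1; ext y; ring
  rw [heq, hvr] at this
  linarith [this]

/-- Wronskian identity `w(y) = l(0)e^{-2A(y)}`. -/
lemma wfn_eq (hr : 0 < r) (hb : ContinuousOn b (Icc 0 r))
    (hk : SolPK r lam b k) (hl : SolPL r lam b l) {y : ℝ} (hy : y ∈ Icc 0 r) :
    wfn r k l y = l 0 * exp (-(2 * Aint b y)) := by
  have hwc : ContinuousOn (fun y => wfn r k l y) (Icc 0 r) := by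
    apply ContinuousOn.sub
    · exact (deriv1_continuousOn hr hk.1).mul hl.1.continuousOn
    · exact (deriv1_continuousOn hr hl.1).mul hk.1.continuousOn
  have hcont : ContinuousOn (fun y => wfn r k l y * exp (2 * Aint b y)) (Icc 0 r) :=
    hwc.mul (expA_continuousOn hr hb 2)
  have hder : ∀ z ∈ Ico (0:ℝ) r,
      HasDerivWithinAt (fun y => wfn r k l y * exp (2 * Aint b y)) 0 (Ici z) z := by
    intro z hz
    have hzi : z ∈ Icc (0:ℝ) r := ⟨hz.1, hz.2.le⟩
    have h1 : HasDerivWithinAt (fun y => wfn r k l y)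
        ((derivWithin (derivWithin k (Icc 0 r)) (Icc 0 r) z * l z
          + derivWithin k (Icc 0 r) z * derivWithin l (Icc 0 r) z)
         - (derivWithin (derivWithin l (Icc 0 r)) (Icc 0 r) z * k z
          + derivWithin l (Icc 0 r) z * derivWithin k (Icc 0 r) z)) (Icc 0 r) z := by
      exact ((deriv1_hasDerivWithinAt hr hk.1 hzi).mul (k_hasDerivWithinAt hr hl.1 hzi)).sub
        ((deriv1_hasDerivWithinAt hr hl.1 hzi).mul (k_hasDerivWithinAt hr hk.1 hzi))
    have hexp : HasDerivWithinAt (fun y => exp (2 * Aint b y))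
        (exp (2 * Aint b z) * (2 * b z)) (Icc 0 r) z :=
      ((Aint_hasDerivWithinAt hb hzi).const_mul 2).exp
    have h2 := h1.mul hexp
    have h3 : HasDerivWithinAt (fun y => wfn r k l y * exp (2 * Aint b y)) 0 (Icc 0 r) z := by
      refine h2.congr_deriv ?_
      rw [wfn]
      linear_combination (2 * exp (2 * Aint b z) * l z) * (hk.2.1 z hzi)
        - (2 * exp (2 * Aint b z) * k z) * (hl.2.1 z hzi)
    exact h3.mono_of_mem_nhdsWithin (Icc_mem_nhdsGE_of_mem ⟨hz.1, hz.2⟩)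
  have hconst := constant_of_has_deriv_right_zero hcont hder y hy
  have h0 : wfn r k l 0 * exp (2 * Aint b 0) = l 0 := by
    rw [wfn, Aint, intervalIntegral.integral_same, mul_zero, exp_zero, mul_one,
      hk.2.2.2, hk.2.2.1, mul_zero, sub_zero, one_mul]
  rw [h0] at hconst
  rw [Real.exp_neg, eq_mul_inv_iff_mul_eq₀ (exp_ne_zero _)]
  exact hconst

end Sol2

/-- Grönwall inequality, integral form. -/
lemma gronwall_integral {T C δ : ℝ} (hT : 0 ≤ T) (hC : 0 < C) {f : ℝ → ℝ}
    (hf : ContinuousOn f (Icc 0 T)) (hpos : ∀ x ∈ Icc 0 T, 0 ≤ f x)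
    (hineq : ∀ x ∈ Icc 0 T, f x ≤ δ + C * ∫ y in (0:ℝ)..x, f y) :
    ∀ x ∈ Icc 0 T, f x ≤ δ * exp (C * T) := by
  have hδ : 0 ≤ δ := by
    have h0 := hineq 0 ⟨le_rfl, hT⟩
    simp only [intervalIntegral.integral_same, mul_zero, add_zero] at h0
    exact le_trans (hpos 0 ⟨le_rfl, hT⟩) h0
  set E : ℝ → ℝ := fun x => ∫ y in (0:ℝ)..x, f y with hE
  have hEc : ContinuousOn E (Icc 0 T) := primitive_continuousOn hT hf
  have hEd : ∀ x ∈ Ico (0:ℝ) T, HasDerivWithinAt E (f x) (Ici x) x := by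
    intro x hx
    exact (primitive_hasDerivWithinAt hf ⟨hx.1, hx.2.le⟩).mono_of_mem_nhdsWithin
      (Icc_mem_nhdsGE_of_mem ⟨hx.1, hx.2⟩)
  have key := norm_le_gronwallBound_of_norm_deriv_right_le (δ := 0) (K := C) (ε := δ)
    hEc hEd (by simp [hE]) ?_
  · intro x hx
    have h1 := hineq x hx
    have h2 : E x ≤ ‖E x‖ := le_abs_self _
    have h3 := key x hx
    rw [gronwallBound_of_K_ne_0 hC.ne'] at h3
    simp only [zero_mul, zero_add, sub_zero] at h3
    have : f x ≤ δ + C * ‖E x‖ := by nlinarith [hineq x hx]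
    have h4 : C * ‖E x‖ ≤ C * (δ / C * (exp (C * x) - 1)) := by
      exact mul_le_mul_of_nonneg_left h3 hC.le
    have h5 : C * (δ / C * (exp (C * x) - 1)) = δ * exp (C * x) - δ := by
      field_simp
    have h6 : exp (C * x) ≤ exp (C * T) :=
      exp_le_exp.2 (mul_le_mul_of_nonneg_left hx.2 hC.le)
    nlinarith [this]
  · intro x hx
    have h1 := hineq x ⟨hx.1, hx.2.le⟩
    have h2 : E x ≤ ‖E x‖ := le_abs_self _
    have : ‖f x‖ = f x := abs_of_nonneg (hpos x ⟨hx.1, hx.2.le⟩)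
    rw [this]
    nlinarith [hineq x ⟨hx.1, hx.2.le⟩]

/-- Uniform closeness predicate on `[0,r]` along `ε → 0⁺`. -/
def UC (r : ℝ) (f : ℝ → ℝ → ℝ) (g : ℝ → ℝ) : Prop :=
  ∀ δ > (0:ℝ), ∀ᶠ ε in 𝓝[>] (0:ℝ), ∀ x ∈ Icc 0 r, |f ε x - g x| ≤ δ

namespace UC

variable {r : ℝ} {f f₁ f₂ : ℝ → ℝ → ℝ} {g g₁ g₂ : ℝ → ℝ}

lemma add (h₁ : UC r f₁ g₁) (h₂ : UC r f₂ g₂) :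
    UC r (fun ε x => f₁ ε x + f₂ ε x) (fun x => g₁ x + g₂ x) := by
  intro δ hδ
  filter_upwards [h₁ (δ/2) (by linarith), h₂ (δ/2) (by linarith)] with ε e1 e2 x hx
  calc |f₁ ε x + f₂ ε x - (g₁ x + g₂ x)| ≤ |f₁ ε x - g₁ x| + |f₂ ε x - g₂ x| := by
        rw [show f₁ ε x + f₂ ε x - (g₁ x + g₂ x) = (f₁ ε x - g₁ x) + (f₂ ε x - g₂ x) by ring]
        exact abs_add_le _ _
    _ ≤ δ/2 + δ/2 := add_le_add (e1 x hx) (e2 x hx)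
    _ = δ := by ring

lemma mul {B₁ B₂ : ℝ} (h₁ : UC r f₁ g₁) (h₂ : UC r f₂ g₂)
    (hB₁ : 0 ≤ B₁) (hB₂ : 0 ≤ B₂)
    (hg₁ : ∀ x ∈ Icc 0 r, |g₁ x| ≤ B₁) (hg₂ : ∀ x ∈ Icc 0 r, |g₂ x| ≤ B₂) :
    UC r (fun ε x => f₁ ε x * f₂ ε x) (fun x => g₁ x * g₂ x) := by
  intro δ hδ
  set δ' := min 1 (δ / (B₁ + B₂ + 1)) with hδ'def
  have hδ'pos : 0 < δ' := lt_min one_pos (div_pos hδ (by linarith))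
  filter_upwards [h₁ δ' hδ'pos, h₂ δ' hδ'pos] with ε e1 e2 x hx
  have a1 := e1 x hx; have a2 := e2 x hx
  have hf1 : |f₁ ε x| ≤ B₁ + δ' := by
    have := abs_sub_abs_le_abs_sub (f₁ ε x) (g₁ x)
    have := hg₁ x hx; nlinarith [a1, abs_nonneg (f₁ ε x)]
  have key : |f₁ ε x * f₂ ε x - g₁ x * g₂ x| ≤ |f₁ ε x| * |f₂ ε x - g₂ x| + |f₁ ε x - g₁ x| * |g₂ x| := by
    rw [show f₁ ε x * f₂ ε x - g₁ x * g₂ x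
      = f₁ ε x * (f₂ ε x - g₂ x) + (f₁ ε x - g₁ x) * g₂ x by ring]
    exact (abs_add_le _ _).trans (by rw [abs_mul, abs_mul])
  have hδ'1 : δ' ≤ 1 := min_le_left _ _
  have hδ'2 : δ' ≤ δ / (B₁ + B₂ + 1) := min_le_right _ _
  have : |f₁ ε x * f₂ ε x - g₁ x * g₂ x| ≤ (B₁ + B₂ + 1) * δ' := by
    nlinarith [abs_nonneg (f₁ ε x), abs_nonneg (f₂ ε x - g₂ x), abs_nonneg (f₁ ε x - g₁ x),
      hg₂ x hx, a1, a2, hδ'pos.le]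
  refine this.trans ?_
  have h3 : (B₁ + B₂ + 1) * (δ / (B₁ + B₂ + 1)) = δ := by
    field_simp
  nlinarith [hδ'2, hδ'pos.le]

lemma congr (h : UC r f g) (heq : ∀ ε ∈ Ioi (0:ℝ), ∀ x ∈ Icc 0 r, f ε x = f₁ ε x)
    (heq' : ∀ x ∈ Icc 0 r, g x = g₁ x) : UC r f₁ g₁ := by
  intro δ hδ
  filter_upwards [h δ hδ, self_mem_nhdsWithin] with ε e1 e2 x hx
  rw [← heq ε e2 x hx, ← heq' x hx]
  exact e1 x hx

lemma const (c : ℝ → ℝ) : UC r (fun _ x => c x) c := by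
  intro δ hδ
  filter_upwards with ε x _
  simp [hδ.le]

lemma of_tendsto {c : ℝ → ℝ} {c' : ℝ} (h : Tendsto c (𝓝[>] (0:ℝ)) (𝓝 c')) :
    UC r (fun ε _ => c ε) (fun _ => c') := by
  intro δ hδ
  filter_upwards [Metric.tendsto_nhds.1 h δ hδ] with ε e1 x _
  rw [Real.dist_eq] at e1
  exact e1.le

lemma tendsto_at (h : UC r f g) {x : ℝ} (hx : x ∈ Icc 0 r) :
    Tendsto (fun ε => f ε x) (𝓝[>] (0:ℝ)) (𝓝 (g x)) := by
  rw [Metric.tendsto_nhds]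
  intro δ hδ
  filter_upwards [h (δ/2) (by linarith)] with ε e1
  rw [Real.dist_eq]
  exact lt_of_le_of_lt (e1 x hx) (by linarith)

lemma tendstoUniformlyOn (h : UC r f g) :
    TendstoUniformlyOn (fun ε x => f ε x) g (𝓝[>] (0:ℝ)) (Icc 0 r) := by
  rw [Metric.tendstoUniformlyOn_iff]
  intro δ hδ
  filter_upwards [h (δ/2) (by linarith)] with ε e1 x hx
  rw [Real.dist_eq, abs_sub_comm]
  exact lt_of_le_of_lt (e1 x hx) (by linarith)

lemma const_mul {c : ℝ} (h : UC r f g) :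
    UC r (fun ε x => c * f ε x) (fun x => c * g x) := by
  intro δ hδ
  have hδ' : 0 < δ / (|c| + 1) := by positivity
  filter_upwards [h _ hδ'] with ε h1 x hx
  have h2 := h1 x hx
  have h3 : |c * f ε x - c * g x| = |c| * |f ε x - g x| := by
    rw [← abs_mul]; congr 1; ring
  rw [h3]
  have h4 : |c| * |f ε x - g x| ≤ |c| * (δ / (|c| + 1)) :=
    mul_le_mul_of_nonneg_left h2 (abs_nonneg _)
  refine h4.trans ?_
  rw [div_eq_mul_inv]
  have h5 : (0:ℝ) < |c| + 1 := by positivity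
  rw [mul_comm δ, ← mul_assoc]
  have h6 : |c| * (|c| + 1)⁻¹ ≤ 1 := by
    rw [mul_inv_le_iff₀ h5]; linarith [abs_nonneg c]
  nlinarith [hδ.le]

end UC

lemma bound_of_continuousOn {r : ℝ} {f : ℝ → ℝ} (hf : ContinuousOn f (Icc 0 r)) :
    ∃ B, 0 ≤ B ∧ ∀ x ∈ Icc 0 r, |f x| ≤ B := by
  obtain ⟨C, hC⟩ := isCompact_Icc.exists_bound_of_continuousOn hf
  exact ⟨max C 0, le_max_right _ _, fun x hx => (Real.norm_eq_abs (f x) ▸ hC x hx).trans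
    (le_max_left _ _)⟩

lemma abs_intR_le {r B : ℝ} (hB : 0 ≤ B) {f : ℝ → ℝ} (hf : ∀ y ∈ Icc 0 r, |f y| ≤ B)
    {x : ℝ} (hx : x ∈ Icc 0 r) :
    |∫ y in x..r, f y| ≤ B * r ∧ |∫ y in (0:ℝ)..x, f y| ≤ B * r := by
  constructor
  · have h1 : ∀ y ∈ Set.uIoc x r, ‖f y‖ ≤ B := by
      rw [uIoc_of_le hx.2]
      intro y hy
      exact hf y ⟨hx.1.trans hy.1.le, hy.2⟩
    have h2 := intervalIntegral.norm_integral_le_of_norm_le_const h1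
    rw [Real.norm_eq_abs] at h2
    refine h2.trans ?_
    have : |r - x| = r - x := abs_of_nonneg (by linarith [hx.2])
    rw [this]
    nlinarith [hx.1, hx.2]
  · have h1 : ∀ y ∈ Set.uIoc 0 x, ‖f y‖ ≤ B := by
      rw [uIoc_of_le hx.1]
      intro y hy
      exact hf y ⟨hy.1.le, hy.2.trans hx.2⟩
    have h2 := intervalIntegral.norm_integral_le_of_norm_le_const h1
    rw [Real.norm_eq_abs] at h2
    refine h2.trans ?_
    have : |x - 0| = x := by rw [sub_zero]; exact abs_of_nonneg hx.1
    rw [this]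
    nlinarith [hx.1, hx.2]

lemma div_form (a L0 t : ℝ) : a / (L0 * exp (-t)) = a * exp t * L0⁻¹ := by
  rw [Real.exp_neg, div_mul_eq_div_div_swap, div_inv_eq_mul, div_eq_mul_inv]

section L1
variable {r : ℝ} {h : ℝ → ℝ → ℝ} {hbar : ℝ → ℝ} {B : ℝ}

lemma ae_Ioo (hr : 0 < r) : ∀ᵐ y ∂(volume.restrict (Ioc 0 r)), y ∈ Ioo 0 r := by
  have h1 : ∀ᵐ (y:ℝ) ∂(volume.restrict (Ioc 0 r)), y ≠ r := by
    refine ae_restrict_of_ae ?_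
    rw [ae_iff]
    have : {y : ℝ | ¬ y ≠ r} = {r} := by ext y; simp
    rw [this]
    exact measure_singleton r
  filter_upwards [h1, ae_restrict_mem measurableSet_Ioc] with y hy1 hy2
  exact ⟨hy2.1, lt_of_le_of_ne hy2.2 hy1⟩

/-- L¹ convergence of a dominated family over `(0,r]`. -/
lemma tendsto_L1 (hr : 0 < r)
    (hcont : ∀ ε ∈ Ioi (0:ℝ), ContinuousOn (h ε) (Icc 0 r))
    (hbdd : ∀ᶠ ε in 𝓝[>] (0:ℝ), ∀ y ∈ Icc 0 r, |h ε y| ≤ B)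
    (hbarc : ContinuousOn hbar (Icc 0 r))
    (hptw : ∀ y ∈ Ioo 0 r, Tendsto (fun ε => h ε y) (𝓝[>] (0:ℝ)) (𝓝 (hbar y))) :
    Tendsto (fun ε => ∫ y in Ioc 0 r, |h ε y - hbar y|) (𝓝[>] (0:ℝ)) (𝓝 0) := by
  have main : Tendsto (fun ε => ∫ y in Ioc 0 r, |h ε y - hbar y|) (𝓝[>] (0:ℝ))
      (𝓝 (∫ (_ : ℝ) in Ioc (0:ℝ) r, (0:ℝ))) := by
    apply MeasureTheory.tendsto_integral_filter_of_dominated_convergence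
      (bound := fun y => B + |hbar y|)
    · filter_upwards [self_mem_nhdsWithin] with ε hε
      exact (((hcont ε hε).sub hbarc).abs.mono Ioc_subset_Icc_self).aestronglyMeasurable
        measurableSet_Ioc
    · filter_upwards [hbdd] with ε hε
      filter_upwards [ae_restrict_mem measurableSet_Ioc] with y hy
      rw [Real.norm_eq_abs, abs_abs]
      calc |h ε y - hbar y| ≤ |h ε y| + |hbar y| := abs_sub _ _
        _ ≤ B + |hbar y| := by linarith [hε y (Ioc_subset_Icc_self hy)]
    · exact ((continuousOn_const.add hbarc.abs).integrableOn_Icc).mono_set Ioc_subset_Icc_self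
    · filter_upwards [ae_Ioo hr] with y hy
      have h2 := (hptw y hy).sub (tendsto_const_nhds (x := hbar y))
      have habs : Tendsto (fun ε => |h ε y - hbar y|) (𝓝[>] (0:ℝ)) (𝓝 |hbar y - hbar y|) :=
        (continuous_abs.tendsto _).comp h2
      simpa using habs
  simpa using main

/-- From L¹ convergence: uniform convergence of `x ↦ ∫_x^r` and `x ↦ ∫_0^x`. -/
lemma UC_integral (hr : 0 < r)
    (hcont : ∀ ε ∈ Ioi (0:ℝ), ContinuousOn (h ε) (Icc 0 r))
    (hbdd : ∀ᶠ ε in 𝓝[>] (0:ℝ), ∀ y ∈ Icc 0 r, |h ε y| ≤ B)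
    (hbarc : ContinuousOn hbar (Icc 0 r))
    (hptw : ∀ y ∈ Ioo 0 r, Tendsto (fun ε => h ε y) (𝓝[>] (0:ℝ)) (𝓝 (hbar y))) :
    UC r (fun ε x => ∫ y in x..r, h ε y) (fun x => ∫ y in x..r, hbar y) ∧
    UC r (fun ε x => ∫ y in (0:ℝ)..x, h ε y) (fun x => ∫ y in (0:ℝ)..x, hbar y) := by
  have main : ∀ δ > (0:ℝ), ∀ᶠ ε in 𝓝[>] (0:ℝ),
      ∀ x ∈ Icc 0 r, (|(∫ y in x..r, h ε y) - (∫ y in x..r, hbar y)| ≤ δ ∧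
        |(∫ y in (0:ℝ)..x, h ε y) - (∫ y in (0:ℝ)..x, hbar y)| ≤ δ) := by
    intro δ hδ
    have hL1 := tendsto_L1 hr hcont hbdd hbarc hptw
    have hev : ∀ᶠ ε in 𝓝[>] (0:ℝ),
        (∫ y in Ioc 0 r, |h ε y - hbar y|) < δ := by
      have := Metric.tendsto_nhds.1 hL1 δ hδ
      filter_upwards [this] with ε hε
      rw [Real.dist_eq, sub_zero] at hε
      exact lt_of_le_of_lt (le_abs_self _) hε
    filter_upwards [hev, self_mem_nhdsWithin] with ε hε hεpos x hx
    have hcε := hcont ε hεpos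
    have hdiffc : ContinuousOn (fun y => h ε y - hbar y) (Icc 0 r) := hcε.sub hbarc
    have hint : IntegrableOn (fun y => |h ε y - hbar y|) (Ioc 0 r) :=
      (hdiffc.abs.integrableOn_Icc).mono_set Ioc_subset_Icc_self
    have key : ∀ p q : ℝ, p ∈ Icc 0 r → q ∈ Icc 0 r → p ≤ q →
        |(∫ y in p..q, h ε y) - (∫ y in p..q, hbar y)| ≤ δ := by
      intro p q hp hq hpq
      have hIpq : Icc p q ⊆ Icc 0 r := Icc_subset_Icc hp.1 hq.2
      have i1 : IntervalIntegrable (h ε) volume p q := by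
        apply ContinuousOn.intervalIntegrable; rw [uIcc_of_le hpq]; exact hcε.mono hIpq
      have i2 : IntervalIntegrable hbar volume p q := by
        apply ContinuousOn.intervalIntegrable; rw [uIcc_of_le hpq]; exact hbarc.mono hIpq
      rw [← intervalIntegral.integral_sub i1 i2]
      calc |∫ y in p..q, (h ε y - hbar y)| ≤ ∫ y in p..q, |h ε y - hbar y| :=
            intervalIntegral.abs_integral_le_integral_abs hpq
        _ = ∫ y in Ioc p q, |h ε y - hbar y| := intervalIntegral.integral_of_le hpq
        _ ≤ ∫ y in Ioc 0 r, |h ε y - hbar y| := by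
            apply setIntegral_mono_set hint
            · filter_upwards with y using abs_nonneg _
            · exact HasSubset.Subset.eventuallyLE (Ioc_subset_Ioc hp.1 hq.2)
        _ ≤ δ := hε.le
    exact ⟨key x r hx (right_mem_Icc.2 (le_of_lt hr)) hx.2,
      key 0 x (left_mem_Icc.2 hr.le) hx hx.1⟩
  constructor
  · intro δ hδ; filter_upwards [main δ hδ] with ε hε x hx; exact (hε x hx).1
  · intro δ hδ; filter_upwards [main δ hδ] with ε hε x hx; exact (hε x hx).2
end L1

section MainProp

variable {r lam M c u0 v0 : ℝ} {A u v : ℝ → ℝ → ℝ} {ub vb : ℝ → ℝ}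

/-- Main convergence proposition for the first-order systems. -/
lemma system_conv (hr : 0 < r) (hlam : 0 < lam) (hM : 0 ≤ M)
    (hAc : ∀ ε ∈ Ioi (0:ℝ), ContinuousOn (A ε) (Icc 0 r))
    (hAb : ∀ ε ∈ Ioi (0:ℝ), ∀ y ∈ Icc 0 r, |A ε y| ≤ M)
    (hc : |c| ≤ M)
    (hAt : ∀ y ∈ Ioo 0 r, Tendsto (fun ε => A ε y) (𝓝[>] (0:ℝ)) (𝓝 c))
    (huc : ∀ ε ∈ Ioi (0:ℝ), ContinuousOn (u ε) (Icc 0 r))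
    (hvc : ∀ ε ∈ Ioi (0:ℝ), ContinuousOn (v ε) (Icc 0 r))
    (hue : ∀ ε ∈ Ioi (0:ℝ), ∀ x ∈ Icc 0 r,
      u ε x = u0 + ∫ y in (0:ℝ)..x, exp (-(2 * A ε y)) * v ε y)
    (hve : ∀ ε ∈ Ioi (0:ℝ), ∀ x ∈ Icc 0 r,
      v ε x = v0 + 2 * lam * ∫ y in (0:ℝ)..x, exp (2 * A ε y) * u ε y)
    (hubc : ContinuousOn ub (Icc 0 r)) (hvbc : ContinuousOn vb (Icc 0 r))
    (hube : ∀ x ∈ Icc 0 r, ub x = u0 + ∫ y in (0:ℝ)..x, exp (-(2 * c)) * vb y)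
    (hvbe : ∀ x ∈ Icc 0 r, vb x = v0 + 2 * lam * ∫ y in (0:ℝ)..x, exp (2 * c) * ub y) :
    UC r u ub ∧ UC r v vb := by
  set C : ℝ := (1 + 2 * lam) * exp (2 * M) with hCdef
  have hCpos : 0 < C := by positivity
  -- the error integral
  set δf : ℝ → ℝ := fun ε => ∫ y in Ioc (0:ℝ) r,
    (|exp (-(2 * A ε y)) - exp (-(2 * c))| * |vb y|
      + 2 * lam * (|exp (2 * A ε y) - exp (2 * c)| * |ub y|)) with hδfdef
  have hexpb : ∀ ε ∈ Ioi (0:ℝ), ∀ y ∈ Icc 0 r,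
      exp (-(2 * A ε y)) ≤ exp (2 * M) ∧ exp (2 * A ε y) ≤ exp (2 * M) := by
    intro ε hε y hy
    have h1 := hAb ε hε y hy
    have h2 := abs_le.1 h1
    exact ⟨exp_le_exp.2 (by linarith), exp_le_exp.2 (by linarith)⟩
  have hecb : exp (-(2 * c)) ≤ exp (2 * M) ∧ exp (2 * c) ≤ exp (2 * M) := by
    have h2 := abs_le.1 hc
    exact ⟨exp_le_exp.2 (by linarith), exp_le_exp.2 (by linarith)⟩
  have hδft : Tendsto δf (𝓝[>] (0:ℝ)) (𝓝 0) := by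
    have main : Tendsto δf (𝓝[>] (0:ℝ)) (𝓝 (∫ (_ : ℝ) in Ioc (0:ℝ) r, (0:ℝ))) := by
      apply MeasureTheory.tendsto_integral_filter_of_dominated_convergence
        (bound := fun y => 2 * exp (2 * M) * |vb y| + 2 * lam * (2 * exp (2 * M) * |ub y|))
      · filter_upwards [self_mem_nhdsWithin] with ε hε
        have hcA := hAc ε hε
        have c1 : ContinuousOn (fun y => exp (-(2 * A ε y))) (Icc 0 r) :=
          Real.continuous_exp.comp_continuousOn ((continuousOn_const.mul hcA).neg)
        have c2 : ContinuousOn (fun y => exp (2 * A ε y)) (Icc 0 r) :=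
          Real.continuous_exp.comp_continuousOn (continuousOn_const.mul hcA)
        exact ((((c1.sub continuousOn_const).abs.mul hvbc.abs).add
          (continuousOn_const.mul ((c2.sub continuousOn_const).abs.mul hubc.abs))).mono
          Ioc_subset_Icc_self).aestronglyMeasurable measurableSet_Ioc
      · filter_upwards [self_mem_nhdsWithin] with ε hε
        filter_upwards [ae_restrict_mem measurableSet_Ioc] with y hy
        have hyI : y ∈ Icc 0 r := Ioc_subset_Icc_self hy
        obtain ⟨b1, b2⟩ := hexpb ε hε y hyI
        have e1 : |exp (-(2 * A ε y)) - exp (-(2 * c))| ≤ 2 * exp (2 * M) := by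
          refine (abs_sub _ _).trans ?_
          rw [abs_of_pos (exp_pos _), abs_of_pos (exp_pos _)]
          linarith [hecb.1]
        have e2 : |exp (2 * A ε y) - exp (2 * c)| ≤ 2 * exp (2 * M) := by
          refine (abs_sub _ _).trans ?_
          rw [abs_of_pos (exp_pos _), abs_of_pos (exp_pos _)]
          linarith [hecb.2]
        rw [Real.norm_eq_abs]
        have hnn : (0:ℝ) ≤ |exp (-(2 * A ε y)) - exp (-(2 * c))| * |vb y|
            + 2 * lam * (|exp (2 * A ε y) - exp (2 * c)| * |ub y|) := by positivity
        rw [abs_of_nonneg hnn]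
        have := mul_le_mul_of_nonneg_right e1 (abs_nonneg (vb y))
        have := mul_le_mul_of_nonneg_right e2 (abs_nonneg (ub y))
        nlinarith [abs_nonneg (vb y), abs_nonneg (ub y), hlam.le]
      · exact (((continuousOn_const.mul hvbc.abs).add
          (continuousOn_const.mul (continuousOn_const.mul hubc.abs))).integrableOn_Icc).mono_set
          Ioc_subset_Icc_self
      · filter_upwards [ae_Ioo hr] with y hy
        have ht := hAt y hy
        have t1 : Tendsto (fun ε => exp (-(2 * A ε y))) (𝓝[>] (0:ℝ)) (𝓝 (exp (-(2 * c)))) :=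
          (Real.continuous_exp.tendsto _).comp (((tendsto_const_nhds (x := (2:ℝ))).mul ht).neg)
        have t2 : Tendsto (fun ε => exp (2 * A ε y)) (𝓝[>] (0:ℝ)) (𝓝 (exp (2 * c))) :=
          (Real.continuous_exp.tendsto _).comp ((tendsto_const_nhds (x := (2:ℝ))).mul ht)
        have : Tendsto (fun ε => |exp (-(2 * A ε y)) - exp (-(2 * c))| * |vb y|
            + 2 * lam * (|exp (2 * A ε y) - exp (2 * c)| * |ub y|)) (𝓝[>] (0:ℝ))
            (𝓝 (|exp (-(2 * c)) - exp (-(2 * c))| * |vb y|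
              + 2 * lam * (|exp (2 * c) - exp (2 * c)| * |ub y|))) := by
          exact ((((continuous_abs.tendsto _).comp (t1.sub tendsto_const_nhds)).mul
            tendsto_const_nhds).add (tendsto_const_nhds.mul
            (((continuous_abs.tendsto _).comp (t2.sub tendsto_const_nhds)).mul
              tendsto_const_nhds)))
        simpa using this
    simpa using main
  have hδf0 : ∀ ε, 0 ≤ δf ε := by
    intro ε
    apply setIntegral_nonneg measurableSet_Ioc
    intro y _
    positivity
  -- the Gronwall-type inequality
  have key : ∀ ε ∈ Ioi (0:ℝ), ∀ x ∈ Icc 0 r,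
      |u ε x - ub x| + |v ε x - vb x|
        ≤ δf ε + C * ∫ y in (0:ℝ)..x, (|u ε y - ub y| + |v ε y - vb y|) := by
    intro ε hε x hx
    have hIcc : Icc (0:ℝ) x ⊆ Icc 0 r := Icc_subset_Icc le_rfl hx.2
    have hinterval : ∀ {f : ℝ → ℝ}, ContinuousOn f (Icc 0 r) →
        IntervalIntegrable f volume 0 x := by
      intro f hf
      apply ContinuousOn.intervalIntegrable
      rw [uIcc_of_le hx.1]
      exact hf.mono hIcc
    have hcA := hAc ε hε
    have c1 : ContinuousOn (fun y => exp (-(2 * A ε y))) (Icc 0 r) :=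
      Real.continuous_exp.comp_continuousOn ((continuousOn_const.mul hcA).neg)
    have c2 : ContinuousOn (fun y => exp (2 * A ε y)) (Icc 0 r) :=
      Real.continuous_exp.comp_continuousOn (continuousOn_const.mul hcA)
    have cu := huc ε hε; have cv := hvc ε hε
    have cDu : ContinuousOn (fun y => u ε y - ub y) (Icc 0 r) := cu.sub hubc
    have cDv : ContinuousOn (fun y => v ε y - vb y) (Icc 0 r) := cv.sub hvbc
    have cD : ContinuousOn (fun y => |u ε y - ub y| + |v ε y - vb y|) (Icc 0 r) :=
      cDu.abs.add cDv.abs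
    -- u part
    have hu1 : u ε x - ub x = (∫ y in (0:ℝ)..x, exp (-(2 * A ε y)) * (v ε y - vb y))
        + ∫ y in (0:ℝ)..x, (exp (-(2 * A ε y)) - exp (-(2 * c))) * vb y := by
      rw [hue ε hε x hx, hube x hx]
      rw [← intervalIntegral.integral_add (hinterval (c1.fun_mul cDv))
        (hinterval ((c1.fun_sub continuousOn_const).fun_mul hvbc))]
      rw [add_sub_add_left_eq_sub, ← intervalIntegral.integral_sub
        (hinterval (c1.fun_mul cv)) (hinterval (continuousOn_const.fun_mul hvbc))]
      apply intervalIntegral.integral_congr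
      intro y _
      ring
    have hv1 : v ε x - vb x = 2 * lam * ((∫ y in (0:ℝ)..x, exp (2 * A ε y) * (u ε y - ub y))
        + ∫ y in (0:ℝ)..x, (exp (2 * A ε y) - exp (2 * c)) * ub y) := by
      rw [hve ε hε x hx, hvbe x hx]
      rw [← intervalIntegral.integral_add (hinterval (c2.fun_mul cDu))
        (hinterval ((c2.fun_sub continuousOn_const).fun_mul hubc))]
      rw [add_sub_add_left_eq_sub, ← mul_sub, ← intervalIntegral.integral_sub
        (hinterval (c2.fun_mul cu)) (hinterval (continuousOn_const.fun_mul hubc))]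
      congr 1
      apply intervalIntegral.integral_congr
      intro y _
      ring
    -- estimates for the "main" integrals
    have est1 : |∫ y in (0:ℝ)..x, exp (-(2 * A ε y)) * (v ε y - vb y)|
        ≤ exp (2 * M) * ∫ y in (0:ℝ)..x, (|u ε y - ub y| + |v ε y - vb y|) := by
      refine (intervalIntegral.abs_integral_le_integral_abs hx.1).trans ?_
      rw [← intervalIntegral.integral_const_mul]
      apply intervalIntegral.integral_mono_on hx.1 (hinterval (c1.fun_mul cDv).abs)
        (hinterval (continuousOn_const.fun_mul cD))
      intro y hy
      have hyI := hIcc hy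
      rw [abs_mul, abs_of_pos (exp_pos _)]
      have b1 := (hexpb ε hε y hyI).1
      nlinarith [abs_nonneg (v ε y - vb y), abs_nonneg (u ε y - ub y), exp_pos (2*M),
        exp_pos (-(2 * A ε y))]
    have est2 : |∫ y in (0:ℝ)..x, exp (2 * A ε y) * (u ε y - ub y)|
        ≤ exp (2 * M) * ∫ y in (0:ℝ)..x, (|u ε y - ub y| + |v ε y - vb y|) := by
      refine (intervalIntegral.abs_integral_le_integral_abs hx.1).trans ?_
      rw [← intervalIntegral.integral_const_mul]
      apply intervalIntegral.integral_mono_on hx.1 (hinterval (c2.fun_mul cDu).abs)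
        (hinterval (continuousOn_const.fun_mul cD))
      intro y hy
      have hyI := hIcc hy
      rw [abs_mul, abs_of_pos (exp_pos _)]
      have b1 := (hexpb ε hε y hyI).2
      nlinarith [abs_nonneg (v ε y - vb y), abs_nonneg (u ε y - ub y), exp_pos (2*M),
        exp_pos (2 * A ε y)]
    -- estimates for the error integrals
    have ierr1 : IntegrableOn (fun y => |exp (-(2 * A ε y)) - exp (-(2 * c))| * |vb y|)
        (Ioc 0 r) :=
      (((c1.sub continuousOn_const).abs.mul hvbc.abs).integrableOn_Icc).mono_set
        Ioc_subset_Icc_self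
    have ierr2 : IntegrableOn (fun y => |exp (2 * A ε y) - exp (2 * c)| * |ub y|)
        (Ioc 0 r) :=
      (((c2.sub continuousOn_const).abs.mul hubc.abs).integrableOn_Icc).mono_set
        Ioc_subset_Icc_self
    have err1 : |∫ y in (0:ℝ)..x, (exp (-(2 * A ε y)) - exp (-(2 * c))) * vb y|
        ≤ ∫ y in Ioc (0:ℝ) r, |exp (-(2 * A ε y)) - exp (-(2 * c))| * |vb y| := by
      refine (intervalIntegral.abs_integral_le_integral_abs hx.1).trans ?_
      have heq : ∀ y ∈ uIcc (0:ℝ) x, |(exp (-(2 * A ε y)) - exp (-(2 * c))) * vb y|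
          = |exp (-(2 * A ε y)) - exp (-(2 * c))| * |vb y| := fun y _ => abs_mul _ _
      rw [intervalIntegral.integral_congr heq, intervalIntegral.integral_of_le hx.1]
      apply setIntegral_mono_set ierr1
      · filter_upwards with y using by positivity
      · exact HasSubset.Subset.eventuallyLE (Ioc_subset_Ioc le_rfl hx.2)
    have err2 : |∫ y in (0:ℝ)..x, (exp (2 * A ε y) - exp (2 * c)) * ub y|
        ≤ ∫ y in Ioc (0:ℝ) r, |exp (2 * A ε y) - exp (2 * c)| * |ub y| := by
      refine (intervalIntegral.abs_integral_le_integral_abs hx.1).trans ?_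
      have heq : ∀ y ∈ uIcc (0:ℝ) x, |(exp (2 * A ε y) - exp (2 * c)) * ub y|
          = |exp (2 * A ε y) - exp (2 * c)| * |ub y| := fun y _ => abs_mul _ _
      rw [intervalIntegral.integral_congr heq, intervalIntegral.integral_of_le hx.1]
      apply setIntegral_mono_set ierr2
      · filter_upwards with y using by positivity
      · exact HasSubset.Subset.eventuallyLE (Ioc_subset_Ioc le_rfl hx.2)
    have hδsplit : δf ε = (∫ y in Ioc (0:ℝ) r, |exp (-(2 * A ε y)) - exp (-(2 * c))| * |vb y|)
        + 2 * lam * ∫ y in Ioc (0:ℝ) r, |exp (2 * A ε y) - exp (2 * c)| * |ub y| := by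
      rw [hδfdef]
      rw [← MeasureTheory.integral_const_mul, ← MeasureTheory.integral_add ierr1 (ierr2.const_mul _)]
    have htri1 : |u ε x - ub x| ≤ |∫ y in (0:ℝ)..x, exp (-(2 * A ε y)) * (v ε y - vb y)|
        + |∫ y in (0:ℝ)..x, (exp (-(2 * A ε y)) - exp (-(2 * c))) * vb y| := by
      rw [hu1]; exact abs_add_le _ _
    have htri2 : |v ε x - vb x| ≤ 2 * lam * (|∫ y in (0:ℝ)..x, exp (2 * A ε y) * (u ε y - ub y)|
        + |∫ y in (0:ℝ)..x, (exp (2 * A ε y) - exp (2 * c)) * ub y|) := by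
      rw [hv1, abs_mul, abs_of_pos (by linarith : (0:ℝ) < 2 * lam)]
      exact mul_le_mul_of_nonneg_left (abs_add_le _ _) (by linarith)
    rw [hδsplit, hCdef]
    nlinarith [est1, est2, err1, err2, htri1, htri2, hlam.le, exp_pos (2*M)]
  -- apply Gronwall and conclude
  have gron : ∀ ε ∈ Ioi (0:ℝ), ∀ x ∈ Icc 0 r,
      |u ε x - ub x| + |v ε x - vb x| ≤ δf ε * exp (C * r) := by
    intro ε hε
    apply gronwall_integral hr.le hCpos
    · exact ((huc ε hε).sub hubc).abs.add ((hvc ε hε).sub hvbc).abs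
    · intro y _; positivity
    · exact key ε hε
  have final : ∀ δ > (0:ℝ), ∀ᶠ ε in 𝓝[>] (0:ℝ), ∀ x ∈ Icc 0 r,
      |u ε x - ub x| + |v ε x - vb x| ≤ δ := by
    intro δ hδ
    have hpos : 0 < δ / exp (C * r) := by positivity
    have hev := Metric.tendsto_nhds.1 hδft _ hpos
    filter_upwards [hev, self_mem_nhdsWithin] with ε h1 h2 x hx
    rw [Real.dist_eq, sub_zero] at h1
    have h3 : δf ε < δ / exp (C * r) := lt_of_le_of_lt (le_abs_self _) h1
    refine (gron ε h2 x hx).trans ?_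
    have h4 : δf ε * exp (C * r) ≤ (δ / exp (C * r)) * exp (C * r) :=
      mul_le_mul_of_nonneg_right h3.le (exp_pos _).le
    rwa [div_mul_cancel₀ _ (exp_pos (C*r)).ne'] at h4
  constructor
  · intro δ hδ
    filter_upwards [final δ hδ] with ε h1 x hx
    have := h1 x hx
    have := abs_nonneg (v ε x - vb x)
    linarith
  · intro δ hδ
    filter_upwards [final δ hδ] with ε h1 x hx
    have := h1 x hx
    have := abs_nonneg (u ε x - ub x)
    linarith

end MainProp


section Edge

variable {r lam M α : ℝ} {b : ℝ → ℝ → ℝ} {K L : ℝ → ℝ → ℝ}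

lemma int_cosh_scaled {s : ℝ} (hs : s ≠ 0) (x : ℝ) :
    ∫ y in (0:ℝ)..x, cosh (s*y) = sinh (s*x) / s := by
  have h := intervalIntegral.integral_eq_sub_of_hasDerivAt
    (f := fun y => sinh (s*y) / s) (f' := fun y => cosh (s*y)) (a := 0) (b := x)
    (fun t _ => by
      have h1 := (((hasDerivAt_id t).const_mul s).sinh).div_const s
      refine h1.congr_deriv ?_
      simp [hs])
    (by apply Continuous.intervalIntegrable; fun_prop)
  simp only [mul_zero, Real.sinh_zero, zero_div, sub_zero] at h
  exact h

lemma int_sinh_scaled {s : ℝ} (hs : s ≠ 0) (x : ℝ) :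
    ∫ y in (0:ℝ)..x, sinh (s*y) = (cosh (s*x) - 1) / s := by
  have h := intervalIntegral.integral_eq_sub_of_hasDerivAt
    (f := fun y => cosh (s*y) / s) (f' := fun y => sinh (s*y)) (a := 0) (b := x)
    (fun t _ => by
      have h1 := (((hasDerivAt_id t).const_mul s).cosh).div_const s
      refine h1.congr_deriv ?_
      simp [hs])
    (by apply Continuous.intervalIntegrable; fun_prop)
  simp only [mul_zero, Real.cosh_zero] at h
  rw [h]
  ring

lemma sq_s (hlam : 0 < lam) : sqrt (2*lam) * sqrt (2*lam) = 2 * lam :=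
  Real.mul_self_sqrt (by linarith)

lemma s_pos (hlam : 0 < lam) : 0 < sqrt (2*lam) := Real.sqrt_pos.2 (by linarith)

/-- Per-edge hypotheses package. -/
structure EdgeHyp (r lam M α : ℝ) (b : ℝ → ℝ → ℝ) : Prop where
  hr : 0 < r
  hlam : 0 < lam
  hacont : ∀ ε ∈ Ioi (0:ℝ), ContinuousOn (b ε) (Icc 0 r)
  hM : ∀ ε ∈ Ioi (0:ℝ), ∫ u in (0:ℝ)..r, |b ε u| ≤ M
  hlim0 : ∀ z, 0 < z → z ≤ r → Tendsto (fun ε => ∫ u in (0:ℝ)..z, b ε u) (𝓝[>] (0:ℝ)) (𝓝 α)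

namespace EdgeHyp

variable (H : EdgeHyp r lam M α b)
include H

lemma hAb : ∀ ε ∈ Ioi (0:ℝ), ∀ y ∈ Icc 0 r, |Aint (b ε) y| ≤ M := by
  intro ε hε y hy
  have hbi : IntervalIntegrable (fun u => |b ε u|) volume 0 r := by
    apply ContinuousOn.intervalIntegrable
    rw [uIcc_of_le (hy.1.trans hy.2)]
    exact (H.hacont ε hε).abs
  calc |Aint (b ε) y| ≤ ∫ u in (0:ℝ)..y, |b ε u| :=
        intervalIntegral.abs_integral_le_integral_abs hy.1
    _ ≤ ∫ u in (0:ℝ)..r, |b ε u| := by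
        apply intervalIntegral.integral_mono_interval le_rfl hy.1 hy.2
        · filter_upwards with u using abs_nonneg _
        · exact hbi
    _ ≤ M := H.hM ε hε

lemma hAt : ∀ y ∈ Ioo 0 r, Tendsto (fun ε => Aint (b ε) y) (𝓝[>] (0:ℝ)) (𝓝 α) :=
  fun y hy => H.hlim0 y hy.1 hy.2.le

lemma hMpos : 0 ≤ M := by
  have h1 := H.hM 1 (mem_Ioi.2 one_pos)
  have h2 : (0:ℝ) ≤ ∫ u in (0:ℝ)..r, |b 1 u| :=
    intervalIntegral.integral_nonneg H.hr.le (fun u _ => abs_nonneg _)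
  linarith

lemma hαM : |α| ≤ M := by
  have hy : r/2 ∈ Ioo 0 r := ⟨by linarith [H.hr], by linarith [H.hr]⟩
  have ht : Tendsto (fun ε => |Aint (b ε) (r/2)|) (𝓝[>] (0:ℝ)) (𝓝 |α|) :=
    (continuous_abs.tendsto _).comp (H.hAt _ hy)
  apply le_of_tendsto ht
  filter_upwards [self_mem_nhdsWithin] with ε hε
  exact H.hAb ε hε _ ⟨by linarith [H.hr], by linarith [H.hr]⟩

/-- Convergence of `K`. -/
lemma K_conv (hK : ∀ ε ∈ Ioi (0:ℝ), SolPK r lam (b ε) (K ε)) :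
    UC r K (fun x => exp (-(2*α)) * (sinh (sqrt (2*lam)*x) / sqrt (2*lam))) := by
  set s := sqrt (2*lam) with hsdef
  have hs : 0 < s := s_pos H.hlam
  have hs2 : s * s = 2 * lam := sq_s H.hlam
  clear_value s
  have := system_conv (A := fun ε => Aint (b ε)) (u := K)
    (v := fun ε => vK r (b ε) (K ε))
    (ub := fun x => exp (-(2*α)) * (sinh (s*x) / s)) (vb := fun x => cosh (s*x))
    (u0 := 0) (v0 := 1) (c := α)
    H.hr H.hlam H.hMpos
    (fun ε hε => Aint_continuousOn H.hr.le (H.hacont ε hε))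
    H.hAb H.hαM H.hAt
    (fun ε hε => (hK ε hε).1.continuousOn)
    (fun ε hε => vK_continuousOn H.hr (H.hacont ε hε) (hK ε hε).1)
    (fun ε hε x hx => by
      rw [zero_add]; exact k_eq_integral H.hr (H.hacont ε hε) (hK ε hε) hx)
    (fun ε hε x hx => vK_eq_integral H.hr (H.hacont ε hε) (hK ε hε) hx)
    (by fun_prop) (by fun_prop)
    (fun x hx => by
      rw [intervalIntegral.integral_const_mul, int_cosh_scaled hs.ne', zero_add])
    (fun x hx => by
      have hcong : ∀ y ∈ uIcc (0:ℝ) x,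
          exp (2*α) * (exp (-(2*α)) * (sinh (s*y) / s)) = sinh (s*y) * (1/s) := by
        intro y _
        rw [Real.exp_neg]
        field_simp
        try ring
      rw [intervalIntegral.integral_congr hcong, intervalIntegral.integral_mul_const,
        int_sinh_scaled hs.ne']
      have h5 : (cosh (s*x) - 1)/s * (1/s) = (cosh (s*x) - 1) / (2*lam) := by
        rw [div_mul_div_comm, mul_one, hs2]
      have hl2 : (2:ℝ)*lam ≠ 0 := ne_of_gt (by linarith [H.hlam])
      rw [h5]
      field_simp [hl2]
      rw [mul_div_cancel_left₀ _ (by linarith [H.hlam] : lam ≠ 0)]; ring)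
  exact this.1

/-- Convergence of `L`. -/
lemma L_conv (hL : ∀ ε ∈ Ioi (0:ℝ), SolPL r lam (b ε) (L ε)) :
    UC r L (fun x => cosh (sqrt (2*lam)*(r-x))) := by
  set s := sqrt (2*lam) with hsdef
  have hs : 0 < s := s_pos H.hlam
  have hs2 : s * s = 2 * lam := sq_s H.hlam
  clear_value s
  have hmap : ∀ x ∈ Icc (0:ℝ) r, r - x ∈ Icc (0:ℝ) r := by
    intro x hx
    exact ⟨by linarith [hx.2], by linarith [hx.1]⟩
  have main := system_conv (A := fun ε y => Aint (b ε) (r - y))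
    (u := fun ε t => L ε (r - t))
    (v := fun ε t => -(vK r (b ε) (L ε) (r - t)))
    (ub := fun t => cosh (s*t)) (vb := fun t => exp (2*α) * (s * sinh (s*t)))
    (u0 := 1) (v0 := 0) (c := α)
    H.hr H.hlam H.hMpos
    (fun ε hε => (Aint_continuousOn H.hr.le (H.hacont ε hε)).comp
      (Continuous.continuousOn (by fun_prop)) hmap)
    (fun ε hε y hy => H.hAb ε hε _ (hmap y hy))
    H.hαM
    (fun y hy => H.hAt (r - y) ⟨by linarith [hy.2], by linarith [hy.1]⟩)
    (fun ε hε => ((hL ε hε).1.continuousOn).comp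
      (Continuous.continuousOn (by fun_prop)) hmap)
    (fun ε hε => ((vK_continuousOn H.hr (H.hacont ε hε) (hL ε hε).1).comp
      (Continuous.continuousOn (by fun_prop)) hmap).neg)
    (fun ε hε x hx => by
      beta_reduce
      have h1 := l_eq_integral H.hr (H.hacont ε hε) (hL ε hε) (hmap x hx)
      have hsub := intervalIntegral.integral_comp_sub_left (a := 0) (b := x)
        (fun y => exp (-(2 * Aint (b ε) y)) * vK r (b ε) (L ε) y) r
      rw [sub_zero] at hsub
      rw [h1]
      have : ∀ y, exp (-(2 * Aint (b ε) (r - y))) * -vK r (b ε) (L ε) (r - y)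
          = -(exp (-(2 * Aint (b ε) (r - y))) * vK r (b ε) (L ε) (r - y)) := fun y => by ring
      simp only [this]
      rw [intervalIntegral.integral_neg, hsub]
      ring
    )
    (fun ε hε x hx => by
      beta_reduce
      have h1 := vL_eq_integral H.hr (H.hacont ε hε) (hL ε hε) (hmap x hx)
      have hsub := intervalIntegral.integral_comp_sub_left (a := 0) (b := x)
        (fun y => exp (2 * Aint (b ε) y) * L ε y) r
      rw [sub_zero] at hsub
      rw [h1, hsub]
      ring
    )
    (by fun_prop) (by fun_prop)
    (fun x hx => by
      have hcong : ∀ y ∈ uIcc (0:ℝ) x,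
          exp (-(2*α)) * (exp (2*α) * (s * sinh (s*y))) = sinh (s*y) * s := by
        intro y _
        rw [Real.exp_neg]
        field_simp
        try ring
      rw [intervalIntegral.integral_congr hcong, intervalIntegral.integral_mul_const,
        int_sinh_scaled hs.ne', div_mul_cancel₀ _ hs.ne']
      ring)
    (fun x hx => by
      have hcong : ∀ y ∈ uIcc (0:ℝ) x,
          exp (2*α) * cosh (s*y) = cosh (s*y) * exp (2*α) := fun y _ => by ring
      rw [intervalIntegral.integral_congr hcong, intervalIntegral.integral_mul_const,
        int_cosh_scaled hs.ne']
      have h5 : 2*lam*(sinh (s*x)/s*exp (2*α)) = exp (2*α)*(s*sinh (s*x)) := by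
        rw [← hs2]
        field_simp
      rw [zero_add, h5])
  have h1 := main.1
  intro δ hδ
  filter_upwards [h1 δ hδ] with ε h2 x hx
  have h3 := h2 (r - x) (hmap x hx)
  have : r - (r - x) = x := by ring
  rw [this] at h3
  exact h3

/-- Main per-edge convergence: resolvent kernel and `C` functional. -/
lemma edge_main (hK : ∀ ε ∈ Ioi (0:ℝ), SolPK r lam (b ε) (K ε))
    (hL : ∀ ε ∈ Ioi (0:ℝ), SolPL r lam (b ε) (L ε))
    {h : ℝ → ℝ} (hh : ContinuousOn h (Icc 0 r)) :
    UC r (fun ε x => R0 r (K ε) (L ε) h x) (fun x => R0lim r lam h x) ∧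
    Tendsto (fun ε => Cfn r (K ε) (L ε) h) (𝓝[>] (0:ℝ))
      (𝓝 (exp (2*α) * Clim r lam h)) := by
  set s := sqrt (2*lam) with hsdef
  have hspos : 0 < s := s_pos H.hlam
  have hcoshpos : (0:ℝ) < cosh (s*r) := Real.cosh_pos _
  have hE : exp (-(2*α)) * exp (2*α) = 1 := by
    rw [← Real.exp_add]; norm_num
  set kb : ℝ → ℝ := fun x => exp (-(2*α)) * (sinh (s*x)/s) with hkbdef
  set lb : ℝ → ℝ := fun x => cosh (s*(r-x)) with hlbdef
  have UCK : UC r K kb := H.K_conv hK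
  have UCL : UC r L lb := H.L_conv hL
  have hkbc : ContinuousOn kb (Icc 0 r) :=
    (continuous_const.mul ((Real.continuous_sinh.comp
      (continuous_const.mul continuous_id)).div_const s)).continuousOn
  have hlbc : ContinuousOn lb (Icc 0 r) :=
    (Real.continuous_cosh.comp (continuous_const.mul
      (continuous_const.sub continuous_id))).continuousOn
  obtain ⟨Bk, hBk0, hBk⟩ := bound_of_continuousOn hkbc
  obtain ⟨Bl, hBl0, hBl⟩ := bound_of_continuousOn hlbc
  obtain ⟨Bh, hBh0, hBh⟩ := bound_of_continuousOn hh
  set HL : ℝ → ℝ → ℝ := fun ε y => L ε y * h y * exp (2 * Aint (b ε) y) with hHLdef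
  set HK : ℝ → ℝ → ℝ := fun ε y => K ε y * h y * exp (2 * Aint (b ε) y) with hHKdef
  set HLbar : ℝ → ℝ := fun y => lb y * h y * exp (2*α) with hHLbardef
  set HKbar : ℝ → ℝ := fun y => kb y * h y * exp (2*α) with hHKbardef
  -- a generic bound builder
  have bddgen : ∀ (F : ℝ → ℝ → ℝ) (fb : ℝ → ℝ) (Bf : ℝ), UC r F fb →
      (∀ x ∈ Icc 0 r, |fb x| ≤ Bf) →
      ∀ᶠ ε in 𝓝[>] (0:ℝ), ∀ y ∈ Icc 0 r,
        |F ε y * h y * exp (2 * Aint (b ε) y)| ≤ (Bf+1) * Bh * exp (2*M) := by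
    intro F fb Bf hUC hfb
    filter_upwards [hUC 1 one_pos, self_mem_nhdsWithin] with ε h1 h2 y hy
    have hBf0 : 0 ≤ Bf := le_trans (abs_nonneg _) (hfb y hy)
    have e1 : |F ε y| ≤ Bf + 1 := by
      have e0 : F ε y = (F ε y - fb y) + fb y := by ring
      rw [e0]
      exact (abs_add_le _ _).trans (by linarith [h1 y hy, hfb y hy])
    have e2 : exp (2 * Aint (b ε) y) ≤ exp (2*M) :=
      exp_le_exp.2 (by nlinarith [abs_le.1 (H.hAb ε h2 y hy)])
    rw [abs_mul, abs_mul, abs_of_pos (exp_pos _)]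
    have h3 : |F ε y| * |h y| ≤ (Bf+1) * Bh :=
      mul_le_mul e1 (hBh y hy) (abs_nonneg _) (by linarith)
    apply mul_le_mul h3 e2 (exp_pos _).le
    nlinarith
  -- pointwise convergence builder
  have ptwgen : ∀ (F : ℝ → ℝ → ℝ) (fb : ℝ → ℝ), UC r F fb →
      ∀ y ∈ Ioo 0 r, Tendsto (fun ε => F ε y * h y * exp (2 * Aint (b ε) y))
        (𝓝[>] (0:ℝ)) (𝓝 (fb y * h y * exp (2*α))) := by
    intro F fb hUC y hy
    exact ((hUC.tendsto_at (Ioo_subset_Icc_self hy)).mul tendsto_const_nhds).mul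
      ((Real.continuous_exp.tendsto _).comp
        ((tendsto_const_nhds (x := (2:ℝ))).mul (H.hAt y hy)))
  obtain ⟨ILr, ILl⟩ := UC_integral (h := HL) (hbar := HLbar) H.hr
    (fun ε hε => ((hL ε hε).1.continuousOn.mul hh).mul
      (expA_continuousOn H.hr (H.hacont ε hε) 2))
    (bddgen L lb Bl UCL hBl)
    ((hlbc.mul hh).mul continuousOn_const)
    (ptwgen L lb UCL)
  obtain ⟨IKr, IKl⟩ := UC_integral (h := HK) (hbar := HKbar) H.hr
    (fun ε hε => ((hK ε hε).1.continuousOn.mul hh).mul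
      (expA_continuousOn H.hr (H.hacont ε hε) 2))
    (bddgen K kb Bk UCK hBk)
    ((hkbc.mul hh).mul continuousOn_const)
    (ptwgen K kb UCK)
  -- scalar convergence of L ε 0
  have hL0 : Tendsto (fun ε => L ε 0) (𝓝[>] (0:ℝ)) (𝓝 (cosh (s*r))) := by
    have := UCL.tendsto_at (left_mem_Icc.2 H.hr.le)
    simpa [hlbdef] using this
  have hL0i : Tendsto (fun ε => (L ε 0)⁻¹) (𝓝[>] (0:ℝ)) (𝓝 ((cosh (s*r))⁻¹)) :=
    hL0.inv₀ (ne_of_gt hcoshpos)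
  -- bounds on limit integrals
  obtain ⟨BL1, hBL10, hBL1⟩ := bound_of_continuousOn ((hlbc.mul hh).mul continuousOn_const :
    ContinuousOn HLbar (Icc 0 r))
  obtain ⟨BK1, hBK10, hBK1⟩ := bound_of_continuousOn ((hkbc.mul hh).mul continuousOn_const :
    ContinuousOn HKbar (Icc 0 r))
  -- rewrite of R0 and Cfn
  have hwcong : ∀ ε ∈ Ioi (0:ℝ), ∀ p q, p ∈ Icc 0 r → q ∈ Icc 0 r → p ≤ q →
      ((∫ y in p..q, L ε y * h y / wfn r (K ε) (L ε) y)
        = (∫ y in p..q, HL ε y) * (L ε 0)⁻¹ ∧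
      (∫ y in p..q, K ε y * h y / wfn r (K ε) (L ε) y)
        = (∫ y in p..q, HK ε y) * (L ε 0)⁻¹) := by
    intro ε hε p q hp hq hpq
    have hw : ∀ y ∈ uIcc p q, wfn r (K ε) (L ε) y = L ε 0 * exp (-(2 * Aint (b ε) y)) := by
      intro y hy
      rw [uIcc_of_le hpq] at hy
      exact wfn_eq H.hr (H.hacont ε hε) (hK ε hε) (hL ε hε) ⟨hp.1.trans hy.1, hy.2.trans hq.2⟩
    constructor
    · rw [← intervalIntegral.integral_mul_const]
      apply intervalIntegral.integral_congr
      intro y hy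
      show L ε y * h y / wfn r (K ε) (L ε) y = HL ε y * (L ε 0)⁻¹
      rw [hw y hy, div_form, hHLdef]
    · rw [← intervalIntegral.integral_mul_const]
      apply intervalIntegral.integral_congr
      intro y hy
      show K ε y * h y / wfn r (K ε) (L ε) y = HK ε y * (L ε 0)⁻¹
      rw [hw y hy, div_form, hHKdef]
  have hR0eq : ∀ ε ∈ Ioi (0:ℝ), ∀ x ∈ Icc 0 r, R0 r (K ε) (L ε) h x
      = 2 * (K ε x * ((∫ y in x..r, HL ε y) * (L ε 0)⁻¹))
        + 2 * (L ε x * ((∫ y in (0:ℝ)..x, HK ε y) * (L ε 0)⁻¹)) := by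
    intro ε hε x hx
    rw [R0, (hwcong ε hε x r hx (right_mem_Icc.2 H.hr.le) hx.2).1,
      (hwcong ε hε 0 x (left_mem_Icc.2 H.hr.le) hx hx.1).2]
    ring
  -- UC for R0
  have J1 : UC r (fun ε x => (∫ y in x..r, HL ε y) * (L ε 0)⁻¹)
      (fun x => (∫ y in x..r, HLbar y) * (cosh (s*r))⁻¹) := by
    apply ILr.mul (UC.of_tendsto hL0i) (B₁ := BL1 * r) (B₂ := (cosh (s*r))⁻¹)
      (mul_nonneg hBL10 H.hr.le) (inv_pos.2 hcoshpos).le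
    · exact fun x hx => (abs_intR_le hBL10 hBL1 hx).1
    · intro x _
      rw [abs_of_pos (inv_pos.2 hcoshpos)]
  have J2 : UC r (fun ε x => (∫ y in (0:ℝ)..x, HK ε y) * (L ε 0)⁻¹)
      (fun x => (∫ y in (0:ℝ)..x, HKbar y) * (cosh (s*r))⁻¹) := by
    apply IKl.mul (UC.of_tendsto hL0i) (B₁ := BK1 * r) (B₂ := (cosh (s*r))⁻¹)
      (mul_nonneg hBK10 H.hr.le) (inv_pos.2 hcoshpos).le
    · exact fun x hx => (abs_intR_le hBK10 hBK1 hx).2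
    · intro x _
      rw [abs_of_pos (inv_pos.2 hcoshpos)]
  have T1 : UC r (fun ε x => K ε x * ((∫ y in x..r, HL ε y) * (L ε 0)⁻¹))
      (fun x => kb x * ((∫ y in x..r, HLbar y) * (cosh (s*r))⁻¹)) := by
    apply UCK.mul J1 (B₁ := Bk) (B₂ := BL1 * r * (cosh (s*r))⁻¹) hBk0 (mul_nonneg (mul_nonneg hBL10 H.hr.le) (inv_pos.2 hcoshpos).le)
    · exact hBk
    · intro x hx
      rw [abs_mul, abs_of_pos (inv_pos.2 hcoshpos)]
      exact mul_le_mul_of_nonneg_right (abs_intR_le hBL10 hBL1 hx).1 (inv_pos.2 hcoshpos).le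
  have T2 : UC r (fun ε x => L ε x * ((∫ y in (0:ℝ)..x, HK ε y) * (L ε 0)⁻¹))
      (fun x => lb x * ((∫ y in (0:ℝ)..x, HKbar y) * (cosh (s*r))⁻¹)) := by
    apply UCL.mul J2 (B₁ := Bl) (B₂ := BK1 * r * (cosh (s*r))⁻¹) hBl0 (mul_nonneg (mul_nonneg hBK10 H.hr.le) (inv_pos.2 hcoshpos).le)
    · exact hBl
    · intro x hx
      rw [abs_mul, abs_of_pos (inv_pos.2 hcoshpos)]
      exact mul_le_mul_of_nonneg_right (abs_intR_le hBK10 hBK1 hx).2 (inv_pos.2 hcoshpos).le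
  have combined := (T1.const_mul (c := 2)).add (T2.const_mul (c := 2))
  constructor
  · apply combined.congr
    · intro ε hε x hx
      exact (hR0eq ε hε x hx).symm
    · intro x hx
      have e3 : (∫ y in (0:ℝ)..x, HKbar y) = ∫ y in (0:ℝ)..x, sinh (s*y)/s * h y := by
        apply intervalIntegral.integral_congr
        intro y _
        show kb y * h y * exp (2*α) = sinh (s*y)/s * h y
        rw [hkbdef]
        linear_combination (sinh (s*y)/s * h y) * hE
      have e2 : (∫ y in x..r, HLbar y)
          = (∫ y in x..r, cosh (s*(r-y)) * h y) * exp (2*α) := by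
        rw [← intervalIntegral.integral_mul_const]
      rw [R0lim, ← hsdef, e2, e3]
      have e4 : (∫ y in x..r, cosh (s * (r - y)) * h y / cosh (s*r))
          = (∫ y in x..r, cosh (s * (r - y)) * h y) / cosh (s*r) :=
        intervalIntegral.integral_div _ _
      have e5 : (∫ y in (0:ℝ)..x, sinh (s*y)/s * h y / cosh (s*r))
          = (∫ y in (0:ℝ)..x, sinh (s*y)/s * h y) / cosh (s*r) :=
        intervalIntegral.integral_div _ _
      rw [e4, e5, hkbdef, hlbdef]
      linear_combination (2 * (sinh (s*x)/s) * (∫ y in x..r, cosh (s*(r-y)) * h y)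
        * (cosh (s*r))⁻¹) * hE
  · have T := (Tendsto.const_mul (2:ℝ) ((ILr.tendsto_at (left_mem_Icc.2 H.hr.le)).mul hL0i))
    have hval : (2:ℝ) * ((∫ y in (0:ℝ)..r, HLbar y) * (cosh (s*r))⁻¹)
        = exp (2*α) * Clim r lam h := by
      have e2 : (∫ y in (0:ℝ)..r, HLbar y)
          = (∫ y in (0:ℝ)..r, cosh (s*(r-y)) * h y) * exp (2*α) := by
        rw [← intervalIntegral.integral_mul_const]
      rw [e2, Clim, ← hsdef, div_eq_mul_inv]
      ring
    have T' : Tendsto (fun ε => 2 * ((∫ y in (0:ℝ)..r, HL ε y) * (L ε 0)⁻¹))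
        (𝓝[>] (0:ℝ)) (𝓝 (exp (2*α) * Clim r lam h)) := by
      rw [← hval]; exact T
    apply Tendsto.congr' ?_ T'
    filter_upwards [self_mem_nhdsWithin] with ε hε
    rw [Cfn, (hwcong ε hε 0 r (left_mem_Icc.2 H.hr.le) (right_mem_Icc.2 H.hr.le) H.hr.le).1]
    try ring

end EdgeHyp

end Edge

section Final

variable {r lam : ℝ}

lemma Clim_one_pos (hr : 0 < r) (hlam : 0 < lam) : 0 < Clim r lam (fun _ => 1) := by
  rw [Clim]
  have h1 : 0 < ∫ y in (0:ℝ)..r, cosh (sqrt (2*lam)*(r-y)) * (fun _ : ℝ => (1:ℝ)) y := by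
    apply intervalIntegral.intervalIntegral_pos_of_pos_on
    · apply Continuous.intervalIntegrable
      have hcont : Continuous fun y : ℝ => cosh (sqrt (2*lam)*(r-y)) :=
        Real.continuous_cosh.comp (continuous_const.mul (continuous_const.sub continuous_id))
      have h2 : (fun y : ℝ => cosh (sqrt (2*lam)*(r-y)) * (fun _ : ℝ => (1:ℝ)) y)
          = fun y : ℝ => cosh (sqrt (2*lam)*(r-y)) := by
        funext y; simp
      rw [h2]
      exact hcont
    · intro y _
      have := Real.cosh_pos (sqrt (2*lam)*(r-y))
      simpa using this
    · exact hr
  exact mul_pos (div_pos two_pos (Real.cosh_pos _)) h1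

lemma R0lim_continuousOn (hr : 0 < r) {h : ℝ → ℝ} (hh : ContinuousOn h (Icc 0 r)) :
    ContinuousOn (fun x => R0lim r lam h x) (Icc 0 r) := by
  have hcosh : Continuous fun y : ℝ => cosh (sqrt (2*lam)*(r-y)) :=
    Real.continuous_cosh.comp (continuous_const.mul (continuous_const.sub continuous_id))
  have hsinh : Continuous fun y : ℝ => sinh (sqrt (2*lam)*y) / sqrt (2*lam) :=
    (Real.continuous_sinh.comp (continuous_const.mul continuous_id)).div_const _
  have hF1 : ContinuousOn
      (fun y => cosh (sqrt (2*lam)*(r-y)) * h y / cosh (sqrt (2*lam)*r)) (Icc 0 r) :=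
    (hcosh.continuousOn.mul hh).div_const _
  have hF2 : ContinuousOn
      (fun y => sinh (sqrt (2*lam)*y) / sqrt (2*lam) * h y / cosh (sqrt (2*lam)*r))
      (Icc 0 r) :=
    (hsinh.continuousOn.mul hh).div_const _
  have hI1 : ContinuousOn
      (fun x => ∫ y in x..r, cosh (sqrt (2*lam)*(r-y)) * h y / cosh (sqrt (2*lam)*r))
      (Icc 0 r) := by
    have := intervalIntegral.continuousOn_primitive_interval_left
      (f := fun y => cosh (sqrt (2*lam)*(r-y)) * h y / cosh (sqrt (2*lam)*r))
      (a := (0:ℝ)) (b := r) (μ := volume) ?_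
    · rwa [uIcc_of_le hr.le] at this
    · rw [uIcc_of_le hr.le]
      exact hF1.integrableOn_Icc
  have hI2 : ContinuousOn
      (fun x => ∫ y in (0:ℝ)..x,
        sinh (sqrt (2*lam)*y) / sqrt (2*lam) * h y / cosh (sqrt (2*lam)*r)) (Icc 0 r) := by
    have := intervalIntegral.continuousOn_primitive_interval
      (f := fun y => sinh (sqrt (2*lam)*y) / sqrt (2*lam) * h y / cosh (sqrt (2*lam)*r))
      (a := (0:ℝ)) (b := r) (μ := volume) ?_
    · rwa [uIcc_of_le hr.le] at this
    · rw [uIcc_of_le hr.le]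
      exact hF2.integrableOn_Icc
  exact ((continuousOn_const.mul hsinh.continuousOn).mul hI1).add
    ((continuousOn_const.mul hcosh.continuousOn).mul hI2)

end Final

end Stmt11Aux

open Stmt11Aux in
/-- Portenko-type approximation of the Walsh process on a finite star graph
with `κ` edges: the resolvents of the approximating processes converge, coordinatewise
uniformly on `[0,r]`, to the resolvent of the Walsh process with transformed weights
`p̃ᵢ = pᵢe^{2αᵢ}/Σⱼpⱼe^{2αⱼ}`. -/
theorem stmt11 (κ : ℕ) (hκ : 2 ≤ κ) (r lam : ℝ) (hr : 0 < r) (hlam : 0 < lam)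
    (α : Fin κ → ℝ) (p : Fin κ → ℝ) (hp : ∀ i, 0 < p i) (hp1 : ∑ i, p i = 1)
    (a : ℝ → Fin κ → ℝ → ℝ)
    (hacont : ∀ ε > (0:ℝ), ∀ i, ContinuousOn (a ε i) (Icc 0 r))
    (haM : ∀ i, ∃ M : ℝ, ∀ ε > (0:ℝ), ∫ u in (0:ℝ)..r, |a ε i u| ≤ M)
    (hlim : ∀ i, ∀ y z : ℝ, 0 ≤ y → y < z → z ≤ r →
      Tendsto (fun ε => ∫ u in y..z, a ε i u) (𝓝[>] (0:ℝ))
        (𝓝 (α i * (if y = 0 then 1 else 0))))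
    (K L : ℝ → Fin κ → ℝ → ℝ)
    (hK : ∀ ε > (0:ℝ), ∀ i, SolPK r lam (a ε i) (K ε i))
    (hL : ∀ ε > (0:ℝ), ∀ i, SolPL r lam (a ε i) (L ε i))
    (g : Fin κ → ℝ → ℝ)
    (hg : ∀ i, ContinuousOn (g i) (Icc 0 r))
    (hg0 : ∀ i j, g i 0 = g j 0) :
    ∀ i, TendstoUniformlyOn
      (fun ε x => Rfull κ r lam p (K ε) (L ε) g i x)
      (fun x => Rlimf κ r lam
        (fun j => p j * Real.exp (2 * α j) / ∑ j', p j' * Real.exp (2 * α j')) g i x)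
      (𝓝[>] (0:ℝ)) (Icc 0 r) := by
  intro i
  classical
  choose Mf hMf using haM
  have HEj : ∀ j : Fin κ, EdgeHyp r lam (Mf j) (α j) (fun ε => a ε j) := by
    intro j
    refine ⟨hr, hlam, fun ε hε => hacont ε hε j, fun ε hε => hMf j ε hε, ?_⟩
    intro z hz hzr
    have := hlim j 0 z le_rfl hz hzr
    simpa using this
  have hκ0 : Nonempty (Fin κ) := ⟨⟨0, by omega⟩⟩
  have hedgeg : ∀ j : Fin κ,
      UC r (fun ε x => R0 r (K ε j) (L ε j) (g j) x) (fun x => R0lim r lam (g j) x) ∧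
      Tendsto (fun ε => Cfn r (K ε j) (L ε j) (g j)) (𝓝[>] (0:ℝ))
        (𝓝 (exp (2*α j) * Clim r lam (g j))) :=
    fun j => (HEj j).edge_main (fun ε hε => hK ε hε j) (fun ε hε => hL ε hε j) (hg j)
  have hedge1 : ∀ j : Fin κ,
      UC r (fun ε x => R0 r (K ε j) (L ε j) (fun _ => 1) x)
        (fun x => R0lim r lam (fun _ => 1) x) ∧
      Tendsto (fun ε => Cfn r (K ε j) (L ε j) (fun _ => 1)) (𝓝[>] (0:ℝ))
        (𝓝 (exp (2*α j) * Clim r lam (fun _ => 1))) :=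
    fun j => (HEj j).edge_main (fun ε hε => hK ε hε j) (fun ε hε => hL ε hε j)
      continuousOn_const
  -- scalar ratio convergence
  set N : ℝ := ∑ j, p j * (exp (2*α j) * Clim r lam (g j)) with hNdef
  set D : ℝ := ∑ j, p j * (exp (2*α j) * Clim r lam (fun _ => 1)) with hDdef
  have hDpos : 0 < D := by
    rw [hDdef]
    apply Finset.sum_pos
    · intro j _
      exact mul_pos (hp j) (mul_pos (exp_pos _) (Clim_one_pos hr hlam))
    · exact Finset.univ_nonempty
  have hnum : Tendsto (fun ε => ∑ j, p j * Cfn r (K ε j) (L ε j) (g j))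
      (𝓝[>] (0:ℝ)) (𝓝 N) := by
    rw [hNdef]
    exact tendsto_finset_sum _ (fun j _ => (hedgeg j).2.const_mul (p j))
  have hden : Tendsto (fun ε => lam * ∑ j, p j * Cfn r (K ε j) (L ε j) (fun _ => 1))
      (𝓝[>] (0:ℝ)) (𝓝 (lam * D)) := by
    rw [hDdef]
    exact (tendsto_finset_sum _ (fun j _ => (hedge1 j).2.const_mul (p j))).const_mul lam
  have hρ : Tendsto (fun ε => (∑ j, p j * Cfn r (K ε j) (L ε j) (g j)) /
      (lam * ∑ j, p j * Cfn r (K ε j) (L ε j) (fun _ => 1)))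
      (𝓝[>] (0:ℝ)) (𝓝 (N / (lam * D))) :=
    hnum.div hden (by positivity)
  -- Lfn convergence
  have UCLfn : UC r (fun ε x => Lfn r lam (K ε i) (L ε i) x) (fun x => Llim r lam x) := by
    have base := (UC.const (r := r) (fun _ => (1:ℝ))).add
      (((hedge1 i).1).const_mul (c := -lam))
    apply base.congr
    · intro ε _ x _
      rw [Lfn]; ring
    · intro x _
      rw [Llim]; ring
  -- bound on Llim
  have hLlimc : ContinuousOn (fun x => Llim r lam x) (Icc 0 r) := by
    have h2 : ContinuousOn (fun x => lam * R0lim r lam (fun _ => 1) x) (Icc 0 r) :=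
      continuousOn_const.mul (R0lim_continuousOn (lam := lam) hr continuousOn_const)
    exact continuousOn_const.sub h2
  obtain ⟨BΛ, hBΛ0, hBΛ⟩ := bound_of_continuousOn hLlimc
  -- combine
  have UCfull : UC r
      (fun ε x => R0 r (K ε i) (L ε i) (g i) x +
        ((∑ j, p j * Cfn r (K ε j) (L ε j) (g j)) /
          (lam * ∑ j, p j * Cfn r (K ε j) (L ε j) (fun _ => 1))) *
        Lfn r lam (K ε i) (L ε i) x)
      (fun x => R0lim r lam (g i) x + (N / (lam * D)) * Llim r lam x) := by
    apply ((hedgeg i).1).add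
    apply (UC.of_tendsto hρ).mul UCLfn (B₁ := |N / (lam * D)|) (B₂ := BΛ)
      (abs_nonneg _) hBΛ0 (fun x _ => le_rfl) hBΛ
  -- identify the limit with `Rlimf`
  set S : ℝ := ∑ j', p j' * exp (2 * α j') with hSdef
  have hSpos : 0 < S := by
    rw [hSdef]
    exact Finset.sum_pos (fun j _ => mul_pos (hp j) (exp_pos _)) Finset.univ_nonempty
  have hsum1 : ∑ j, (p j * exp (2 * α j) / S) * Clim r lam (g j) = N / S := by
    rw [hNdef, Finset.sum_div]
    apply Finset.sum_congr rfl
    intro j _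
    field_simp
  have hsum2 : ∑ j, (p j * exp (2 * α j) / S) * Clim r lam (fun _ => 1) = D / S := by
    rw [hDdef, Finset.sum_div]
    apply Finset.sum_congr rfl
    intro j _
    field_simp
  have hlimit_eq : ∀ x ∈ Icc (0:ℝ) r,
      R0lim r lam (g i) x + (N / (lam * D)) * Llim r lam x
        = Rlimf κ r lam (fun j => p j * Real.exp (2 * α j) / ∑ j', p j' * Real.exp (2 * α j'))
            g i x := by
    intro x _
    rw [Rlimf, ← hSdef, hsum1, hsum2]
    have : N / S / (lam * (D / S)) = N / (lam * D) := by
      field_simp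
    rw [this]
  have UCfinal : UC r (fun ε x => Rfull κ r lam p (K ε) (L ε) g i x)
      (fun x => Rlimf κ r lam
        (fun j => p j * Real.exp (2 * α j) / ∑ j', p j' * Real.exp (2 * α j')) g i x) := by
    apply UCfull.congr
    · intro ε _ x _
      rw [Rfull]
    · exact hlimit_eq
  exact UCfinal.tendstoUniformlyOn
end

section
/- Let E be a complete separable metric space, r₀ ≥ 0, and let μ_{ε,r} be Borel probability measures on E indexed by ε ≥ 0 and r ∈ (r₀,∞]. Assume: (i) for every finite r ∈ (r₀,∞), μ_{ε,r} converges weakly to μ_{0,r} as ε → 0+; (ii) for each finite r ∈ (r₀,∞) there is an open set U_r ⊆ E such that (a) μ_{ε,r}(A) = μ_{ε,∞}(A) for every Borel set A ⊆ U_r and every ε ≥ 0, and (b) lim_{r→∞} sup_{ε≥0} μ_{ε,∞}(E ∖ U_r) = 0. Then μ_{ε,∞} converges weakly to μ_{0,∞} as ε → 0+. -/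
open MeasureTheory Set Filter Topology
open scoped ENNReal BoundedContinuousFunction

lemma key_est {E : Type*} [MetricSpace E] [MeasurableSpace E] [BorelSpace E]
    (ν κ : Measure E) [IsProbabilityMeasure ν] [IsProbabilityMeasure κ]
    (U : Set E) (hUm : MeasurableSet U)
    (h : ∀ A : Set E, MeasurableSet A → A ⊆ U → ν A = κ A)
    (f : E →ᵇ ℝ) :
    |(∫ x, f x ∂ν) - ∫ x, f x ∂κ| ≤ 2 * ‖f‖ * (κ Uᶜ).toReal := by
  have hνκU : ν U = κ U := h U hUm subset_rfl
  have hcompl : ν Uᶜ = κ Uᶜ := by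
    rw [measure_compl hUm (measure_ne_top ν U), measure_compl hUm (measure_ne_top κ U),
      measure_univ, measure_univ, hνκU]
  have hres : ν.restrict U = κ.restrict U := by
    ext A hA
    rw [Measure.restrict_apply hA, Measure.restrict_apply hA]
    exact h (A ∩ U) (hA.inter hUm) inter_subset_right
  have hsplitν : ∫ x, f x ∂ν = (∫ x in U, f x ∂ν) + ∫ x in Uᶜ, f x ∂ν :=
    (integral_add_compl hUm (f.integrable ν)).symm
  have hsplitκ : ∫ x, f x ∂κ = (∫ x in U, f x ∂κ) + ∫ x in Uᶜ, f x ∂κ :=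
    (integral_add_compl hUm (f.integrable κ)).symm
  have hUeq : ∫ x in U, f x ∂ν = ∫ x in U, f x ∂κ := by rw [hres]
  have hb1 : ‖∫ x in Uᶜ, f x ∂ν‖ ≤ ‖f‖ * (ν Uᶜ).toReal :=
    norm_setIntegral_le_of_norm_le_const (measure_lt_top ν Uᶜ)
      (fun x _ => f.norm_coe_le_norm x)
  have hb2 : ‖∫ x in Uᶜ, f x ∂κ‖ ≤ ‖f‖ * (κ Uᶜ).toReal :=
    norm_setIntegral_le_of_norm_le_const (measure_lt_top κ Uᶜ)
      (fun x _ => f.norm_coe_le_norm x)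
  calc |(∫ x, f x ∂ν) - ∫ x, f x ∂κ|
      = |(∫ x in Uᶜ, f x ∂ν) - ∫ x in Uᶜ, f x ∂κ| := by
        rw [hsplitν, hsplitκ, hUeq]; ring_nf
    _ ≤ ‖∫ x in Uᶜ, f x ∂ν‖ + ‖∫ x in Uᶜ, f x ∂κ‖ := by
        rw [Real.norm_eq_abs, Real.norm_eq_abs]; exact abs_sub _ _
    _ ≤ ‖f‖ * (ν Uᶜ).toReal + ‖f‖ * (κ Uᶜ).toReal := add_le_add hb1 hb2
    _ = 2 * ‖f‖ * (κ Uᶜ).toReal := by rw [hcompl]; ring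

/-- a two-parameter weak-convergence lemma. If for every finite `r > r₀`
the measures `μ_{ε,r}` converge weakly to `μ_{0,r}` as `ε → 0+`, and for each finite `r`
there is an open set `U_r` on whose Borel subsets `μ_{ε,r}` and `μ_{ε,∞}` agree for all
`ε ≥ 0`, with `sup_{ε≥0} μ_{ε,∞}(E∖U_r) → 0` as `r → ∞`, then `μ_{ε,∞}` converges weakly
to `μ_{0,∞}` as `ε → 0+`. -/
theorem stmt12 {E : Type*} [MetricSpace E] [CompleteSpace E]
    [TopologicalSpace.SeparableSpace E] [MeasurableSpace E] [BorelSpace E]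
    (r₀ : ℝ) (hr₀ : 0 ≤ r₀)
    (μ : ℝ → ℝ → ProbabilityMeasure E) (μinf : ℝ → ProbabilityMeasure E)
    (hconv : ∀ r > r₀, Tendsto (fun ε => μ ε r) (𝓝[>] (0:ℝ)) (𝓝 (μ 0 r)))
    (hU : ∃ U : ℝ → Set E,
      (∀ r > r₀, IsOpen (U r)) ∧
      (∀ r > r₀, ∀ ε ≥ (0:ℝ), ∀ A : Set E, MeasurableSet A → A ⊆ U r →
        (μ ε r : Measure E) A = (μinf ε : Measure E) A) ∧
      Tendsto (fun r => ⨆ ε : {ε : ℝ // 0 ≤ ε}, (μinf ε : Measure E) (U r)ᶜ)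
        atTop (𝓝 (0 : ℝ≥0∞))) :
    Tendsto μinf (𝓝[>] (0:ℝ)) (𝓝 (μinf 0)) := by
  obtain ⟨U, hUopen, hUagree, hUsup⟩ := hU
  rw [ProbabilityMeasure.tendsto_iff_forall_integral_tendsto]
  intro f
  rw [Metric.tendsto_nhds]
  intro δ hδ
  set C : ℝ := 2 * ‖f‖ + 1 with hC
  have hCpos : 0 < C := by positivity
  have hηpos : 0 < δ / (3 * C) := by positivity
  -- choose r
  have hev : ∀ᶠ r in atTop,
      (⨆ ε : {ε : ℝ // 0 ≤ ε}, (μinf ε : Measure E) (U r)ᶜ) < ENNReal.ofReal (δ / (3 * C)) :=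
    hUsup.eventually_lt_const (by simp [hηpos])
  obtain ⟨r, hrr₀, hrsup⟩ := ((eventually_gt_atTop r₀).and hev).exists
  -- bound for each ε ≥ 0
  have hbound : ∀ ε : ℝ, 0 ≤ ε →
      |(∫ x, f x ∂(μ ε r : Measure E)) - ∫ x, f x ∂(μinf ε : Measure E)| ≤ δ / 3 := by
    intro ε hε
    have h1 : (μinf ε : Measure E) (U r)ᶜ < ENNReal.ofReal (δ / (3 * C)) :=
      lt_of_le_of_lt (le_iSup (fun ε' : {ε : ℝ // 0 ≤ ε} => (μinf ε' : Measure E) (U r)ᶜ)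
        ⟨ε, hε⟩) hrsup
    have h2 : ((μinf ε : Measure E) (U r)ᶜ).toReal ≤ δ / (3 * C) := by
      have := (ENNReal.toReal_le_toReal (measure_ne_top _ _) ENNReal.ofReal_ne_top).mpr h1.le
      rwa [ENNReal.toReal_ofReal hηpos.le] at this
    have hkey := key_est (μ ε r : Measure E) (μinf ε : Measure E) (U r)
      ((hUopen r hrr₀).measurableSet) (hUagree r hrr₀ ε hε) f
    refine hkey.trans ?_
    have h3 : 2 * ‖f‖ * ((μinf ε : Measure E) (U r)ᶜ).toReal ≤ C * (δ / (3 * C)) := by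
      apply mul_le_mul (by simp [hC]) h2 ENNReal.toReal_nonneg hCpos.le
    refine h3.trans ?_
    rw [mul_div_assoc']
    rw [div_le_div_iff₀ (by positivity) (by norm_num)]
    ring_nf
    nlinarith [hCpos, hδ]
  -- middle term
  have hmid := (ProbabilityMeasure.tendsto_iff_forall_integral_tendsto.mp (hconv r hrr₀)) f
  rw [Metric.tendsto_nhds] at hmid
  have hmid' := hmid (δ / 3) (by positivity)
  filter_upwards [hmid', self_mem_nhdsWithin] with ε hεmid hεpos
  have hε0 : (0:ℝ) ≤ ε := le_of_lt hεpos
  have d1 := hbound ε hε0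
  have d3 := hbound 0 le_rfl
  rw [Real.dist_eq] at hεmid ⊢
  calc |(∫ x, f x ∂(μinf ε : Measure E)) - ∫ x, f x ∂(μinf 0 : Measure E)|
      ≤ |(∫ x, f x ∂(μ ε r : Measure E)) - ∫ x, f x ∂(μinf ε : Measure E)|
        + |(∫ x, f x ∂(μ ε r : Measure E)) - ∫ x, f x ∂(μ 0 r : Measure E)|
        + |(∫ x, f x ∂(μ 0 r : Measure E)) - ∫ x, f x ∂(μinf 0 : Measure E)| := by
        have := abs_sub_abs_le_abs_sub (∫ x, f x ∂(μinf ε : Measure E)) 0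
        rw [show (∫ x, f x ∂(μinf ε : Measure E)) - ∫ x, f x ∂(μinf 0 : Measure E)
          = -((∫ x, f x ∂(μ ε r : Measure E)) - ∫ x, f x ∂(μinf ε : Measure E))
            + ((∫ x, f x ∂(μ ε r : Measure E)) - ∫ x, f x ∂(μ 0 r : Measure E))
            + ((∫ x, f x ∂(μ 0 r : Measure E)) - ∫ x, f x ∂(μinf 0 : Measure E)) by ring]
        refine (abs_add_le _ _).trans (add_le_add ?_ le_rfl)
        refine (abs_add_le _ _).trans (add_le_add ?_ le_rfl)
        rw [abs_neg]
    _ < δ/3 + δ/3 + δ/3 := by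
        apply add_lt_add_of_lt_of_le (add_lt_add_of_le_of_lt d1 hεmid) d3
    _ = δ := by ring
end

section
/- Let λ > 0, α ∈ ℝ, and let (a_ε)_{ε>0} be continuous functions on [0,∞) with M := sup_{ε>0} ∫_0^∞ |a_ε(u)| du < ∞ and lim_{ε→0} ∫_y^z a_ε(u) du = α·[y = 0] for all 0 ≤ y < z. Set 𝔞_ε(x) := 2∫_0^x a_ε(y) dy. For each ε > 0 let j_ε : [0,∞) → ℝ be a continuous function satisfying j_ε(x) = 1 + 2λ ∫_0^x e^{−𝔞_ε(y)} ∫_0^y e^{𝔞_ε(z)} j_ε(z) dz dy for all x ≥ 0. Then, as ε → 0+, j_ε converges to the function x ↦ cosh(√(2λ)·x) uniformly on every compact subset of [0,∞). -/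
open MeasureTheory Set Filter Topology Real

noncomputable def trunc15 (b : ℝ → ℝ) : ℝ → ℝ := fun u => if 0 < u then b u else 0

noncomputable def prim15 (b : ℝ → ℝ) (x : ℝ) : ℝ := ∫ u in (0:ℝ)..x, trunc15 b u

lemma trunc15_integrable {b : ℝ → ℝ} (hb : IntegrableOn b (Ioi 0)) :
    Integrable (trunc15 b) := by
  have h : trunc15 b = (Ioi (0:ℝ)).indicator b := by
    funext u; simp [trunc15, Set.indicator, mem_Ioi]
  rw [h]
  exact hb.integrable_indicator measurableSet_Ioi

lemma prim15_continuous {b : ℝ → ℝ} (hb : IntegrableOn b (Ioi 0)) :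
    Continuous (prim15 b) :=
  intervalIntegral.continuous_primitive
    (fun _ _ => (trunc15_integrable hb).intervalIntegrable) 0

lemma prim15_eq {b : ℝ → ℝ} {x : ℝ} (hx : 0 ≤ x) :
    prim15 b x = ∫ u in (0:ℝ)..x, b u := by
  unfold prim15
  rw [intervalIntegral.integral_of_le hx, intervalIntegral.integral_of_le hx]
  exact setIntegral_congr_fun measurableSet_Ioc (fun u hu => if_pos hu.1)

lemma prim15_abs_le {b : ℝ → ℝ} {M : ℝ} (hb : IntegrableOn b (Ioi 0))
    (hbM : (∫ x in Ioi (0:ℝ), |b x|) ≤ M) {x : ℝ} (hx : 0 ≤ x) : |prim15 b x| ≤ M := by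
  rw [prim15_eq hx]
  have hbi : IntervalIntegrable b volume 0 x := by
    rw [intervalIntegrable_iff_integrableOn_Ioc_of_le hx]
    exact hb.mono_set Ioc_subset_Ioi_self
  have h1 : |∫ u in (0:ℝ)..x, b u| ≤ ∫ u in (0:ℝ)..x, |b u| :=
    intervalIntegral.abs_integral_le_integral_abs hx
  have h2 : (∫ u in (0:ℝ)..x, |b u|) = ∫ u in Ioc (0:ℝ) x, |b u| :=
    intervalIntegral.integral_of_le hx
  have h3 : (∫ u in Ioc (0:ℝ) x, |b u|) ≤ ∫ u in Ioi (0:ℝ), |b u| :=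
    setIntegral_mono_set hb.abs (ae_of_all _ fun u => abs_nonneg _)
      (HasSubset.Subset.eventuallyLE Ioc_subset_Ioi_self)
  linarith

lemma cosh15_integral {lam : ℝ} (hlam : 0 < lam) (x : ℝ) :
    Real.cosh (Real.sqrt (2*lam) * x) = 1 + 2*lam *
      ∫ y in (0:ℝ)..x, ∫ z in (0:ℝ)..y, Real.cosh (Real.sqrt (2*lam) * z) := by
  set k := Real.sqrt (2*lam) with hkdef
  have hk0 : 0 < k := Real.sqrt_pos.mpr (by linarith)
  have hk2 : k * k = 2 * lam := Real.mul_self_sqrt (by linarith)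
  have hlin : ∀ t : ℝ, HasDerivAt (fun s : ℝ => k * s) k t := fun t => by
    simpa using (hasDerivAt_id t).const_mul k
  have inner : ∀ y : ℝ, (∫ z in (0:ℝ)..y, Real.cosh (k*z)) = Real.sinh (k*y) / k := by
    intro y
    have hd : ∀ t ∈ uIcc (0:ℝ) y,
        HasDerivAt (fun s => Real.sinh (k*s) / k) (Real.cosh (k*t)) t := by
      intro t _
      have h2 := ((Real.hasDerivAt_sinh (k*t)).comp t (hlin t)).div_const k
      refine h2.congr_deriv ?_
      field_simp
    rw [intervalIntegral.integral_eq_sub_of_hasDerivAt hd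
      ((Real.continuous_cosh.comp (continuous_const.mul continuous_id)).intervalIntegrable _ _)]
    simp
  have outer : (∫ y in (0:ℝ)..x, Real.sinh (k*y) / k) = (Real.cosh (k*x) - 1) / (k*k) := by
    have hd : ∀ t ∈ uIcc (0:ℝ) x,
        HasDerivAt (fun s => Real.cosh (k*s) / (k*k)) (Real.sinh (k*t) / k) t := by
      intro t _
      have h2 := ((Real.hasDerivAt_cosh (k*t)).comp t (hlin t)).div_const (k*k)
      refine h2.congr_deriv ?_
      field_simp
    rw [intervalIntegral.integral_eq_sub_of_hasDerivAt hd
      (((Real.continuous_sinh.comp (continuous_const.mul continuous_id)).div_const k).intervalIntegrable _ _)]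
    simp [sub_div]
  calc Real.cosh (k * x) = 1 + 2*lam * ((Real.cosh (k*x) - 1) / (k*k)) := by
        rw [hk2]; field_simp; ring
    _ = 1 + 2*lam * ∫ y in (0:ℝ)..x, ∫ z in (0:ℝ)..y, Real.cosh (k * z) := by
        rw [← outer]
        congr 1
        congr 1
        exact (intervalIntegral.integral_congr (fun y _ => (inner y).symm))

noncomputable def Eterm15 (lam L : ℝ) (b : ℝ → ℝ) : ℝ :=
  ∫ y in (0:ℝ)..L, ∫ z in (0:ℝ)..y,
    |Real.exp (2*(prim15 b z - prim15 b y)) - 1| * Real.cosh (Real.sqrt (2*lam) * z)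

lemma key15 {lam M L : ℝ} (hlam : 0 < lam) (hL : 1 ≤ L) {b : ℝ → ℝ}
    (hbi : IntegrableOn b (Ioi 0)) (hbM : (∫ x in Ioi (0:ℝ), |b x|) ≤ M)
    {jf : ℝ → ℝ} (hjc : ContinuousOn jf (Ici 0))
    (hje : ∀ x ≥ (0:ℝ), jf x = 1 + 2 * lam * ∫ y in (0:ℝ)..x,
        Real.exp (-(2 * ∫ u in (0:ℝ)..y, b u)) *
          ∫ z in (0:ℝ)..y, Real.exp (2 * ∫ u in (0:ℝ)..z, b u) * jf z) :
    ∀ x ∈ Icc (0:ℝ) L, |jf x - Real.cosh (Real.sqrt (2*lam) * x)| ≤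
      2*lam * Eterm15 lam L b * Real.exp ((2*lam*Real.exp (4*M)*L + 1) * L) := by
  have hL0 : (0:ℝ) ≤ L := le_trans zero_le_one hL
  set k := Real.sqrt (2*lam) with hkdef
  set A := prim15 b with hAdef
  have hM0 : 0 ≤ M := le_trans (integral_nonneg fun x => abs_nonneg _) hbM
  have hA : Continuous A := prim15_continuous hbi
  have hAM : ∀ t : ℝ, 0 ≤ t → |A t| ≤ M := fun t ht => prim15_abs_le hbi hbM ht
  have hexpA : ∀ y z : ℝ, 0 ≤ y → 0 ≤ z →
      Real.exp (2*(A z - A y)) ≤ Real.exp (4*M) := by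
    intro y z hy hz
    apply Real.exp_le_exp.mpr
    have h1 := abs_le.mp (hAM y hy)
    have h2 := abs_le.mp (hAM z hz)
    linarith [h1.1, h1.2, h2.1, h2.2]
  -- the clamp
  set clamp : ℝ → ℝ := fun t => max (min t L) 0 with hclampdef
  have hclampc : Continuous clamp := (continuous_id.min continuous_const).max continuous_const
  have hclamp_mem : ∀ t, clamp t ∈ Icc (0:ℝ) L := fun t =>
    ⟨le_max_right _ _, max_le (min_le_right _ _) hL0⟩
  have hclamp_id : ∀ t ∈ Icc (0:ℝ) L, clamp t = t := by
    intro t ht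
    simp only [hclampdef]
    rw [min_eq_left ht.2, max_eq_left ht.1]
  set g : ℝ → ℝ := fun t => |jf (clamp t) - Real.cosh (k * clamp t)| with hgdef
  have hg : Continuous g := by
    apply continuous_abs.comp
    exact (hjc.comp_continuous hclampc fun t => (hclamp_mem t).1).sub
      (Real.continuous_cosh.comp (continuous_const.mul hclampc))
  have hgnonneg : ∀ t, 0 ≤ g t := fun t => abs_nonneg _
  have hgu : ∀ t ∈ Icc (0:ℝ) L, g t = |jf t - Real.cosh (k * t)| := by
    intro t ht; simp only [hgdef, hclamp_id t ht]
  set φ : ℝ → ℝ := fun t => ∫ s in (0:ℝ)..t, g s with hφdef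
  have hφd : ∀ t : ℝ, HasDerivAt φ (g t) t := fun t =>
    intervalIntegral.integral_hasDerivAt_right (hg.intervalIntegrable _ _)
      (hg.aestronglyMeasurable.stronglyMeasurableAtFilter) hg.continuousAt
  have hφc : Continuous φ := intervalIntegral.continuous_primitive
    (fun _ _ => hg.intervalIntegrable _ _) 0
  have hφnonneg : ∀ t, 0 ≤ t → 0 ≤ φ t := fun t ht =>
    intervalIntegral.integral_nonneg ht fun u _ => hgnonneg u
  set G : ℝ → ℝ := fun y => ∫ z in (0:ℝ)..y,
      |Real.exp (2*(A z - A y)) - 1| * Real.cosh (k * z) with hGdef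
  have hGcont : Continuous G := by
    apply intervalIntegral.continuous_parametric_intervalIntegral_of_continuous
      (f := fun y z => |Real.exp (2*(A z - A y)) - 1| * Real.cosh (k * z)) _ continuous_id
    apply Continuous.mul
    · apply continuous_abs.comp
      apply Continuous.sub _ continuous_const
      exact Real.continuous_exp.comp
        (continuous_const.mul ((hA.comp continuous_snd).sub (hA.comp continuous_fst)))
    · exact Real.continuous_cosh.comp (continuous_const.mul continuous_snd)
  have hGnonneg : ∀ y, 0 ≤ y → 0 ≤ G y := fun y hy =>
    intervalIntegral.integral_nonneg hy fun u _ =>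
      mul_nonneg (abs_nonneg _) (Real.cosh_pos _).le
  have hEt : Eterm15 lam L b = ∫ y in (0:ℝ)..L, G y := rfl
  set E := 2*lam * Eterm15 lam L b with hEdef
  set K := 2*lam*Real.exp (4*M)*L + 1 with hKdef
  have hK0 : 0 < K := by
    have : 0 < 2*lam*Real.exp (4*M)*L := by positivity
    linarith
  have hE0 : 0 ≤ E := by
    have : 0 ≤ Eterm15 lam L b := by
      rw [hEt]
      exact intervalIntegral.integral_nonneg hL0 fun y hy => hGnonneg y hy.1
    positivity
  -- continuity of the two inner-integral functions
  have hq : ContinuousOn (fun z => Real.exp (2 * A z) * jf z) (Icc 0 L) :=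
    ((Real.continuous_exp.comp (continuous_const.mul hA)).continuousOn).mul
      (hjc.mono (Icc_subset_Ici_self))
  have hFin : ContinuousOn (fun y => ∫ z in (0:ℝ)..y, Real.exp (2 * A z) * jf z) (Icc 0 L) := by
    have := intervalIntegral.continuousOn_primitive_interval
      (a := (0:ℝ)) (b := L) (μ := volume)
      (f := fun z => Real.exp (2 * A z) * jf z) ?_
    · rwa [uIcc_of_le hL0] at this
    · rw [uIcc_of_le hL0]; exact hq.integrableOn_Icc
  set F : ℝ → ℝ := fun y => Real.exp (-(2 * A y)) * ∫ z in (0:ℝ)..y,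
      Real.exp (2 * A z) * jf z with hFdef
  set C : ℝ → ℝ := fun y => ∫ z in (0:ℝ)..y, Real.cosh (k * z) with hCdef
  have hFc : ContinuousOn F (Icc 0 L) :=
    ((Real.continuous_exp.comp ((continuous_const.mul hA).neg)).continuousOn).mul hFin
  have hCc : Continuous C := intervalIntegral.continuous_primitive
    (fun _ _ => (Real.continuous_cosh.comp (continuous_const.mul continuous_id)).intervalIntegrable _ _) 0
  -- central estimate
  have central : ∀ x ∈ Icc (0:ℝ) L, |jf x - Real.cosh (k * x)| ≤ K * φ x + E := by
    rintro x ⟨hx0, hxL⟩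
    have hIccx : Icc (0:ℝ) x ⊆ Icc 0 L := Icc_subset_Icc_right hxL
    -- rewrite the equation with A
    have hAeq : ∀ t : ℝ, 0 ≤ t → A t = ∫ u in (0:ℝ)..t, b u := fun t ht => prim15_eq ht
    have hje' : jf x = 1 + 2 * lam * ∫ y in (0:ℝ)..x, F y := by
      rw [hje x hx0]
      have heq : EqOn (fun y => Real.exp (-(2 * ∫ u in (0:ℝ)..y, b u)) *
          ∫ z in (0:ℝ)..y, Real.exp (2 * ∫ u in (0:ℝ)..z, b u) * jf z) F (uIcc 0 x) := by
        intro y hy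
        rw [uIcc_of_le hx0] at hy
        have hy0 : 0 ≤ y := hy.1
        have hzeq : EqOn (fun z => Real.exp (2 * ∫ u in (0:ℝ)..z, b u) * jf z)
            (fun z => Real.exp (2 * A z) * jf z) (uIcc 0 y) := by
          intro z hz
          rw [uIcc_of_le hy0] at hz
          simp only
          rw [hAeq z hz.1]
        simp only [hFdef]
        rw [intervalIntegral.integral_congr hzeq, hAeq y hy0]
      rw [intervalIntegral.integral_congr heq]
    have hcosh : Real.cosh (k * x) = 1 + 2 * lam * ∫ y in (0:ℝ)..x, C y :=
      cosh15_integral hlam x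
    have hFi : IntervalIntegrable F volume 0 x :=
      (hFc.mono (by rw [uIcc_of_le hx0]; exact hIccx)).intervalIntegrable
    have hCi : IntervalIntegrable C volume 0 x := hCc.intervalIntegrable _ _
    have hsub : jf x - Real.cosh (k * x) = 2 * lam * ∫ y in (0:ℝ)..x, (F y - C y) := by
      rw [hje', hcosh, intervalIntegral.integral_sub hFi hCi]; ring
    -- pointwise bound on F y - C y
    have hDy : ∀ y ∈ Icc (0:ℝ) x, |F y - C y| ≤ Real.exp (4*M) * φ x + G y := by
      rintro y ⟨hy0, hyx⟩
      have hyL : y ≤ L := le_trans hyx hxL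
      have hIccy : Icc (0:ℝ) y ⊆ Icc 0 L := Icc_subset_Icc_right hyL
      have hqi : IntervalIntegrable (fun z => Real.exp (-(2 * A y)) * (Real.exp (2 * A z) * jf z))
          volume 0 y := by
        apply ContinuousOn.intervalIntegrable
        rw [uIcc_of_le hy0]
        exact continuousOn_const.mul (hq.mono hIccy)
      have hci : IntervalIntegrable (fun z => Real.cosh (k * z)) volume 0 y :=
        (Real.continuous_cosh.comp (continuous_const.mul continuous_id)).intervalIntegrable _ _
      have hFyd : F y - C y = ∫ z in (0:ℝ)..y,
          (Real.exp (-(2 * A y)) * (Real.exp (2 * A z) * jf z) - Real.cosh (k * z)) := by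
        rw [intervalIntegral.integral_sub hqi hci]
        simp only [hFdef, hCdef]
        rw [intervalIntegral.integral_const_mul]
      rw [hFyd]
      calc |∫ z in (0:ℝ)..y, (Real.exp (-(2 * A y)) * (Real.exp (2 * A z) * jf z)
              - Real.cosh (k * z))|
          ≤ ∫ z in (0:ℝ)..y, |Real.exp (-(2 * A y)) * (Real.exp (2 * A z) * jf z)
              - Real.cosh (k * z)| := intervalIntegral.abs_integral_le_integral_abs hy0
        _ ≤ ∫ z in (0:ℝ)..y, (Real.exp (4*M) * g z
              + |Real.exp (2*(A z - A y)) - 1| * Real.cosh (k * z)) := by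
            apply intervalIntegral.integral_mono_on hy0
            · exact (hqi.sub hci).abs
            · apply IntervalIntegrable.add
              · exact (hg.intervalIntegrable _ _).const_mul _
              · apply ContinuousOn.intervalIntegrable
                apply Continuous.continuousOn
                apply Continuous.mul
                · exact continuous_abs.comp ((Real.continuous_exp.comp
                    (continuous_const.mul (hA.sub continuous_const))).sub continuous_const)
                · exact Real.continuous_cosh.comp (continuous_const.mul continuous_id)
            · rintro z ⟨hz0, hzy⟩
              have hzL : z ≤ L := le_trans hzy hyL
              have hid : Real.exp (-(2 * A y)) * (Real.exp (2 * A z) * jf z)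
                  - Real.cosh (k * z)
                  = Real.exp (2*(A z - A y)) * (jf z - Real.cosh (k * z))
                    + (Real.exp (2*(A z - A y)) - 1) * Real.cosh (k * z) := by
                rw [show (2*(A z - A y)) = -(2 * A y) + 2 * A z by ring, Real.exp_add]
                ring
              rw [hid]
              have h1 : |Real.exp (2*(A z - A y)) * (jf z - Real.cosh (k * z))|
                  ≤ Real.exp (4*M) * g z := by
                rw [abs_mul, abs_of_nonneg (Real.exp_pos _).le,
                  ← hgu z ⟨hz0, hzL⟩]
                exact mul_le_mul_of_nonneg_right (hexpA y z hy0 hz0) (hgnonneg z)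
              have h2 : |(Real.exp (2*(A z - A y)) - 1) * Real.cosh (k * z)|
                  = |Real.exp (2*(A z - A y)) - 1| * Real.cosh (k * z) := by
                rw [abs_mul, abs_of_nonneg (Real.cosh_pos _).le]
              calc |Real.exp (2*(A z - A y)) * (jf z - Real.cosh (k * z))
                    + (Real.exp (2*(A z - A y)) - 1) * Real.cosh (k * z)|
                  ≤ |Real.exp (2*(A z - A y)) * (jf z - Real.cosh (k * z))|
                    + |(Real.exp (2*(A z - A y)) - 1) * Real.cosh (k * z)| := abs_add_le _ _
                _ ≤ Real.exp (4*M) * g z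
                    + |Real.exp (2*(A z - A y)) - 1| * Real.cosh (k * z) := by
                    rw [h2]; exact add_le_add_left h1 _
        _ = Real.exp (4*M) * (∫ z in (0:ℝ)..y, g z) + G y := by
            rw [intervalIntegral.integral_add ((hg.intervalIntegrable _ _).const_mul _)
              (by
                apply ContinuousOn.intervalIntegrable
                apply Continuous.continuousOn
                apply Continuous.mul
                · exact continuous_abs.comp ((Real.continuous_exp.comp
                    (continuous_const.mul (hA.sub continuous_const))).sub continuous_const)
                · exact Real.continuous_cosh.comp (continuous_const.mul continuous_id)),
              intervalIntegral.integral_const_mul]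
        _ ≤ Real.exp (4*M) * φ x + G y := by
            apply add_le_add_left
            apply mul_le_mul_of_nonneg_left _ (Real.exp_pos _).le
            exact intervalIntegral.integral_mono_interval le_rfl hy0 hyx
              (ae_of_all _ fun u => hgnonneg u) (hg.intervalIntegrable _ _)
    -- assemble
    have habs : |∫ y in (0:ℝ)..x, (F y - C y)| ≤ Real.exp (4*M) * φ x * x + ∫ y in (0:ℝ)..x, G y := by
      calc |∫ y in (0:ℝ)..x, (F y - C y)| ≤ ∫ y in (0:ℝ)..x, |F y - C y| :=
            intervalIntegral.abs_integral_le_integral_abs hx0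
        _ ≤ ∫ y in (0:ℝ)..x, (Real.exp (4*M) * φ x + G y) := by
            apply intervalIntegral.integral_mono_on hx0
            · exact (hFi.sub hCi).abs
            · exact (intervalIntegrable_const).add (hGcont.intervalIntegrable _ _)
            · exact hDy
        _ = Real.exp (4*M) * φ x * x + ∫ y in (0:ℝ)..x, G y := by
            rw [intervalIntegral.integral_add intervalIntegrable_const
              (hGcont.intervalIntegrable _ _), intervalIntegral.integral_const]
            simp [smul_eq_mul]; ring
    have hGint : (∫ y in (0:ℝ)..x, G y) ≤ Eterm15 lam L b := by
      rw [hEt]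
      exact intervalIntegral.integral_mono_interval le_rfl hx0 hxL
        ((ae_restrict_iff' measurableSet_Ioc).mpr
          (ae_of_all _ fun u hu => hGnonneg u hu.1.le)) (hGcont.intervalIntegrable _ _)
    have hφx : 0 ≤ φ x := hφnonneg x hx0
    have hxle : Real.exp (4*M) * φ x * x ≤ Real.exp (4*M) * φ x * L := by
      apply mul_le_mul_of_nonneg_left hxL
      positivity
    calc |jf x - Real.cosh (k * x)| = 2 * lam * |∫ y in (0:ℝ)..x, (F y - C y)| := by
          rw [hsub, abs_mul, abs_of_nonneg (by linarith : (0:ℝ) ≤ 2 * lam)]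
      _ ≤ 2 * lam * (Real.exp (4*M) * φ x * L + Eterm15 lam L b) := by
          apply mul_le_mul_of_nonneg_left _ (by linarith : (0:ℝ) ≤ 2 * lam)
          linarith [habs, hGint, hxle]
      _ = (2*lam*Real.exp (4*M)*L) * φ x + E := by rw [hEdef]; ring
      _ ≤ K * φ x + E := by
          apply add_le_add_left
          apply mul_le_mul_of_nonneg_right _ hφx
          rw [hKdef]; linarith
  -- Gronwall
  have grb := norm_le_gronwallBound_of_norm_deriv_right_le (f := φ) (f' := g)
    (δ := 0) (K := K) (ε := E) (a := 0) (b := L) hφc.continuousOn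
    (fun t _ => (hφd t).hasDerivWithinAt)
    (by simp only [hφdef]; rw [intervalIntegral.integral_same]; simp)
    (by
      intro t ht
      have htI : t ∈ Icc (0:ℝ) L := ⟨ht.1, ht.2.le⟩
      rw [Real.norm_eq_abs, Real.norm_eq_abs, abs_of_nonneg (hgnonneg t),
        abs_of_nonneg (hφnonneg t ht.1), hgu t htI]
      exact central t htI)
  -- conclude
  intro x hx
  have hb := grb x hx
  rw [Real.norm_eq_abs, abs_of_nonneg (hφnonneg x hx.1), sub_zero,
    gronwallBound_of_K_ne_0 (ne_of_gt hK0)] at hb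
  have hEK : K * (E / K * (Real.exp (K * x) - 1)) = E * (Real.exp (K * x) - 1) := by
    field_simp
  have h1 : K * φ x ≤ E * (Real.exp (K * x) - 1) := by
    have := mul_le_mul_of_nonneg_left hb hK0.le
    rw [mul_add, hEK] at this
    simpa using this
  have hexple : Real.exp (K * x) ≤ Real.exp (K * L) :=
    Real.exp_le_exp.mpr (mul_le_mul_of_nonneg_left hx.2 hK0.le)
  have h2 : E * Real.exp (K * x) ≤ E * Real.exp (K * L) :=
    mul_le_mul_of_nonneg_left hexple hE0
  have h3 := central x hx
  calc |jf x - Real.cosh (k * x)| ≤ K * φ x + E := h3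
    _ ≤ E * (Real.exp (K * x) - 1) + E := add_le_add_left h1 _
    _ = E * Real.exp (K * x) := by ring
    _ ≤ E * Real.exp (K * L) := h2

lemma Eterm15_tendsto {lam L M α : ℝ} (hlam : 0 < lam) (hL : 1 ≤ L) {a : ℝ → ℝ → ℝ}
    (haint : ∀ ε > (0:ℝ), IntegrableOn (a ε) (Ioi 0))
    (haM : ∀ ε > (0:ℝ), (∫ x in Ioi (0:ℝ), |a ε x|) ≤ M)
    (hlim : ∀ y z : ℝ, 0 ≤ y → y < z →
      Tendsto (fun ε => ∫ u in y..z, a ε u) (𝓝[>] (0:ℝ))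
        (𝓝 (α * (if y = 0 then 1 else 0)))) :
    Tendsto (fun ε => Eterm15 lam L (a ε)) (𝓝[>] (0:ℝ)) (𝓝 0) := by
  have hL0 : (0:ℝ) ≤ L := le_trans zero_le_one hL
  set k := Real.sqrt (2*lam) with hkdef
  have hk0 : 0 ≤ k := Real.sqrt_nonneg _
  have hM0 : 0 ≤ M := le_trans (integral_nonneg fun x => abs_nonneg _) (haM 1 one_pos)
  set C0 := (Real.exp (4*M) + 1) * Real.cosh (k*L) with hC0def
  have hC00 : 0 ≤ C0 := by positivity
  -- pointwise bound
  have hptb : ∀ ε > (0:ℝ), ∀ y ∈ Icc (0:ℝ) L, ∀ z ∈ Icc (0:ℝ) L,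
      |Real.exp (2*(prim15 (a ε) z - prim15 (a ε) y)) - 1| * Real.cosh (k * z) ≤ C0 := by
    intro ε hε y hy z hz
    have h1 := abs_le.mp (prim15_abs_le (haint ε hε) (haM ε hε) hy.1)
    have h2 := abs_le.mp (prim15_abs_le (haint ε hε) (haM ε hε) hz.1)
    have hexp : Real.exp (2*(prim15 (a ε) z - prim15 (a ε) y)) ≤ Real.exp (4*M) :=
      Real.exp_le_exp.mpr (by linarith [h1.1, h1.2, h2.1, h2.2])
    have habs : |Real.exp (2*(prim15 (a ε) z - prim15 (a ε) y)) - 1| ≤ Real.exp (4*M) + 1 := by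
      rw [abs_sub_le_iff]
      constructor
      · linarith
      · have := (Real.exp_pos (2*(prim15 (a ε) z - prim15 (a ε) y))).le
        linarith [Real.exp_nonneg (4*M)]
    have hcosh : Real.cosh (k * z) ≤ Real.cosh (k * L) := by
      rw [Real.cosh_le_cosh]
      rw [abs_of_nonneg (mul_nonneg hk0 hz.1), abs_of_nonneg (mul_nonneg hk0 hL0)]
      exact mul_le_mul_of_nonneg_left hz.2 hk0
    calc |Real.exp (2*(prim15 (a ε) z - prim15 (a ε) y)) - 1| * Real.cosh (k * z)
        ≤ (Real.exp (4*M) + 1) * Real.cosh (k * L) := by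
          apply mul_le_mul habs hcosh (Real.cosh_pos _).le (by positivity)
      _ = C0 := rfl
  -- continuity of inner integrand in z
  have hcontz : ∀ ε > (0:ℝ), ∀ y : ℝ, Continuous (fun z =>
      |Real.exp (2*(prim15 (a ε) z - prim15 (a ε) y)) - 1| * Real.cosh (k * z)) := by
    intro ε hε y
    apply Continuous.mul
    · exact continuous_abs.comp ((Real.continuous_exp.comp
        (continuous_const.mul ((prim15_continuous (haint ε hε)).sub continuous_const))).sub
        continuous_const)
    · exact Real.continuous_cosh.comp (continuous_const.mul continuous_id)
  have hGcont : ∀ ε > (0:ℝ), Continuous (fun y => ∫ z in (0:ℝ)..y,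
      |Real.exp (2*(prim15 (a ε) z - prim15 (a ε) y)) - 1| * Real.cosh (k * z)) := by
    intro ε hε
    apply intervalIntegral.continuous_parametric_intervalIntegral_of_continuous
      (f := fun y z => |Real.exp (2*(prim15 (a ε) z - prim15 (a ε) y)) - 1| * Real.cosh (k * z))
      _ continuous_id
    apply Continuous.mul
    · apply continuous_abs.comp
      apply Continuous.sub _ continuous_const
      exact Real.continuous_exp.comp (continuous_const.mul
        (((prim15_continuous (haint ε hε)).comp continuous_snd).sub
         ((prim15_continuous (haint ε hε)).comp continuous_fst)))
    · exact Real.continuous_cosh.comp (continuous_const.mul continuous_snd)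
  have haii : ∀ ε > (0:ℝ), ∀ t : ℝ, 0 ≤ t → IntervalIntegrable (a ε) volume 0 t := by
    intro ε hε t ht
    rw [intervalIntegrable_iff_integrableOn_Ioc_of_le ht]
    exact (haint ε hε).mono_set Ioc_subset_Ioi_self
  -- inner tendsto
  have hinner : ∀ y ∈ Ioc (0:ℝ) L, Tendsto (fun ε => ∫ z in (0:ℝ)..y,
      |Real.exp (2*(prim15 (a ε) z - prim15 (a ε) y)) - 1| * Real.cosh (k * z))
      (𝓝[>] (0:ℝ)) (𝓝 0) := by
    rintro y ⟨hy0, hyL⟩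
    have hrw : (fun ε => ∫ z in (0:ℝ)..y,
        |Real.exp (2*(prim15 (a ε) z - prim15 (a ε) y)) - 1| * Real.cosh (k * z))
        = fun ε => ∫ z in Ioc (0:ℝ) y,
        |Real.exp (2*(prim15 (a ε) z - prim15 (a ε) y)) - 1| * Real.cosh (k * z) :=
      funext fun ε => intervalIntegral.integral_of_le hy0.le
    have hdct := tendsto_integral_filter_of_dominated_convergence
        (μ := volume.restrict (Ioc (0:ℝ) y)) (l := 𝓝[>] (0:ℝ))
        (F := fun ε z => |Real.exp (2*(prim15 (a ε) z - prim15 (a ε) y)) - 1| * Real.cosh (k * z))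
        (f := fun _ => (0:ℝ)) (bound := fun _ => C0) ?_ ?_ ?_ ?_
    · rw [hrw]; simpa using hdct
    · filter_upwards [self_mem_nhdsWithin] with ε hε
      exact ((hcontz ε hε y).aestronglyMeasurable).restrict
    · filter_upwards [self_mem_nhdsWithin] with ε hε
      refine (ae_restrict_iff' measurableSet_Ioc).mpr (ae_of_all _ fun z hz => ?_)
      rw [Real.norm_eq_abs, abs_of_nonneg (mul_nonneg (abs_nonneg _) (Real.cosh_pos _).le)]
      exact hptb ε hε y ⟨hy0.le, hyL⟩ z ⟨hz.1.le, hz.2.trans hyL⟩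
    · exact integrableOn_const measure_Ioc_lt_top.ne
    · have hae : ∀ᵐ z ∂(volume.restrict (Ioc (0:ℝ) y)), z ∈ Ioo (0:ℝ) y := by
        have h1 : ∀ᵐ z ∂(volume.restrict (Ioc (0:ℝ) y)), z ∈ Ioc (0:ℝ) y :=
          ae_restrict_mem measurableSet_Ioc
        have h2 : ∀ᵐ (z:ℝ), z ≠ y := by
          rw [ae_iff]
          simp only [not_not, setOf_eq_eq_singleton]
          exact Real.volume_singleton
        filter_upwards [h1, ae_restrict_of_ae h2] with z hz hne
        exact ⟨hz.1, lt_of_le_of_ne hz.2 hne⟩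
      filter_upwards [hae] with z hz
      -- the true limit of the drift integral
      have hl := hlim z y hz.1.le hz.2
      rw [if_neg (ne_of_gt hz.1), mul_zero] at hl
      have hcont : Continuous (fun t : ℝ => |Real.exp (-(2*t)) - 1| * Real.cosh (k * z)) := by
        apply Continuous.mul _ continuous_const
        exact continuous_abs.comp ((Real.continuous_exp.comp
          (continuous_const.mul continuous_id).neg).sub continuous_const)
      have hcomp := (hcont.continuousAt (x := 0)).tendsto.comp hl
      have hval : |Real.exp (-(2*(0:ℝ))) - 1| * Real.cosh (k * z) = 0 := by norm_num
      rw [hval] at hcomp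
      apply hcomp.congr'
      filter_upwards [self_mem_nhdsWithin] with ε hε
      have e1 : prim15 (a ε) z = ∫ u in (0:ℝ)..z, a ε u := prim15_eq hz.1.le
      have e2 : prim15 (a ε) y = ∫ u in (0:ℝ)..y, a ε u := prim15_eq hy0.le
      have e3 : (∫ u in (0:ℝ)..z, a ε u) - (∫ u in (0:ℝ)..y, a ε u)
          = -(∫ u in z..y, a ε u) := by
        rw [intervalIntegral.integral_interval_sub_left (haii ε hε z hz.1.le)
          (haii ε hε y hy0.le)]
        rw [intervalIntegral.integral_symm]
      show |Real.exp (-(2 * ∫ u in z..y, a ε u)) - 1| * Real.cosh (k * z)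
          = |Real.exp (2 * (prim15 (a ε) z - prim15 (a ε) y)) - 1| * Real.cosh (k * z)
      rw [e1, e2, e3, mul_neg]
  -- outer DCT
  have hrw : (fun ε => Eterm15 lam L (a ε)) = fun ε => ∫ y in Ioc (0:ℝ) L,
      ∫ z in (0:ℝ)..y,
        |Real.exp (2*(prim15 (a ε) z - prim15 (a ε) y)) - 1| * Real.cosh (k * z) := by
    funext ε
    exact intervalIntegral.integral_of_le hL0
  have hdct := tendsto_integral_filter_of_dominated_convergence
      (μ := volume.restrict (Ioc (0:ℝ) L)) (l := 𝓝[>] (0:ℝ))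
      (F := fun ε y => ∫ z in (0:ℝ)..y,
        |Real.exp (2*(prim15 (a ε) z - prim15 (a ε) y)) - 1| * Real.cosh (k * z))
      (f := fun _ => (0:ℝ)) (bound := fun _ => C0 * L) ?_ ?_ ?_ ?_
  · rw [hrw]; simpa using hdct
  · filter_upwards [self_mem_nhdsWithin] with ε hε
    exact ((hGcont ε hε).aestronglyMeasurable).restrict
  · filter_upwards [self_mem_nhdsWithin] with ε hε
    refine (ae_restrict_iff' measurableSet_Ioc).mpr (ae_of_all _ fun y hy => ?_)
    have hb : ∀ z ∈ Set.uIoc (0:ℝ) y, ‖|Real.exp (2*(prim15 (a ε) z - prim15 (a ε) y)) - 1|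
        * Real.cosh (k * z)‖ ≤ C0 := by
      intro z hz
      rw [Set.uIoc_of_le hy.1.le] at hz
      rw [Real.norm_eq_abs, abs_of_nonneg (mul_nonneg (abs_nonneg _) (Real.cosh_pos _).le)]
      exact hptb ε hε y ⟨hy.1.le, hy.2⟩ z ⟨hz.1.le, hz.2.trans hy.2⟩
    have := intervalIntegral.norm_integral_le_of_norm_le_const hb
    rw [Real.norm_eq_abs] at this ⊢
    calc |∫ z in (0:ℝ)..y, |Real.exp (2*(prim15 (a ε) z - prim15 (a ε) y)) - 1|
          * Real.cosh (k * z)| ≤ C0 * |y - 0| := this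
      _ ≤ C0 * L := by
          rw [sub_zero, abs_of_nonneg hy.1.le]
          exact mul_le_mul_of_nonneg_left hy.2 hC00
  · exact integrableOn_const measure_Ioc_lt_top.ne
  · filter_upwards [ae_restrict_mem measurableSet_Ioc] with y hy
    exact hinner y hy


/-- the solutions `j_ε` of the integral equation
`j_ε(x) = 1 + 2λ∫_0^x e^{−𝔞_ε(y)}∫_0^y e^{𝔞_ε(z)} j_ε(z) dz dy`
(equivalently, of `(1/2)j'' + a_ε j' = λj`, `j(0)=1`, `j'(0)=0`) converge, as `ε → 0+`,
to `x ↦ cosh(√(2λ)x)` uniformly on every compact subset of `[0,∞)`. -/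
theorem stmt15 (lam α M : ℝ) (hlam : 0 < lam)
    (a : ℝ → ℝ → ℝ)
    (hacont : ∀ ε > (0:ℝ), ContinuousOn (a ε) (Ici 0))
    (haint : ∀ ε > (0:ℝ), IntegrableOn (a ε) (Ioi 0))
    (haM : ∀ ε > (0:ℝ), ∫ x in Ioi (0:ℝ), |a ε x| ≤ M)
    (hlim : ∀ y z : ℝ, 0 ≤ y → y < z →
      Tendsto (fun ε => ∫ u in y..z, a ε u) (𝓝[>] (0:ℝ))
        (𝓝 (α * (if y = 0 then 1 else 0))))
    (j : ℝ → ℝ → ℝ)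
    (hjcont : ∀ ε > (0:ℝ), ContinuousOn (j ε) (Ici 0))
    (hjeq : ∀ ε > (0:ℝ), ∀ x ≥ (0:ℝ),
      j ε x = 1 + 2 * lam * ∫ y in (0:ℝ)..x,
        Real.exp (-(2 * ∫ u in (0:ℝ)..y, a ε u)) *
          ∫ z in (0:ℝ)..y, Real.exp (2 * ∫ u in (0:ℝ)..z, a ε u) * j ε z) :
    ∀ Kc : Set ℝ, Kc ⊆ Ici 0 → IsCompact Kc →
      TendstoUniformlyOn (fun ε x => j ε x)
        (fun x => Real.cosh (Real.sqrt (2 * lam) * x)) (𝓝[>] (0:ℝ)) Kc := by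
  intro Kc hKsub hKcomp
  obtain ⟨B, hB⟩ := hKcomp.bddAbove
  set L := max B 1 with hLdef
  have hL : (1:ℝ) ≤ L := le_max_right _ _
  have hKL : Kc ⊆ Icc 0 L := fun x hx => ⟨hKsub hx, le_trans (hB hx) (le_max_left _ _)⟩
  set K := 2*lam*Real.exp (4*M)*L + 1 with hKdef
  have htend : Tendsto (fun ε => 2*lam * Eterm15 lam L (a ε) * Real.exp (K*L))
      (𝓝[>] (0:ℝ)) (𝓝 0) := by
    have h := Eterm15_tendsto (α := α) hlam hL haint haM hlim
    have h2 := (h.const_mul (2*lam)).mul_const (Real.exp (K*L))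
    simpa using h2
  rw [Metric.tendstoUniformlyOn_iff]
  intro δ hδ
  filter_upwards [htend (Iio_mem_nhds hδ), self_mem_nhdsWithin] with ε hεδ hε
  intro x hx
  have hxI : x ∈ Icc 0 L := hKL hx
  have hkey := key15 hlam hL (haint ε hε) (haM ε hε) (hjcont ε hε) (hjeq ε hε) x hxI
  rw [Real.dist_eq]
  calc |Real.cosh (Real.sqrt (2*lam) * x) - j ε x|
      = |j ε x - Real.cosh (Real.sqrt (2*lam) * x)| := abs_sub_comm _ _
    _ ≤ 2*lam * Eterm15 lam L (a ε) * Real.exp ((2*lam*Real.exp (4*M)*L + 1) * L) := hkey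
    _ < δ := hεδ
end

section
/- Let λ > 0, α ∈ ℝ, and let (a_ε)_{ε>0} be continuous functions on [0,∞) with M := sup_{ε>0} ∫_0^∞ |a_ε(u)| du < ∞ and lim_{ε→0} ∫_y^z a_ε(u) du = α·[y = 0] for all 0 ≤ y < z; set 𝔞_ε(x) := 2∫_0^x a_ε and ω₁ := √(2λ e^{−2M}). For each ε > 0 let j_ε : [0,∞) → ℝ be continuous with j_ε(x) = 1 + 2λ ∫_0^x e^{−𝔞_ε(y)} ∫_0^y e^{𝔞_ε(z)} j_ε(z) dz dy and j_ε(x) ≥ cosh(ω₁ x) for all x ≥ 0, and define k_ε(x) := j_ε(x) ∫_0^x e^{−𝔞_ε(y)} / j_ε(y)² dy. Then, as ε → 0+, k_ε converges to the function x ↦ e^{−2α} sinh(√(2λ)·x)/√(2λ) uniformly on every compact subset of [0,∞). -/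
open MeasureTheory Set Filter Topology Real intervalIntegral

lemma cont_primitive {f : ℝ → ℝ} {R : ℝ} (hf : ContinuousOn f (Icc 0 R)) :
    ContinuousOn (fun y => ∫ z in (0:ℝ)..y, f z) (Icc 0 R) :=
  (continuousOn_primitive (μ := volume) (hf.integrableOn_compact isCompact_Icc)).congr
    fun y hy => intervalIntegral.integral_of_le hy.1

lemma ii_of_contOn {f : ℝ → ℝ} {R y : ℝ} (hf : ContinuousOn f (Icc 0 R)) (hy : y ∈ Icc 0 R) :
    IntervalIntegrable f volume 0 y :=
  (hf.mono (by rw [uIcc_of_le hy.1]; exact Icc_subset_Icc le_rfl hy.2)).intervalIntegrable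

lemma my_gronwall {u : ℝ → ℝ} {R E K : ℝ} (hE : 0 ≤ E) (hK : 0 ≤ K)
    (hu : ContinuousOn u (Icc 0 R)) (hunn : ∀ x ∈ Icc 0 R, 0 ≤ u x)
    (hle : ∀ x ∈ Icc 0 R, u x ≤ E + K * ∫ t in (0:ℝ)..x, u t) :
    ∀ x ∈ Icc 0 R, u x ≤ E * Real.exp (K * R) := by
  intro x hx
  set G : ℝ → ℝ := fun x => E + K * ∫ t in (0:ℝ)..x, u t with hG
  have hint : ∀ y ∈ Icc 0 R, IntervalIntegrable u volume 0 y := fun y hy => ii_of_contOn hu hy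
  have hGcont : ContinuousOn G (Icc 0 R) :=
    continuousOn_const.add ((cont_primitive hu).const_smul K)
  have hGnn : ∀ y ∈ Icc 0 R, 0 ≤ G y := by
    intro y hy
    have : 0 ≤ ∫ t in (0:ℝ)..y, u t := by
      apply intervalIntegral.integral_nonneg hy.1
      intro t ht; exact hunn t ⟨ht.1, ht.2.trans hy.2⟩
    positivity
  have hGderiv : ∀ y ∈ Ico 0 R, HasDerivWithinAt G (K * u y) (Ici y) y := by
    intro y hy
    apply HasDerivWithinAt.const_add
    apply HasDerivWithinAt.const_mul
    have hmem : Icc (0:ℝ) R ∈ 𝓝[>] y := by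
      apply mem_nhdsWithin.mpr
      exact ⟨Iio R, isOpen_Iio, hy.2, fun z hz => ⟨hy.1.trans hz.2.le, hz.1.le⟩⟩
    apply intervalIntegral.integral_hasDerivWithinAt_right (hint y ⟨hy.1, hy.2.le⟩)
      ⟨Icc 0 R, hmem, hu.aestronglyMeasurable measurableSet_Icc⟩
    exact (hu y ⟨hy.1, hy.2.le⟩).mono_of_mem_nhdsWithin hmem
  have key := norm_le_gronwallBound_of_norm_deriv_right_le (f := G) (f' := fun y => K * u y)
    (δ := E) (K := K) (ε := 0) (a := 0) (b := R) hGcont hGderiv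
    (by simp [hG, abs_of_nonneg hE])
    (by
      intro y hy
      have h1 : u y ≤ G y := hle y ⟨hy.1, hy.2.le⟩
      have h2 : 0 ≤ u y := hunn y ⟨hy.1, hy.2.le⟩
      rw [Real.norm_eq_abs, Real.norm_eq_abs, abs_of_nonneg (by positivity),
        abs_of_nonneg (hGnn y ⟨hy.1, hy.2.le⟩), add_zero]
      exact mul_le_mul_of_nonneg_left h1 hK)
    x hx
  rw [Real.norm_eq_abs, abs_of_nonneg (hGnn x hx), gronwallBound_ε0, sub_zero] at key
  calc u x ≤ G x := hle x hx
    _ ≤ E * Real.exp (K * x) := key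
    _ ≤ E * Real.exp (K * R) := by
        apply mul_le_mul_of_nonneg_left _ hE
        exact Real.exp_le_exp.mpr (mul_le_mul_of_nonneg_left hx.2 hK)

lemma sinh_hasDerivAt {ω : ℝ} (hω : ω ≠ 0) (y : ℝ) :
    HasDerivAt (fun z => Real.sinh (ω*z) / ω) (Real.cosh (ω*y)) y := by
  have h1 : HasDerivAt (fun z : ℝ => ω*z) ω y := by
    simpa using (hasDerivAt_id y).const_mul ω
  have := (h1.sinh).div_const ω
  simpa [mul_comm, mul_div_assoc, mul_div_cancel_left₀ _ hω] using this

lemma cosh_int (ω x : ℝ) (hω : 0 < ω) :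
    Real.cosh (ω*x) = 1 + ω^2 * ∫ y in (0:ℝ)..x, ∫ z in (0:ℝ)..y, Real.cosh (ω*z) := by
  have inner : ∀ y : ℝ, (∫ z in (0:ℝ)..y, Real.cosh (ω*z)) = Real.sinh (ω*y) / ω := by
    intro y
    rw [intervalIntegral.integral_eq_sub_of_hasDerivAt (fun z _ => sinh_hasDerivAt hω.ne' z)
      ((Real.continuous_cosh.comp (continuous_const.mul continuous_id)).continuousOn.intervalIntegrable)]
    simp
  rw [intervalIntegral.integral_congr (fun y _ => inner y)]
  have outer : (∫ y in (0:ℝ)..x, Real.sinh (ω*y) / ω) = (Real.cosh (ω*x) - 1) / ω^2 := by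
    have hd : ∀ y : ℝ, HasDerivAt (fun z => Real.cosh (ω*z) / ω^2) (Real.sinh (ω*y) / ω) y := by
      intro y
      have h1 : HasDerivAt (fun z : ℝ => ω*z) ω y := by
        simpa using (hasDerivAt_id y).const_mul ω
      have := (h1.cosh).div_const (ω^2)
      refine this.congr_deriv ?_
      field_simp
    rw [intervalIntegral.integral_eq_sub_of_hasDerivAt (fun y _ => hd y)
      (((Real.continuous_sinh.comp (continuous_const.mul continuous_id)).div_const ω).continuousOn.intervalIntegrable)]
    simp [sub_div]
  rw [outer]
  field_simp
  ring

lemma sech_int (ω x : ℝ) (hω : 0 < ω) :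
    (∫ y in (0:ℝ)..x, 1 / (Real.cosh (ω*y))^2)
      = Real.sinh (ω*x) / (ω * Real.cosh (ω*x)) := by
  have hd : ∀ y : ℝ, HasDerivAt (fun z => Real.sinh (ω*z) / (ω * Real.cosh (ω*z)))
      (1 / (Real.cosh (ω*y))^2) y := by
    intro y
    have h1 : HasDerivAt (fun z : ℝ => ω*z) ω y := by
      simpa using (hasDerivAt_id y).const_mul ω
    have hnum := h1.sinh
    have hden := (h1.cosh).const_mul ω
    have hne : ω * Real.cosh (ω*y) ≠ 0 := by positivity
    have := hnum.div hden hne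
    refine this.congr_deriv ?_
    have hc := Real.cosh_sq_sub_sinh_sq (ω*y)
    have hcp : (0:ℝ) < Real.cosh (ω*y) := Real.cosh_pos _
    field_simp
    nlinarith [hc]
  rw [intervalIntegral.integral_eq_sub_of_hasDerivAt (fun y _ => hd y)]
  · simp
  · apply ContinuousOn.intervalIntegrable
    apply ContinuousOn.div continuousOn_const
    · exact ((Real.continuous_cosh.comp (continuous_const.mul continuous_id)).pow 2).continuousOn
    · intro y _; positivity

/-- with `j_ε` the solution of the integral equation for
`(1/2)j'' + a_ε j' = λj`, `j(0)=1`, `j'(0)=0`, bounded below by `cosh(ω₁x)` with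
`ω₁ = √(2λe^{−2M})`, the increasing eigenfunctions
`k_ε(x) = j_ε(x)∫_0^x e^{−𝔞_ε(y)}/j_ε(y)² dy` converge, as `ε → 0+`, to
`x ↦ e^{−2α} sinh(√(2λ)x)/√(2λ)` uniformly on compact subsets of `[0,∞)`. -/
theorem stmt16 (lam α M : ℝ) (hlam : 0 < lam)
    (a : ℝ → ℝ → ℝ)
    (hacont : ∀ ε > (0:ℝ), ContinuousOn (a ε) (Ici 0))
    (haint : ∀ ε > (0:ℝ), IntegrableOn (a ε) (Ioi 0))
    (haM : ∀ ε > (0:ℝ), ∫ x in Ioi (0:ℝ), |a ε x| ≤ M)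
    (hlim : ∀ y z : ℝ, 0 ≤ y → y < z →
      Tendsto (fun ε => ∫ u in y..z, a ε u) (𝓝[>] (0:ℝ))
        (𝓝 (α * (if y = 0 then 1 else 0))))
    (j : ℝ → ℝ → ℝ)
    (hjcont : ∀ ε > (0:ℝ), ContinuousOn (j ε) (Ici 0))
    (hjeq : ∀ ε > (0:ℝ), ∀ x ≥ (0:ℝ),
      j ε x = 1 + 2 * lam * ∫ y in (0:ℝ)..x,
        Real.exp (-(2 * ∫ u in (0:ℝ)..y, a ε u)) *
          ∫ z in (0:ℝ)..y, Real.exp (2 * ∫ u in (0:ℝ)..z, a ε u) * j ε z)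
    (hjlb : ∀ ε > (0:ℝ), ∀ x ≥ (0:ℝ),
      Real.cosh (Real.sqrt (2 * lam * Real.exp (-2 * M)) * x) ≤ j ε x) :
    ∀ Kc : Set ℝ, Kc ⊆ Ici 0 → IsCompact Kc →
      TendstoUniformlyOn
        (fun ε x => j ε x *
          ∫ y in (0:ℝ)..x, Real.exp (-(2 * ∫ u in (0:ℝ)..y, a ε u)) / (j ε y) ^ 2)
        (fun x => Real.exp (-2 * α) * Real.sinh (Real.sqrt (2 * lam) * x) /
          Real.sqrt (2 * lam))
        (𝓝[>] (0:ℝ)) Kc := by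
  intro Kc hKsub hKc
  -- basic setup
  obtain ⟨R, hR1, hRK⟩ : ∃ R ≥ 1, Kc ⊆ Icc 0 R := by
    obtain ⟨R0, hR0⟩ := hKc.isBounded.subset_closedBall 0
    refine ⟨max R0 1, le_max_right _ _, fun x hx => ⟨hKsub hx, ?_⟩⟩
    have h := hR0 hx
    rw [Metric.mem_closedBall, Real.dist_eq, sub_zero] at h
    exact (le_abs_self x).trans (h.trans (le_max_left _ _))
  have hR0 : (0:ℝ) < R := lt_of_lt_of_le one_pos hR1
  have h2lam : (0:ℝ) < 2*lam := by linarith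
  set ω : ℝ := Real.sqrt (2*lam) with hωdef
  have hω : 0 < ω := Real.sqrt_pos.mpr h2lam
  have hω2 : ω^2 = 2*lam := Real.sq_sqrt h2lam.le
  set C : ℝ → ℝ := fun z => Real.cosh (ω*z) with hCdef
  have hCcont : ContinuousOn C (Icc 0 R) :=
    (Real.continuous_cosh.comp (continuous_const.mul continuous_id)).continuousOn
  have hC1 : ∀ z, 1 ≤ C z := fun z => Real.one_le_cosh _
  have hC0 : ∀ z, 0 < C z := fun z => lt_of_lt_of_le one_pos (hC1 z)
  have hCR : ∀ z ∈ Icc 0 R, C z ≤ C R := by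
    intro z hz
    apply Real.cosh_le_cosh.mpr
    rw [abs_of_nonneg (mul_nonneg hω.le hz.1), abs_of_nonneg (mul_nonneg hω.le (hz.1.trans hz.2))]
    exact mul_le_mul_of_nonneg_left hz.2 hω.le
  have hM0 : 0 ≤ M :=
    le_trans (integral_nonneg fun x => abs_nonneg _) (haM 1 one_pos)
  have hAb : ∀ ε > (0:ℝ), ∀ y ∈ Icc 0 R, |∫ u in (0:ℝ)..y, a ε u| ≤ M := by
    intro ε hε y hy
    rw [intervalIntegral.integral_of_le hy.1]
    calc |∫ u in Ioc 0 y, a ε u| ≤ ∫ u in Ioc 0 y, |a ε u| := by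
          simpa [Real.norm_eq_abs] using
            norm_integral_le_integral_norm (μ := volume.restrict (Ioc 0 y)) (a ε)
      _ ≤ ∫ u in Ioi 0, |a ε u| :=
          setIntegral_mono_set (haint ε hε).abs (ae_of_all _ fun u => abs_nonneg _)
            (HasSubset.Subset.eventuallyLE Ioc_subset_Ioi_self)
      _ ≤ M := haM ε hε
  have hAcont : ∀ ε > (0:ℝ), ContinuousOn (fun y => ∫ u in (0:ℝ)..y, a ε u) (Icc 0 R) := by
    intro ε hε
    have hint : IntegrableOn (a ε) (Icc 0 R) := by
      rw [integrableOn_Icc_iff_integrableOn_Ioc]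
      exact (haint ε hε).mono_set Ioc_subset_Ioi_self
    exact (continuousOn_primitive (μ := volume) hint).congr
      fun y hy => intervalIntegral.integral_of_le hy.1
  have hjc : ∀ ε > (0:ℝ), ContinuousOn (j ε) (Icc 0 R) := by
    intro ε hε
    exact (hjcont ε hε).mono (Icc_subset_Ici_self)
  have hj1 : ∀ ε > (0:ℝ), ∀ z ∈ Icc 0 R, 1 ≤ j ε z := by
    intro ε hε z hz
    exact le_trans (Real.one_le_cosh _) (hjlb ε hε z hz.1)
  -- bounds on exponentials of A
  have hexpA : ∀ ε > (0:ℝ), ∀ y ∈ Icc 0 R,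
      Real.exp (-(2 * ∫ u in (0:ℝ)..y, a ε u)) ≤ Real.exp (2*M) ∧
      Real.exp (2 * ∫ u in (0:ℝ)..y, a ε u) ≤ Real.exp (2*M) := by
    intro ε hε y hy
    have h := abs_le.mp (hAb ε hε y hy)
    constructor <;> apply Real.exp_le_exp.mpr <;> linarith [h.1, h.2]
  set K : ℝ := 2*lam*Real.exp (4*M)*R with hKdef
  have hK0 : 0 ≤ K := by positivity
  have he4 : Real.exp (2*M) * Real.exp (2*M) = Real.exp (4*M) := by
    rw [← Real.exp_add]; ring_nf
  -- continuity of various integrands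
  have hexpAcont : ∀ ε > (0:ℝ),
      ContinuousOn (fun z => Real.exp (2 * ∫ u in (0:ℝ)..z, a ε u)) (Icc 0 R) := by
    intro ε hε
    exact Real.continuous_exp.comp_continuousOn (continuousOn_const.mul (hAcont ε hε))
  have hexpAcont' : ∀ ε > (0:ℝ),
      ContinuousOn (fun z => Real.exp (-(2 * ∫ u in (0:ℝ)..z, a ε u))) (Icc 0 R) := by
    intro ε hε
    exact Real.continuous_exp.comp_continuousOn (continuousOn_const.mul (hAcont ε hε)).neg
  have hjint : ∀ ε > (0:ℝ), ∀ x ∈ Icc 0 R, IntervalIntegrable (j ε) volume 0 x :=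
    fun ε hε x hx => ii_of_contOn (hjc ε hε) hx
  have hjintnn : ∀ ε > (0:ℝ), ∀ x ∈ Icc 0 R, (0:ℝ) ≤ ∫ t in (0:ℝ)..x, j ε t := by
    intro ε hε x hx
    exact intervalIntegral.integral_nonneg hx.1
      (fun t ht => le_trans zero_le_one (hj1 ε hε t ⟨ht.1, ht.2.trans hx.2⟩))
  -- upper bound for j
  have hjub : ∀ ε > (0:ℝ), ∀ x ∈ Icc 0 R, j ε x ≤ Real.exp (K*R) := by
    intro ε hε
    have hmain : ∀ x ∈ Icc 0 R, j ε x ≤ 1 + K * ∫ t in (0:ℝ)..x, j ε t := by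
      intro x hx
      rw [hjeq ε hε x hx.1]
      have hjnn : (0:ℝ) ≤ ∫ t in (0:ℝ)..x, j ε t := hjintnn ε hε x hx
      have hwle : ∀ y ∈ Icc 0 x,
          (Real.exp (-(2 * ∫ u in (0:ℝ)..y, a ε u)) *
            ∫ z in (0:ℝ)..y, Real.exp (2 * ∫ u in (0:ℝ)..z, a ε u) * j ε z)
          ≤ Real.exp (4*M) * ∫ t in (0:ℝ)..x, j ε t := by
        intro y hy
        have hyR : y ∈ Icc 0 R := ⟨hy.1, hy.2.trans hx.2⟩
        have hsub : Icc 0 y ⊆ Icc 0 R := Icc_subset_Icc le_rfl hyR.2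
        have h1 : (∫ z in (0:ℝ)..y, Real.exp (2 * ∫ u in (0:ℝ)..z, a ε u) * j ε z)
            ≤ Real.exp (2*M) * ∫ z in (0:ℝ)..y, j ε z := by
          rw [← intervalIntegral.integral_const_mul]
          apply intervalIntegral.integral_mono_on hy.1
            (ii_of_contOn ((hexpAcont ε hε).mul (hjc ε hε)) hyR)
            (ii_of_contOn (continuousOn_const.mul (hjc ε hε)) hyR)
          intro z hz
          have hzR : z ∈ Icc 0 R := hsub hz
          exact mul_le_mul_of_nonneg_right (hexpA ε hε z hzR).2
            (le_trans zero_le_one (hj1 ε hε z hzR))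
        have h2 : (∫ z in (0:ℝ)..y, j ε z) ≤ ∫ t in (0:ℝ)..x, j ε t := by
          apply intervalIntegral.integral_mono_interval le_rfl hy.1 hy.2 _ (hjint ε hε x hx)
          apply (ae_restrict_iff' measurableSet_Ioc).mpr
          exact ae_of_all _ fun z hz =>
            le_trans zero_le_one (hj1 ε hε z ⟨hz.1.le, hz.2.trans hx.2⟩)
        have h3 : (0:ℝ) ≤ ∫ z in (0:ℝ)..y, Real.exp (2 * ∫ u in (0:ℝ)..z, a ε u) * j ε z := by
          apply intervalIntegral.integral_nonneg hy.1
          intro z hz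
          have hzR : z ∈ Icc 0 R := hsub hz
          exact mul_nonneg (Real.exp_nonneg _) (le_trans zero_le_one (hj1 ε hε z hzR))
        calc Real.exp (-(2 * ∫ u in (0:ℝ)..y, a ε u)) *
              ∫ z in (0:ℝ)..y, Real.exp (2 * ∫ u in (0:ℝ)..z, a ε u) * j ε z
            ≤ Real.exp (2*M) * (Real.exp (2*M) * ∫ t in (0:ℝ)..x, j ε t) := by
              apply mul_le_mul (hexpA ε hε y hyR).1
                (h1.trans (mul_le_mul_of_nonneg_left h2 (Real.exp_nonneg _))) h3 (Real.exp_nonneg _)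
          _ = Real.exp (4*M) * ∫ t in (0:ℝ)..x, j ε t := by rw [← mul_assoc, he4]
      have hwint : IntervalIntegrable (fun y => Real.exp (-(2 * ∫ u in (0:ℝ)..y, a ε u)) *
          ∫ z in (0:ℝ)..y, Real.exp (2 * ∫ u in (0:ℝ)..z, a ε u) * j ε z) volume 0 x :=
        ii_of_contOn ((hexpAcont' ε hε).mul (cont_primitive ((hexpAcont ε hε).mul (hjc ε hε)))) hx
      have hint : (∫ y in (0:ℝ)..x, Real.exp (-(2 * ∫ u in (0:ℝ)..y, a ε u)) *
            ∫ z in (0:ℝ)..y, Real.exp (2 * ∫ u in (0:ℝ)..z, a ε u) * j ε z)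
          ≤ x * (Real.exp (4*M) * ∫ t in (0:ℝ)..x, j ε t) := by
        have h' := intervalIntegral.integral_mono_on hx.1 hwint intervalIntegrable_const hwle
        rwa [intervalIntegral.integral_const, sub_zero, smul_eq_mul] at h'
      have hxR : x ≤ R := hx.2
      have hq : x * (Real.exp (4*M) * ∫ t in (0:ℝ)..x, j ε t)
          ≤ R * (Real.exp (4*M) * ∫ t in (0:ℝ)..x, j ε t) := by
        apply mul_le_mul_of_nonneg_right hxR (by positivity)
      have h2lam' : (0:ℝ) ≤ 2*lam := h2lam.le
      have := mul_le_mul_of_nonneg_left (hint.trans hq) h2lam'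
      calc (1:ℝ) + 2*lam * ∫ y in (0:ℝ)..x, Real.exp (-(2 * ∫ u in (0:ℝ)..y, a ε u)) *
              ∫ z in (0:ℝ)..y, Real.exp (2 * ∫ u in (0:ℝ)..z, a ε u) * j ε z
          ≤ 1 + 2*lam * (R * (Real.exp (4*M) * ∫ t in (0:ℝ)..x, j ε t)) := by linarith
        _ = 1 + K * ∫ t in (0:ℝ)..x, j ε t := by rw [hKdef]; ring
    intro x hx
    have := my_gronwall zero_le_one hK0 (hjc ε hε)
      (fun z hz => le_trans zero_le_one (hj1 ε hε z hz)) hmain x hx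
    simpa using this
  -- the identity for C
  have hCeq : ∀ x : ℝ, C x = 1 + 2*lam * ∫ y in (0:ℝ)..x, ∫ z in (0:ℝ)..y, C z := by
    intro x
    have := cosh_int ω x hω
    rw [hω2] at this
    exact this
  -- pointwise limits
  have hA0 : ∀ y > (0:ℝ), Tendsto (fun ε => ∫ u in (0:ℝ)..y, a ε u) (𝓝[>] (0:ℝ)) (𝓝 α) := by
    intro y hy
    have := hlim 0 y le_rfl hy
    simpa using this
  have hEexp : ∀ y > (0:ℝ), Tendsto (fun ε => Real.exp (-(2 * ∫ u in (0:ℝ)..y, a ε u)))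
      (𝓝[>] (0:ℝ)) (𝓝 (Real.exp (-(2*α)))) := by
    intro y hy
    exact (Real.continuous_exp.tendsto _).comp (((hA0 y hy).const_mul 2).neg)
  have hEexp2 : ∀ y > (0:ℝ), Tendsto (fun ε => Real.exp (2 * ∫ u in (0:ℝ)..y, a ε u))
      (𝓝[>] (0:ℝ)) (𝓝 (Real.exp (2*α))) := by
    intro y hy
    exact (Real.continuous_exp.tendsto _).comp ((hA0 y hy).const_mul 2)
  have hIocIcc : ∀ {y : ℝ}, y ∈ Ioc 0 R → Ioc (0:ℝ) y ⊆ Icc 0 R :=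
    fun {y} hy => subset_trans Ioc_subset_Icc_self (Icc_subset_Icc le_rfl hy.2)
  have hIocR : Ioc (0:ℝ) R ⊆ Icc 0 R := Ioc_subset_Icc_self
  -- inner integral limit
  have hinnerlim : ∀ y ∈ Ioc (0:ℝ) R,
      Tendsto (fun ε => ∫ z in (0:ℝ)..y, Real.exp (2 * ∫ u in (0:ℝ)..z, a ε u) * C z)
        (𝓝[>] (0:ℝ)) (𝓝 (Real.exp (2*α) * ∫ z in (0:ℝ)..y, C z)) := by
    intro y hy
    have hle : (0:ℝ) ≤ y := hy.1.le
    have heq : ∀ ε : ℝ, (∫ z in (0:ℝ)..y, Real.exp (2 * ∫ u in (0:ℝ)..z, a ε u) * C z)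
        = ∫ z in Ioc (0:ℝ) y, Real.exp (2 * ∫ u in (0:ℝ)..z, a ε u) * C z :=
      fun ε => intervalIntegral.integral_of_le hle
    simp only [heq]
    have htarget : Real.exp (2*α) * ∫ z in (0:ℝ)..y, C z
        = ∫ z in Ioc (0:ℝ) y, Real.exp (2*α) * C z := by
      rw [intervalIntegral.integral_of_le hle]
      exact (MeasureTheory.integral_const_mul _ _).symm
    rw [htarget]
    apply MeasureTheory.tendsto_integral_filter_of_dominated_convergence
      (bound := fun _ => Real.exp (2*M) * C R)
    · filter_upwards [self_mem_nhdsWithin] with ε hε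
      exact (((hexpAcont ε hε).mul hCcont).mono (hIocIcc hy)).aestronglyMeasurable
        measurableSet_Ioc
    · filter_upwards [self_mem_nhdsWithin] with ε hε
      apply (ae_restrict_iff' measurableSet_Ioc).mpr
      apply ae_of_all
      intro z hz
      have hzR : z ∈ Icc 0 R := hIocIcc hy hz
      rw [Real.norm_eq_abs, abs_of_nonneg (mul_nonneg (Real.exp_nonneg _) (hC0 z).le)]
      exact mul_le_mul (hexpA ε hε z hzR).2 (hCR z hzR) (hC0 z).le (Real.exp_nonneg _)
    · exact integrableOn_const measure_Ioc_lt_top.ne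
    · apply (ae_restrict_iff' measurableSet_Ioc).mpr
      apply ae_of_all
      intro z hz
      exact (hEexp2 z hz.1).mul_const (C z)
  -- the error term
  set EE : ℝ → ℝ := fun ε => ∫ y in Ioc (0:ℝ) R,
      |Real.exp (-(2 * ∫ u in (0:ℝ)..y, a ε u)) *
        (∫ z in (0:ℝ)..y, Real.exp (2 * ∫ u in (0:ℝ)..z, a ε u) * C z) -
        ∫ z in (0:ℝ)..y, C z| with hEEdef
  have hEEnn : ∀ ε, 0 ≤ EE ε := fun ε => integral_nonneg fun y => abs_nonneg _
  -- bounds for the inner primitives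
  have hinnerub : ∀ ε > (0:ℝ), ∀ y ∈ Icc 0 R,
      |∫ z in (0:ℝ)..y, Real.exp (2 * ∫ u in (0:ℝ)..z, a ε u) * C z|
        ≤ Real.exp (2*M) * C R * R := by
    intro ε hε y hy
    have h1 : (∫ z in (0:ℝ)..y, Real.exp (2 * ∫ u in (0:ℝ)..z, a ε u) * C z)
        ≤ y * (Real.exp (2*M) * C R) := by
      have h' := intervalIntegral.integral_mono_on hy.1
        (ii_of_contOn ((hexpAcont ε hε).mul hCcont) hy) intervalIntegrable_const
        (fun z hz => by
          have hzR : z ∈ Icc 0 R := ⟨hz.1, hz.2.trans hy.2⟩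
          exact mul_le_mul (hexpA ε hε z hzR).2 (hCR z hzR) (hC0 z).le (Real.exp_nonneg _))
      rwa [intervalIntegral.integral_const, sub_zero, smul_eq_mul] at h'
    have h2 : (0:ℝ) ≤ ∫ z in (0:ℝ)..y, Real.exp (2 * ∫ u in (0:ℝ)..z, a ε u) * C z := by
      apply intervalIntegral.integral_nonneg hy.1
      intro z _
      exact mul_nonneg (Real.exp_nonneg _) (hC0 z).le
    rw [abs_of_nonneg h2]
    calc (∫ z in (0:ℝ)..y, Real.exp (2 * ∫ u in (0:ℝ)..z, a ε u) * C z)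
        ≤ y * (Real.exp (2*M) * C R) := h1
      _ ≤ R * (Real.exp (2*M) * C R) := by
          apply mul_le_mul_of_nonneg_right hy.2 (by positivity)
      _ = Real.exp (2*M) * C R * R := by ring
  have hCub : ∀ y ∈ Icc (0:ℝ) R, |∫ z in (0:ℝ)..y, C z| ≤ C R * R := by
    intro y hy
    have h1 : (∫ z in (0:ℝ)..y, C z) ≤ y * C R := by
      have h' := intervalIntegral.integral_mono_on hy.1 (ii_of_contOn hCcont hy)
        intervalIntegrable_const (fun z hz => hCR z ⟨hz.1, hz.2.trans hy.2⟩)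
      rwa [intervalIntegral.integral_const, sub_zero, smul_eq_mul] at h'
    have h2 : (0:ℝ) ≤ ∫ z in (0:ℝ)..y, C z :=
      intervalIntegral.integral_nonneg hy.1 fun z _ => (hC0 z).le
    rw [abs_of_nonneg h2]
    calc (∫ z in (0:ℝ)..y, C z) ≤ y * C R := h1
      _ ≤ R * C R := mul_le_mul_of_nonneg_right hy.2 (hC0 R).le
      _ = C R * R := by ring
  -- EE tends to 0
  have hEElim : Tendsto EE (𝓝[>] (0:ℝ)) (𝓝 0) := by
    have hmain : Tendsto EE (𝓝[>] (0:ℝ)) (𝓝 (∫ y in Ioc (0:ℝ) R, (0:ℝ))) := by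
      rw [hEEdef]
      apply MeasureTheory.tendsto_integral_filter_of_dominated_convergence
        (bound := fun _ => Real.exp (2*M) * (Real.exp (2*M) * C R * R) + C R * R)
      · filter_upwards [self_mem_nhdsWithin] with ε hε
        apply ContinuousOn.aestronglyMeasurable _ measurableSet_Ioc
        apply ContinuousOn.abs
        apply ContinuousOn.mono _ hIocR
        exact ((hexpAcont' ε hε).mul (cont_primitive ((hexpAcont ε hε).mul hCcont))).sub
          (cont_primitive hCcont)
      · filter_upwards [self_mem_nhdsWithin] with ε hε
        apply (ae_restrict_iff' measurableSet_Ioc).mpr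
        apply ae_of_all
        intro y hy
        have hyR : y ∈ Icc 0 R := hIocR hy
        rw [Real.norm_eq_abs, abs_abs]
        calc |Real.exp (-(2 * ∫ u in (0:ℝ)..y, a ε u)) *
              (∫ z in (0:ℝ)..y, Real.exp (2 * ∫ u in (0:ℝ)..z, a ε u) * C z) -
              ∫ z in (0:ℝ)..y, C z|
            ≤ |Real.exp (-(2 * ∫ u in (0:ℝ)..y, a ε u)) *
              (∫ z in (0:ℝ)..y, Real.exp (2 * ∫ u in (0:ℝ)..z, a ε u) * C z)| +
              |∫ z in (0:ℝ)..y, C z| := abs_sub _ _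
          _ ≤ Real.exp (2*M) * (Real.exp (2*M) * C R * R) + C R * R := by
              apply add_le_add _ (hCub y hyR)
              rw [abs_mul, abs_of_nonneg (Real.exp_nonneg _)]
              exact mul_le_mul (hexpA ε hε y hyR).1 (hinnerub ε hε y hyR) (abs_nonneg _)
                (Real.exp_nonneg _)
      · exact integrableOn_const measure_Ioc_lt_top.ne
      · apply (ae_restrict_iff' measurableSet_Ioc).mpr
        apply ae_of_all
        intro y hy
        have h1 := (hEexp y hy.1).mul (hinnerlim y hy)
        have h2 := h1.sub (tendsto_const_nhds (x := ∫ z in (0:ℝ)..y, C z))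
        have h3 : Real.exp (-(2*α)) * (Real.exp (2*α) * ∫ z in (0:ℝ)..y, C z) -
            (∫ z in (0:ℝ)..y, C z) = 0 := by
          rw [← mul_assoc, ← Real.exp_add]
          simp
        have habs : Tendsto (fun ε => |Real.exp (-(2 * ∫ u in (0:ℝ)..y, a ε u)) *
            (∫ z in (0:ℝ)..y, Real.exp (2 * ∫ u in (0:ℝ)..z, a ε u) * C z) -
            ∫ z in (0:ℝ)..y, C z|) (𝓝[>] (0:ℝ)) (𝓝 (|Real.exp (-(2*α)) *
            (Real.exp (2*α) * ∫ z in (0:ℝ)..y, C z) - ∫ z in (0:ℝ)..y, C z|)) := h2.abs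
        rw [h3] at habs
        simpa using habs
    simpa using hmain
  -- Gronwall estimate for |j - C|
  have hdiff : ∀ ε > (0:ℝ), ∀ x ∈ Icc 0 R,
      |j ε x - C x| ≤ (2*lam*EE ε) * Real.exp (K*R) := by
    intro ε hε
    have hEεnn : (0:ℝ) ≤ EE ε := hEEnn ε
    have hDcont : ContinuousOn (fun z => j ε z - C z) (Icc 0 R) := (hjc ε hε).sub hCcont
    have habscont : ContinuousOn (fun z => |j ε z - C z|) (Icc 0 R) := hDcont.abs
    have hgcont : ContinuousOn (fun y => Real.exp (-(2 * ∫ u in (0:ℝ)..y, a ε u)) *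
        (∫ z in (0:ℝ)..y, Real.exp (2 * ∫ u in (0:ℝ)..z, a ε u) * C z) -
        ∫ z in (0:ℝ)..y, C z) (Icc 0 R) :=
      ((hexpAcont' ε hε).mul (cont_primitive ((hexpAcont ε hε).mul hCcont))).sub
        (cont_primitive hCcont)
    apply my_gronwall (by positivity) hK0 habscont (fun x _ => abs_nonneg _)
    intro x hx
    have hDint : (0:ℝ) ≤ ∫ t in (0:ℝ)..x, |j ε t - C t| :=
      intervalIntegral.integral_nonneg hx.1 (fun t _ => abs_nonneg _)
    have hptw : ∀ y ∈ Icc 0 x,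
        |(Real.exp (-(2 * ∫ u in (0:ℝ)..y, a ε u)) *
          ∫ z in (0:ℝ)..y, Real.exp (2 * ∫ u in (0:ℝ)..z, a ε u) * j ε z) -
          ∫ z in (0:ℝ)..y, C z|
        ≤ Real.exp (4*M) * (∫ t in (0:ℝ)..x, |j ε t - C t|) +
          |Real.exp (-(2 * ∫ u in (0:ℝ)..y, a ε u)) *
            (∫ z in (0:ℝ)..y, Real.exp (2 * ∫ u in (0:ℝ)..z, a ε u) * C z) -
            ∫ z in (0:ℝ)..y, C z| := by
      intro y hy
      have hyR : y ∈ Icc 0 R := ⟨hy.1, hy.2.trans hx.2⟩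
      have heq : (∫ z in (0:ℝ)..y, Real.exp (2 * ∫ u in (0:ℝ)..z, a ε u) * (j ε z - C z))
          = (∫ z in (0:ℝ)..y, Real.exp (2 * ∫ u in (0:ℝ)..z, a ε u) * j ε z)
            - ∫ z in (0:ℝ)..y, Real.exp (2 * ∫ u in (0:ℝ)..z, a ε u) * C z := by
        rw [← intervalIntegral.integral_sub
          (f := fun z => Real.exp (2 * ∫ u in (0:ℝ)..z, a ε u) * j ε z)
          (g := fun z => Real.exp (2 * ∫ u in (0:ℝ)..z, a ε u) * C z)
          (ii_of_contOn ((hexpAcont ε hε).mul (hjc ε hε)) hyR)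
          (ii_of_contOn ((hexpAcont ε hε).mul hCcont) hyR)]
        apply intervalIntegral.integral_congr
        intro z _
        ring
      have hsplit : (Real.exp (-(2 * ∫ u in (0:ℝ)..y, a ε u)) *
          ∫ z in (0:ℝ)..y, Real.exp (2 * ∫ u in (0:ℝ)..z, a ε u) * j ε z) -
          ∫ z in (0:ℝ)..y, C z
          = Real.exp (-(2 * ∫ u in (0:ℝ)..y, a ε u)) *
            (∫ z in (0:ℝ)..y, Real.exp (2 * ∫ u in (0:ℝ)..z, a ε u) * (j ε z - C z))
          + (Real.exp (-(2 * ∫ u in (0:ℝ)..y, a ε u)) *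
            (∫ z in (0:ℝ)..y, Real.exp (2 * ∫ u in (0:ℝ)..z, a ε u) * C z) -
            ∫ z in (0:ℝ)..y, C z) := by
        rw [heq]; ring
      rw [hsplit]
      refine (abs_add_le _ _).trans (add_le_add ?_ le_rfl)
      rw [abs_mul, abs_of_nonneg (Real.exp_nonneg _)]
      have h2 : (∫ z in (0:ℝ)..y, Real.exp (2*M) * |j ε z - C z|)
          = Real.exp (2*M) * ∫ z in (0:ℝ)..y, |j ε z - C z| :=
        intervalIntegral.integral_const_mul _ _
      have h3 : (∫ z in (0:ℝ)..y, |j ε z - C z|) ≤ ∫ t in (0:ℝ)..x, |j ε t - C t| := by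
        apply intervalIntegral.integral_mono_interval le_rfl hy.1 hy.2 _
          (ii_of_contOn habscont hx)
        exact (ae_restrict_iff' measurableSet_Ioc).mpr (ae_of_all _ fun z _ => abs_nonneg _)
      have h1 : |∫ z in (0:ℝ)..y, Real.exp (2 * ∫ u in (0:ℝ)..z, a ε u) * (j ε z - C z)|
          ≤ Real.exp (2*M) * ∫ t in (0:ℝ)..x, |j ε t - C t| := by
        refine (intervalIntegral.abs_integral_le_integral_abs hy.1).trans ?_
        have hmono : (∫ z in (0:ℝ)..y, |Real.exp (2 * ∫ u in (0:ℝ)..z, a ε u) * (j ε z - C z)|)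
            ≤ ∫ z in (0:ℝ)..y, Real.exp (2*M) * |j ε z - C z| := by
          apply intervalIntegral.integral_mono_on hy.1
            (ii_of_contOn (((hexpAcont ε hε).mul hDcont).abs) hyR)
            (ii_of_contOn (continuousOn_const.mul habscont) hyR)
          intro z hz
          have hzR : z ∈ Icc 0 R := ⟨hz.1, hz.2.trans hyR.2⟩
          rw [Pi.mul_apply, Pi.mul_apply, abs_mul, abs_of_nonneg (Real.exp_nonneg _)]
          exact mul_le_mul_of_nonneg_right (hexpA ε hε z hzR).2 (abs_nonneg _)
        refine hmono.trans ?_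
        rw [h2]
        exact mul_le_mul_of_nonneg_left h3 (Real.exp_nonneg _)
      calc Real.exp (-(2 * ∫ u in (0:ℝ)..y, a ε u)) *
            |∫ z in (0:ℝ)..y, Real.exp (2 * ∫ u in (0:ℝ)..z, a ε u) * (j ε z - C z)|
          ≤ Real.exp (2*M) * (Real.exp (2*M) * ∫ t in (0:ℝ)..x, |j ε t - C t|) :=
            mul_le_mul (hexpA ε hε y hyR).1 h1 (abs_nonneg _) (Real.exp_nonneg _)
        _ = Real.exp (4*M) * ∫ t in (0:ℝ)..x, |j ε t - C t| := by rw [← mul_assoc, he4]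
    -- assemble
    rw [hjeq ε hε x hx.1, hCeq x]
    have hwint : IntervalIntegrable (fun y => Real.exp (-(2 * ∫ u in (0:ℝ)..y, a ε u)) *
        ∫ z in (0:ℝ)..y, Real.exp (2 * ∫ u in (0:ℝ)..z, a ε u) * j ε z) volume 0 x :=
      ii_of_contOn ((hexpAcont' ε hε).mul
        (cont_primitive ((hexpAcont ε hε).mul (hjc ε hε)))) hx
    have hCCint : IntervalIntegrable (fun y => ∫ z in (0:ℝ)..y, C z) volume 0 x :=
      ii_of_contOn (cont_primitive hCcont) hx
    have hdiffeq : (1 + 2*lam * ∫ y in (0:ℝ)..x, Real.exp (-(2 * ∫ u in (0:ℝ)..y, a ε u)) *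
          ∫ z in (0:ℝ)..y, Real.exp (2 * ∫ u in (0:ℝ)..z, a ε u) * j ε z) -
        (1 + 2*lam * ∫ y in (0:ℝ)..x, ∫ z in (0:ℝ)..y, C z)
        = 2*lam * ∫ y in (0:ℝ)..x,
            ((Real.exp (-(2 * ∫ u in (0:ℝ)..y, a ε u)) *
              ∫ z in (0:ℝ)..y, Real.exp (2 * ∫ u in (0:ℝ)..z, a ε u) * j ε z) -
            ∫ z in (0:ℝ)..y, C z) := by
      rw [intervalIntegral.integral_sub hwint hCCint]
      ring
    rw [hdiffeq, abs_mul, abs_of_nonneg h2lam.le]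
    have habsint : |∫ y in (0:ℝ)..x,
          ((Real.exp (-(2 * ∫ u in (0:ℝ)..y, a ε u)) *
            ∫ z in (0:ℝ)..y, Real.exp (2 * ∫ u in (0:ℝ)..z, a ε u) * j ε z) -
          ∫ z in (0:ℝ)..y, C z)|
        ≤ x * (Real.exp (4*M) * ∫ t in (0:ℝ)..x, |j ε t - C t|) +
          ∫ y in (0:ℝ)..x, |Real.exp (-(2 * ∫ u in (0:ℝ)..y, a ε u)) *
            (∫ z in (0:ℝ)..y, Real.exp (2 * ∫ u in (0:ℝ)..z, a ε u) * C z) -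
            ∫ z in (0:ℝ)..y, C z| := by
      refine (intervalIntegral.abs_integral_le_integral_abs hx.1).trans ?_
      have habs2 : ∀ y ∈ Icc 0 x, |(Real.exp (-(2 * ∫ u in (0:ℝ)..y, a ε u)) *
            ∫ z in (0:ℝ)..y, Real.exp (2 * ∫ u in (0:ℝ)..z, a ε u) * j ε z) -
          ∫ z in (0:ℝ)..y, C z|
          ≤ (Real.exp (4*M) * ∫ t in (0:ℝ)..x, |j ε t - C t|) +
            |Real.exp (-(2 * ∫ u in (0:ℝ)..y, a ε u)) *
              (∫ z in (0:ℝ)..y, Real.exp (2 * ∫ u in (0:ℝ)..z, a ε u) * C z) -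
              ∫ z in (0:ℝ)..y, C z| := hptw
      have hi1 : IntervalIntegrable (fun y => |(Real.exp (-(2 * ∫ u in (0:ℝ)..y, a ε u)) *
            ∫ z in (0:ℝ)..y, Real.exp (2 * ∫ u in (0:ℝ)..z, a ε u) * j ε z) -
          ∫ z in (0:ℝ)..y, C z|) volume 0 x :=
        ii_of_contOn (ContinuousOn.abs (((hexpAcont' ε hε).mul
          (cont_primitive ((hexpAcont ε hε).mul (hjc ε hε)))).sub (cont_primitive hCcont))) hx
      have hi2 : IntervalIntegrable (fun y => (Real.exp (4*M) * ∫ t in (0:ℝ)..x, |j ε t - C t|) +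
          |Real.exp (-(2 * ∫ u in (0:ℝ)..y, a ε u)) *
            (∫ z in (0:ℝ)..y, Real.exp (2 * ∫ u in (0:ℝ)..z, a ε u) * C z) -
            ∫ z in (0:ℝ)..y, C z|) volume 0 x :=
        intervalIntegrable_const.add (ii_of_contOn hgcont.abs hx)
      refine (intervalIntegral.integral_mono_on hx.1 hi1 hi2 habs2).trans ?_
      rw [intervalIntegral.integral_add intervalIntegrable_const (ii_of_contOn hgcont.abs hx),
        intervalIntegral.integral_const, sub_zero, smul_eq_mul]
    have hgEE : (∫ y in (0:ℝ)..x, |Real.exp (-(2 * ∫ u in (0:ℝ)..y, a ε u)) *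
          (∫ z in (0:ℝ)..y, Real.exp (2 * ∫ u in (0:ℝ)..z, a ε u) * C z) -
          ∫ z in (0:ℝ)..y, C z|) ≤ EE ε := by
      have hmono := intervalIntegral.integral_mono_interval le_rfl hx.1 hx.2
        ((ae_restrict_iff' measurableSet_Ioc).mpr (ae_of_all _ fun z _ => abs_nonneg _))
        (ii_of_contOn hgcont.abs ⟨hR0.le, le_rfl⟩ : IntervalIntegrable _ volume 0 R)
      refine hmono.trans ?_
      rw [intervalIntegral.integral_of_le hR0.le, hEEdef]
    have hSx : x * (Real.exp (4*M) * ∫ t in (0:ℝ)..x, |j ε t - C t|)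
        ≤ R * (Real.exp (4*M) * ∫ t in (0:ℝ)..x, |j ε t - C t|) :=
      mul_le_mul_of_nonneg_right hx.2 (by positivity)
    have := mul_le_mul_of_nonneg_left ((habsint.trans (add_le_add hSx hgEE))) h2lam.le
    calc 2*lam * |∫ y in (0:ℝ)..x,
          ((Real.exp (-(2 * ∫ u in (0:ℝ)..y, a ε u)) *
            ∫ z in (0:ℝ)..y, Real.exp (2 * ∫ u in (0:ℝ)..z, a ε u) * j ε z) -
          ∫ z in (0:ℝ)..y, C z)|
        ≤ 2*lam * (R * (Real.exp (4*M) * ∫ t in (0:ℝ)..x, |j ε t - C t|) + EE ε) := this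
      _ = 2*lam*EE ε + K * ∫ t in (0:ℝ)..x, |j ε t - C t| := by rw [hKdef]; ring
  -- pointwise convergence of j to C
  have hjlimit : ∀ y ∈ Icc 0 R, Tendsto (fun ε => j ε y) (𝓝[>] (0:ℝ)) (𝓝 (C y)) := by
    intro y hy
    rw [tendsto_iff_dist_tendsto_zero]
    apply squeeze_zero' (Eventually.of_forall fun _ => dist_nonneg)
      (g := fun ε => (2*lam*EE ε) * Real.exp (K*R))
    · filter_upwards [self_mem_nhdsWithin] with ε hε
      rw [Real.dist_eq]
      exact hdiff ε hε y hy
    · have := (hEElim.const_mul (2*lam)).mul_const (Real.exp (K*R))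
      simpa using this
  -- FF tends to 0
  set FF : ℝ → ℝ := fun ε => ∫ y in Ioc (0:ℝ) R,
      |Real.exp (-(2 * ∫ u in (0:ℝ)..y, a ε u)) / (j ε y)^2 -
        Real.exp (-(2*α)) / (C y)^2| with hFFdef
  have hFFlim : Tendsto FF (𝓝[>] (0:ℝ)) (𝓝 0) := by
    have hmain : Tendsto FF (𝓝[>] (0:ℝ)) (𝓝 (∫ y in Ioc (0:ℝ) R, (0:ℝ))) := by
      rw [hFFdef]
      apply MeasureTheory.tendsto_integral_filter_of_dominated_convergence
        (bound := fun _ => Real.exp (2*M) + Real.exp (-(2*α)))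
      · filter_upwards [self_mem_nhdsWithin] with ε hε
        apply ContinuousOn.aestronglyMeasurable _ measurableSet_Ioc
        apply ContinuousOn.abs
        apply ContinuousOn.mono _ hIocR
        apply ContinuousOn.sub
        · apply (hexpAcont' ε hε).div ((hjc ε hε).pow 2)
          intro y hy
          have := hj1 ε hε y hy
          exact pow_ne_zero _ (by linarith)
        · apply continuousOn_const.div (hCcont.pow 2)
          intro y _
          have := hC0 y
          exact pow_ne_zero _ this.ne'
      · filter_upwards [self_mem_nhdsWithin] with ε hε
        apply (ae_restrict_iff' measurableSet_Ioc).mpr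
        apply ae_of_all
        intro y hy
        have hyR : y ∈ Icc 0 R := hIocR hy
        have hj1' := hj1 ε hε y hyR
        have hd1 : Real.exp (-(2 * ∫ u in (0:ℝ)..y, a ε u)) / (j ε y)^2
            ≤ Real.exp (2*M) :=
          (div_le_self (Real.exp_nonneg _) (one_le_pow₀ hj1')).trans (hexpA ε hε y hyR).1
        have hd2 : Real.exp (-(2*α)) / (C y)^2 ≤ Real.exp (-(2*α)) :=
          div_le_self (Real.exp_nonneg _) (one_le_pow₀ (hC1 y))
        have hn1 : (0:ℝ) ≤ Real.exp (-(2 * ∫ u in (0:ℝ)..y, a ε u)) / (j ε y)^2 := by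
          have := hj1'; positivity
        have hn2 : (0:ℝ) ≤ Real.exp (-(2*α)) / (C y)^2 := by
          have := hC0 y; positivity
        rw [Real.norm_eq_abs, abs_abs]
        refine (abs_sub _ _).trans ?_
        rw [abs_of_nonneg hn1, abs_of_nonneg hn2]
        exact add_le_add hd1 hd2
      · exact integrableOn_const measure_Ioc_lt_top.ne
      · apply (ae_restrict_iff' measurableSet_Ioc).mpr
        apply ae_of_all
        intro y hy
        have h1 := (hEexp y hy.1).div ((hjlimit y (hIocR hy)).pow 2)
          (by have := hC1 y; positivity)
        have h2 := (h1.sub (tendsto_const_nhds (x := Real.exp (-(2*α)) / (C y)^2))).abs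
        simpa using h2
    simpa using hmain
  -- final assembly
  have hexpeq : Real.exp (-2*α) = Real.exp (-(2*α)) := by rw [neg_mul]
  rw [Metric.tendstoUniformlyOn_iff]
  intro η hη
  have hcomb : Tendsto (fun ε => C R * FF ε + (2*lam*EE ε) * Real.exp (K*R) *
      (Real.exp (2*M) * R)) (𝓝[>] (0:ℝ)) (𝓝 0) := by
    have h1 := ((hEElim.const_mul (2*lam)).mul_const (Real.exp (K*R))).mul_const
      (Real.exp (2*M) * R)
    have h2 := hFFlim.const_mul (C R)
    simpa using h2.add h1
  filter_upwards [self_mem_nhdsWithin, hcomb.eventually (gt_mem_nhds hη)] with ε hε hcε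
  intro x hxK
  have hx : x ∈ Icc 0 R := hRK hxK
  set Ie := ∫ y in (0:ℝ)..x, Real.exp (-(2 * ∫ u in (0:ℝ)..y, a ε u)) / (j ε y)^2 with hIedef
  set I0 := ∫ y in (0:ℝ)..x, Real.exp (-(2*α)) / (C y)^2 with hI0def
  have hfe1cont : ContinuousOn (fun y => Real.exp (-(2 * ∫ u in (0:ℝ)..y, a ε u)) / (j ε y)^2)
      (Icc 0 R) := by
    apply (hexpAcont' ε hε).div ((hjc ε hε).pow 2)
    intro y hy; have := hj1 ε hε y hy; exact pow_ne_zero _ (by linarith)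
  have hfe2cont : ContinuousOn (fun y => Real.exp (-(2*α)) / (C y)^2) (Icc 0 R) := by
    apply continuousOn_const.div (hCcont.pow 2)
    intro y _; have := hC0 y; exact pow_ne_zero _ this.ne'
  have hTid : Real.exp (-2*α) * Real.sinh (ω*x) / ω = C x * I0 := by
    have h1 : I0 = Real.exp (-(2*α)) * ∫ y in (0:ℝ)..x, 1 / (C y)^2 := by
      rw [hI0def, ← intervalIntegral.integral_const_mul]
      apply intervalIntegral.integral_congr
      intro z _
      simp [div_eq_mul_inv]
    rw [h1]
    simp only [hCdef]
    rw [sech_int ω x hω, hexpeq]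
    have hcx : Real.cosh (ω*x) ≠ 0 := (Real.cosh_pos _).ne'
    field_simp
  have hIeb : |Ie| ≤ Real.exp (2*M) * R := by
    rw [hIedef]
    refine (intervalIntegral.abs_integral_le_integral_abs hx.1).trans ?_
    have hmono : (∫ y in (0:ℝ)..x, |Real.exp (-(2 * ∫ u in (0:ℝ)..y, a ε u)) / (j ε y)^2|)
        ≤ ∫ y in (0:ℝ)..x, Real.exp (2*M) := by
      apply intervalIntegral.integral_mono_on hx.1 (ii_of_contOn hfe1cont.abs hx)
        intervalIntegrable_const
      intro y hy
      have hyR : y ∈ Icc 0 R := ⟨hy.1, hy.2.trans hx.2⟩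
      have h1 := hj1 ε hε y hyR
      rw [abs_of_nonneg (by positivity)]
      exact (div_le_self (Real.exp_nonneg _) (one_le_pow₀ h1)).trans (hexpA ε hε y hyR).1
    refine hmono.trans ?_
    rw [intervalIntegral.integral_const, sub_zero, smul_eq_mul]
    calc x * Real.exp (2*M) ≤ R * Real.exp (2*M) :=
          mul_le_mul_of_nonneg_right hx.2 (Real.exp_nonneg _)
      _ = Real.exp (2*M) * R := mul_comm _ _
  have hIdiff : |Ie - I0| ≤ FF ε := by
    rw [hIedef, hI0def, ← intervalIntegral.integral_sub (ii_of_contOn hfe1cont hx)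
      (ii_of_contOn hfe2cont hx)]
    refine (intervalIntegral.abs_integral_le_integral_abs hx.1).trans ?_
    have hmono := intervalIntegral.integral_mono_interval le_rfl hx.1 hx.2
      ((ae_restrict_iff' measurableSet_Ioc).mpr (ae_of_all _ fun z _ => abs_nonneg _))
      (ii_of_contOn (hfe1cont.sub hfe2cont).abs ⟨hR0.le, le_rfl⟩ :
        IntervalIntegrable _ volume 0 R)
    refine hmono.trans ?_
    rw [intervalIntegral.integral_of_le hR0.le, hFFdef]
    exact le_rfl
  have hjd := hdiff ε hε x hx
  have hEεnn := hEEnn ε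
  rw [Real.dist_eq]
  calc |Real.exp (-2*α) * Real.sinh (ω*x) / ω - j ε x * Ie|
      = |C x * I0 - j ε x * Ie| := by rw [hTid]
    _ ≤ |C x * I0 - C x * Ie| + |C x * Ie - j ε x * Ie| := abs_sub_le _ _ _
    _ = C x * |I0 - Ie| + |C x - j ε x| * |Ie| := by
        rw [← mul_sub, ← sub_mul, abs_mul, abs_mul, abs_of_nonneg (hC0 x).le]
    _ ≤ C R * FF ε + (2*lam*EE ε) * Real.exp (K*R) * (Real.exp (2*M) * R) := by
        apply add_le_add
        · apply mul_le_mul (hCR x hx) _ (abs_nonneg _) (hC0 R).le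
          rw [abs_sub_comm]
          exact hIdiff
        · apply mul_le_mul _ hIeb (abs_nonneg _) (by positivity)
          rw [abs_sub_comm]
          exact hjd
    _ < η := hcε
end
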